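/- arXiv:2601.01858 — 5 statements merged into one kernel-verified Lean document; each statement's English description precedes it below -/
import Mathlib

section
/- Let Ψ = (ρ₁,…,ρ_N) and Ψ′ = (ρ′₁,…,ρ′_N) be two N-tuples of density matrices on ℂ^d. There exists a unitary d×d matrix U with ρ′_k = U ρ_k U† for all k = 1,…,N if and only if for every integer n ≥ 1 and every sequence i₁,…,iₙ of indices from {1,…,N}, the corresponding Bargmann invariants agree: Tr(ρ_{i₁} ρ_{i₂} ⋯ ρ_{iₙ}) = Tr(ρ′_{i₁} ρ′_{i₂} ⋯ ρ′_{iₙ}). -/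
open scoped ComplexOrder

/-- A density matrix on `ℂ^d`: positive semidefinite with trace 1. -/
def IsDensityMatrix {d : ℕ} (ρ : Matrix (Fin d) (Fin d) ℂ) : Prop :=
  ρ.PosSemidef ∧ ρ.trace = 1

namespace Barg

open Matrix
open scoped Kronecker

variable {ι : Type*} [Fintype ι] [DecidableEq ι]

def comm (S : Set (Matrix ι ι ℂ)) : Set (Matrix ι ι ℂ) := {x | ∀ b ∈ S, b * x = x * b}

lemma one_mem_comm (S : Set (Matrix ι ι ℂ)) : 1 ∈ comm S := fun b _ => by simp

lemma mul_mem_comm {S : Set (Matrix ι ι ℂ)} {x y : Matrix ι ι ℂ} (hx : x ∈ comm S)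
    (hy : y ∈ comm S) : x * y ∈ comm S := fun b hb => by
  rw [← mul_assoc, hx b hb, mul_assoc, hy b hb, mul_assoc]

lemma star_mem_comm {S : Set (Matrix ι ι ℂ)} (hS : ∀ b ∈ S, bᴴ ∈ S) {x : Matrix ι ι ℂ}
    (hx : x ∈ comm S) : xᴴ ∈ comm S := fun b hb => by
  have := congrArg conjTranspose (hx bᴴ (hS b hb))
  simpa using this.symm

lemma sub_mem_comm {S : Set (Matrix ι ι ℂ)} {x y : Matrix ι ι ℂ} (hx : x ∈ comm S)
    (hy : y ∈ comm S) : x - y ∈ comm S := fun b hb => by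
  rw [mul_sub, sub_mul, hx b hb, hy b hb]

lemma eq_of_mulVec_eq {m : Type*} [Fintype m] [DecidableEq m] {A B : Matrix m m ℂ}
    (h : ∀ v, A.mulVec v = B.mulVec v) : A = B := by
  ext i j
  have := congrFun (h (Pi.single j 1)) i
  simpa [mulVec_single] using this

/-- existence of an orthogonal projection matrix onto a subspace -/
lemma exists_proj {m : Type*} [Fintype m] [DecidableEq m] (W : Submodule ℂ (m → ℂ)) :
    ∃ P : Matrix m m ℂ, Pᴴ = P ∧ (∀ x ∈ W, P.mulVec x = x) ∧ (∀ x, P.mulVec x ∈ W) := by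
  classical
  set E := EuclideanSpace ℂ m
  let e := WithLp.linearEquiv 2 ℂ (m → ℂ)
  let W' : Submodule ℂ E := W.comap e.toLinearMap
  let f : E →L[ℂ] E := W'.subtypeL.comp (W'.orthogonalProjectionOnto)
  let P : Matrix m m ℂ := Matrix.toEuclideanLin.symm (f : E →ₗ[ℂ] E)
  have hPlin : Matrix.toEuclideanLin P = (f : E →ₗ[ℂ] E) := by
    simp [P]
  have hmv : ∀ v : m → ℂ, P.mulVec v = e (f (e.symm v)) := by
    intro v
    have h1 := Matrix.ofLp_toEuclideanLin_apply (𝕜 := ℂ) P (e.symm v)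
    rw [hPlin] at h1
    simpa [e] using h1.symm
  refine ⟨P, ?_, ?_, ?_⟩
  · apply Matrix.toEuclideanLin.injective
    rw [Matrix.toEuclideanLin_conjTranspose_eq_adjoint, hPlin]
    rw [LinearMap.adjoint_eq_toCLM_adjoint]
    have h3 : LinearMap.toContinuousLinearMap (f : E →ₗ[ℂ] E) = f := by
      ext x; rfl
    rw [h3, show ContinuousLinearMap.adjoint f = f from (isSelfAdjoint_starProjection W').adjoint_eq]
  · intro x hx
    rw [hmv]
    have hx' : e.symm x ∈ W' := by simpa [W', e] using hx
    have h4 : f (e.symm x) = e.symm x := by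
      show W'.subtype (W'.orthogonalProjectionOnto (e.symm x)) = e.symm x
      have h2 := Submodule.orthogonalProjectionOnto_mem_subspace_eq_self (K := W') ⟨e.symm x, hx'⟩
      rw [show ((⟨e.symm x, hx'⟩ : W') : E) = e.symm x from rfl] at h2
      rw [h2]; rfl
    rw [h4]; simp
  · intro x
    rw [hmv]
    have : f (e.symm x) ∈ W' := (W'.orthogonalProjectionOnto (e.symm x)).2
    exact this

/-- star-closed invariance implies commutation with the projection -/
lemma proj_comm {m : Type*} [Fintype m] [DecidableEq m] {W : Submodule ℂ (m → ℂ)}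
    {P b : Matrix m m ℂ} (hP1 : Pᴴ = P) (hP2 : ∀ x ∈ W, P.mulVec x = x)
    (hP3 : ∀ x, P.mulVec x ∈ W)
    (hb : ∀ x ∈ W, b.mulVec x ∈ W) (hbs : ∀ x ∈ W, bᴴ.mulVec x ∈ W) :
    b * P = P * b := by
  have key : ∀ c : Matrix m m ℂ, (∀ x ∈ W, c.mulVec x ∈ W) → P * (c * P) = c * P := by
    intro c hc
    have h : ∀ v, (P * (c * P)).mulVec v = (c * P).mulVec v := by
      intro v
      rw [← Matrix.mulVec_mulVec v P (c * P), ← Matrix.mulVec_mulVec v c P]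
      exact hP2 _ (hc _ (hP3 v))
    ext i j
    have := congrFun (h (Pi.single j 1)) i
    simpa [Matrix.mulVec_single] using this
  have h1 : P * (b * P) = b * P := key b hb
  have h2 : P * (bᴴ * P) = bᴴ * P := key bᴴ hbs
  have h3 := congrArg conjTranspose h2
  simp only [Matrix.conjTranspose_mul, Matrix.conjTranspose_conjTranspose, hP1] at h3
  rw [← h1, ← Matrix.mul_assoc, h3]

/-- vec as a linear map -/
def vecL : Matrix ι ι ℂ →ₗ[ℂ] (ι × ι → ℂ) where
  toFun A := fun p => A p.1 p.2
  map_add' _ _ := rfl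
  map_smul' _ _ := rfl

lemma vecL_inj : Function.Injective (vecL (ι := ι)) := by
  intro A B h
  ext i j
  exact congrFun h (i, j)

lemma delta_mulVec (b A : Matrix ι ι ℂ) : (b ⊗ₖ (1 : Matrix ι ι ℂ)).mulVec (vecL A) = vecL (b * A) := by
  ext ⟨i, j⟩
  simp only [Matrix.mulVec, dotProduct, vecL, LinearMap.coe_mk, AddHom.coe_mk]
  rw [Fintype.sum_prod_type]
  simp [Matrix.kroneckerMap_apply, Matrix.one_apply, Matrix.mul_apply, mul_comm]
  rfl

lemma delta_conjTranspose (b : Matrix ι ι ℂ) : (b ⊗ₖ (1 : Matrix ι ι ℂ))ᴴ = bᴴ ⊗ₖ (1 : Matrix ι ι ℂ) := by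
  ext ⟨i, j⟩ ⟨k, l⟩
  simp only [Matrix.conjTranspose_apply, Matrix.kroneckerMap_apply, Matrix.one_apply]
  by_cases h : j = l <;> simp [h, eq_comm]

lemma block_mul_left (b : Matrix ι ι ℂ) (C : Matrix (ι × ι) (ι × ι) ℂ)
    (j l : ι) (i k : ι) :
    ((b ⊗ₖ (1 : Matrix ι ι ℂ)) * C) (i, j) (k, l)
      = (b * Matrix.of (fun i' k' => C (i', j) (k', l))) i k := by
  simp only [Matrix.mul_apply, Matrix.of_apply]
  rw [Fintype.sum_prod_type]
  simp [Matrix.kroneckerMap_apply, Matrix.one_apply]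

lemma block_mul_right (b : Matrix ι ι ℂ) (C : Matrix (ι × ι) (ι × ι) ℂ)
    (j l : ι) (i k : ι) :
    (C * (b ⊗ₖ (1 : Matrix ι ι ℂ))) (i, j) (k, l)
      = (Matrix.of (fun i' k' => C (i', j) (k', l)) * b) i k := by
  simp only [Matrix.mul_apply, Matrix.of_apply]
  rw [Fintype.sum_prod_type]
  simp [Matrix.kroneckerMap_apply, Matrix.one_apply]

theorem double_commutant (B : Subalgebra ℂ (Matrix ι ι ℂ)) (hstar : ∀ b ∈ B, bᴴ ∈ B)
    {X : Matrix ι ι ℂ} (hX : X ∈ comm (comm (B : Set (Matrix ι ι ℂ)))) : X ∈ B := by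
  classical
  let W : Submodule ℂ (ι × ι → ℂ) := (Subalgebra.toSubmodule B).map vecL
  obtain ⟨P, hP1, hP2, hP3⟩ := exists_proj W
  have hWmem : ∀ x ∈ W, ∃ a ∈ B, vecL a = x := by
    intro x hx
    obtain ⟨a, ha, rfl⟩ := Submodule.mem_map.mp hx
    exact ⟨a, ha, rfl⟩
  have hWmem' : ∀ a ∈ B, vecL a ∈ W := fun a ha => Submodule.mem_map_of_mem ha
  have hinv : ∀ b ∈ B, ∀ x ∈ W, (b ⊗ₖ (1 : Matrix ι ι ℂ)).mulVec x ∈ W := by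
    intro b hb x hx
    obtain ⟨a, ha, rfl⟩ := hWmem x hx
    rw [delta_mulVec]
    exact hWmem' _ (B.mul_mem hb ha)
  have step1 : ∀ b ∈ B, (b ⊗ₖ (1 : Matrix ι ι ℂ)) * P = P * (b ⊗ₖ (1 : Matrix ι ι ℂ)) := by
    intro b hb
    refine proj_comm hP1 hP2 hP3 (hinv b hb) ?_
    rw [delta_conjTranspose]
    exact hinv bᴴ (hstar b hb)
  have step2 : ∀ j l : ι,
      (Matrix.of (fun i k => P (i, j) (k, l)) : Matrix ι ι ℂ) ∈ comm (B : Set (Matrix ι ι ℂ)) := by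
    intro j l b hb
    ext i k
    have h := congrFun (congrFun (step1 b hb) (i, j)) (k, l)
    rw [block_mul_left, block_mul_right] at h
    exact h
  have step3 : (X ⊗ₖ (1 : Matrix ι ι ℂ)) * P = P * (X ⊗ₖ (1 : Matrix ι ι ℂ)) := by
    ext ⟨i, j⟩ ⟨k, l⟩
    rw [block_mul_left, block_mul_right]
    have h := hX _ (step2 j l)
    rw [← h]
  have hvec1 : vecL (1 : Matrix ι ι ℂ) ∈ W := hWmem' 1 B.one_mem
  have key : vecL X ∈ W := by
    have e1 : (X ⊗ₖ (1 : Matrix ι ι ℂ)).mulVec (vecL 1) = vecL X := by rw [delta_mulVec, mul_one]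
    have e2 : vecL X = P.mulVec ((X ⊗ₖ (1 : Matrix ι ι ℂ)).mulVec (vecL 1)) := by
      conv_lhs => rw [← e1, ← hP2 _ hvec1]
      rw [Matrix.mulVec_mulVec, Matrix.mulVec_mulVec, step3]
    rw [e2]
    exact hP3 _
  obtain ⟨a, ha, hav⟩ := hWmem _ key
  rwa [← vecL_inj hav]

lemma gadget {c : Matrix ι ι ℂ} (hc : c ≠ 0) :
    ∃ g : Matrix ι ι ℂ, gᴴ = g ∧
      (∀ X : Matrix ι ι ℂ, X * (cᴴ * c) = (cᴴ * c) * X → X * g = g * X) ∧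
      (g * (cᴴ * c) * g) * (g * (cᴴ * c) * g) = g * (cᴴ * c) * g ∧
      g * (cᴴ * c) * g ≠ 0 ∧
      (∀ P : Matrix ι ι ℂ, (cᴴ * c) * P = (cᴴ * c) → g * P = g) := by
  classical
  set h : Matrix ι ι ℂ := cᴴ * c with hh_def
  have hpsd : h.PosSemidef := Matrix.posSemidef_conjTranspose_mul_self c
  have hherm : h.IsHermitian := hpsd.isHermitian
  set V : Matrix ι ι ℂ := ↑(hherm.eigenvectorUnitary) with hV_def
  have hV1 : star V * V = 1 := Matrix.mem_unitaryGroup_iff'.mp hherm.eigenvectorUnitary.2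
  have hV2 : V * star V = 1 := Matrix.mem_unitaryGroup_iff.mp hherm.eigenvectorUnitary.2
  set lam : ι → ℝ := hherm.eigenvalues with hlam_def
  have hlam_nonneg : ∀ i, 0 ≤ lam i := hpsd.eigenvalues_nonneg
  set d : ι → ℂ := fun i => (lam i : ℂ) with hd_def
  have hspec : h = V * diagonal d * star V := by
    simpa [hV_def, hd_def, hlam_def, Function.comp_def] using hherm.spectral_theorem
  set fr : ι → ℂ := fun i => if lam i = 0 then 0 else ((Real.sqrt (lam i))⁻¹ : ℂ) with hfr_def
  set g : Matrix ι ι ℂ := V * diagonal fr * star V with hg_def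
  have sand_mul : ∀ a b : ι → ℂ,
      (V * diagonal a * star V) * (V * diagonal b * star V)
        = V * diagonal (fun i => a i * b i) * star V := by
    intro a b
    calc (V * diagonal a * star V) * (V * diagonal b * star V)
        = V * (diagonal a * ((star V * V) * diagonal b)) * star V := by
          simp only [Matrix.mul_assoc]
      _ = V * diagonal (fun i => a i * b i) * star V := by
          rw [hV1, Matrix.one_mul, Matrix.diagonal_mul_diagonal, Matrix.mul_assoc]
  refine ⟨g, ?_, ?_, ?_, ?_, ?_⟩
  · -- gᴴ = g
    have hfr_star : star fr = fr := by
      funext i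
      by_cases h0 : lam i = 0 <;>
        simp [hfr_def, h0, Pi.star_apply, Complex.star_def, Complex.conj_ofReal]
    have hstarfr : (diagonal fr)ᴴ = diagonal fr := by
      rw [Matrix.diagonal_conjTranspose, hfr_star]
    rw [hg_def]
    calc (V * diagonal fr * star V)ᴴ = (star V)ᴴ * (diagonal fr)ᴴ * Vᴴ := by
          simp only [Matrix.conjTranspose_mul, Matrix.mul_assoc]
      _ = V * diagonal fr * star V := by
          rw [hstarfr]
          simp [Matrix.star_eq_conjTranspose]
  · -- commutation
    intro X hX
    set Y : Matrix ι ι ℂ := star V * X * V with hY_def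
    have hXV : X = V * Y * star V := by
      rw [hY_def]
      calc X = (V * star V) * X * (V * star V) := by rw [hV2]; simp
        _ = V * (star V * X * V) * star V := by simp only [Matrix.mul_assoc]
    have hYD : Y * diagonal d = diagonal d * Y := by
      have h1 : X * (V * diagonal d * star V) = (V * diagonal d * star V) * X := by
        rw [← hspec]; exact hX
      calc Y * diagonal d = star V * X * V * diagonal d * (star V * V) := by rw [hV1]; simp [hY_def]
        _ = star V * (X * (V * diagonal d * star V)) * V := by simp only [Matrix.mul_assoc]
        _ = star V * ((V * diagonal d * star V) * X) * V := by rw [h1]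
        _ = (star V * V) * diagonal d * (star V * X * V) := by simp only [Matrix.mul_assoc]
        _ = diagonal d * Y := by rw [hV1, Matrix.one_mul, hY_def]
    have hYfr : Y * diagonal fr = diagonal fr * Y := by
      ext i j
      rw [Matrix.mul_diagonal, Matrix.diagonal_mul]
      by_cases hY0 : Y i j = 0
      · simp [hY0]
      · have hij := congrFun (congrFun hYD i) j
        rw [Matrix.mul_diagonal, Matrix.diagonal_mul] at hij
        have hdij : d j = d i := by
          have h' : d j * Y i j = d i * Y i j := by rw [← hij]; ring
          exact mul_right_cancel₀ hY0 h'
        have hlamij : lam j = lam i := by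
          have := hdij
          simp only [hd_def] at this
          exact_mod_cast this
        have hfrij : fr j = fr i := by simp [hfr_def, hlamij]
        rw [hfrij]
        ring
    calc X * g = V * (Y * diagonal fr) * star V := by
          rw [hg_def, hXV]
          calc V * Y * star V * (V * diagonal fr * star V)
              = V * (Y * ((star V * V) * diagonal fr)) * star V := by simp only [Matrix.mul_assoc]
            _ = V * (Y * diagonal fr) * star V := by rw [hV1, Matrix.one_mul]
      _ = V * (diagonal fr * Y) * star V := by rw [hYfr]
      _ = g * X := by
          rw [hg_def, hXV]
          calc V * (diagonal fr * Y) * star V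
              = V * (diagonal fr * ((star V * V) * Y)) * star V := by rw [hV1, Matrix.one_mul]
            _ = V * diagonal fr * star V * (V * Y * star V) := by simp only [Matrix.mul_assoc]
  · -- projection
    have h1 : g * h = V * diagonal (fun i => fr i * d i) * star V := by
      rw [hg_def, hspec]; exact sand_mul _ _
    have hq : g * h * g = V * diagonal (fun i => fr i * d i * fr i) * star V := by
      rw [h1, hg_def, sand_mul]
    have hidem : ∀ i, (fr i * d i * fr i) * (fr i * d i * fr i) = fr i * d i * fr i := by
      intro i
      by_cases h0 : lam i = 0
      · simp [hfr_def, h0]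
      · have hpos : 0 < lam i := lt_of_le_of_ne (hlam_nonneg i) (Ne.symm h0)
        have hs : (Real.sqrt (lam i) : ℂ) * (Real.sqrt (lam i) : ℂ) = (lam i : ℂ) := by
          rw [← Complex.ofReal_mul, Real.mul_self_sqrt (le_of_lt hpos)]
        have hsne : (Real.sqrt (lam i) : ℂ) ≠ 0 := by
          simp only [ne_eq, Complex.ofReal_eq_zero]
          exact ne_of_gt (Real.sqrt_pos.mpr hpos)
        rw [hfr_def]
        simp only [h0, if_false, hd_def]
        field_simp
        rw [← hs]
        ring
    have hfun : (fun i => (fr i * d i * fr i) * (fr i * d i * fr i))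
        = fun i => fr i * d i * fr i := funext hidem
    rw [hq, sand_mul, hfun]
  · -- nonzero
    have h1 : g * h = V * diagonal (fun i => fr i * d i) * star V := by
      rw [hg_def, hspec]; exact sand_mul _ _
    have hq : g * h * g = V * diagonal (fun i => fr i * d i * fr i) * star V := by
      rw [h1, hg_def, sand_mul]
    intro hq0
    rw [hq] at hq0
    -- trace of q = number of nonzero eigenvalues
    have hex : ∃ i, lam i ≠ 0 := by
      by_contra hall
      push_neg at hall
      apply hc
      have : h = 0 := by
        rw [hspec]
        have : diagonal d = 0 := by
          ext i j
          by_cases hij : i = j <;> simp [Matrix.diagonal_apply, hij, hd_def, hall]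
        rw [this]
        simp
      rw [hh_def] at this
      exact Matrix.conjTranspose_mul_self_eq_zero.mp this
    have htr : Matrix.trace (V * diagonal (fun i => fr i * d i * fr i) * star V)
        = ∑ i, (fr i * d i * fr i) := by
      rw [Matrix.trace_mul_comm, ← Matrix.mul_assoc, hV1, Matrix.one_mul, Matrix.trace_diagonal]
    rw [hq0] at htr
    simp only [Matrix.trace_zero] at htr
    obtain ⟨i0, hi0⟩ := hex
    have hterm : ∀ i, fr i * d i * fr i = if lam i = 0 then 0 else 1 := by
      intro i
      by_cases h0 : lam i = 0
      · simp [hfr_def, h0]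
      · have hpos : 0 < lam i := lt_of_le_of_ne (hlam_nonneg i) (Ne.symm h0)
        have hs : (Real.sqrt (lam i) : ℂ) * (Real.sqrt (lam i) : ℂ) = (lam i : ℂ) := by
          rw [← Complex.ofReal_mul, Real.mul_self_sqrt (le_of_lt hpos)]
        have hsne : (Real.sqrt (lam i) : ℂ) ≠ 0 := by
          simp only [ne_eq, Complex.ofReal_eq_zero]
          exact ne_of_gt (Real.sqrt_pos.mpr hpos)
        simp only [hfr_def, h0, if_false, hd_def]
        field_simp
        rw [← hs]
        ring
    rw [Finset.sum_congr rfl (fun i _ => hterm i)] at htr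
    -- sum of 0/1 terms equals 0 but one term is 1
    have : ((Finset.univ.filter (fun i => ¬ lam i = 0)).card : ℂ) = 0 := by
      rw [show ((Finset.univ.filter (fun i => ¬ lam i = 0)).card : ℂ)
          = ∑ i : ι, if lam i = 0 then (0 : ℂ) else 1 by
        rw [Finset.sum_ite, Finset.sum_const_zero, Finset.sum_const, zero_add, nsmul_eq_mul,
          mul_one]]
      exact htr.symm
    have hcard : (Finset.univ.filter (fun i => ¬ lam i = 0)).card = 0 := by exact_mod_cast this
    rw [Finset.card_eq_zero] at hcard
    have : i0 ∈ Finset.univ.filter (fun i => ¬ lam i = 0) := by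
      simp [hi0]
    rw [hcard] at this
    exact absurd this (Finset.notMem_empty i0)
  · -- g * P = g
    intro P hP
    have hDP : diagonal d * (star V * P * V) = diagonal d := by
      calc diagonal d * (star V * P * V)
          = (star V * V) * diagonal d * (star V * P * V) := by rw [hV1, Matrix.one_mul]
        _ = star V * ((V * diagonal d * star V) * P) * V := by simp only [Matrix.mul_assoc]
        _ = star V * (V * diagonal d * star V) * V := by rw [← hspec, hP, hspec]
        _ = (star V * V) * diagonal d * (star V * V) := by simp only [Matrix.mul_assoc]
        _ = diagonal d := by rw [hV1]; simp
    set Pt : Matrix ι ι ℂ := star V * P * V with hPt_def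
    have hfrP : diagonal fr * Pt = diagonal fr := by
      ext i j
      have hij := congrFun (congrFun hDP i) j
      rw [Matrix.diagonal_mul] at hij ⊢
      have hdiag : (diagonal d) i j = d i * (if i = j then 1 else 0) := by
        by_cases hij' : i = j <;> simp [Matrix.diagonal_apply, hij']
      by_cases h0 : lam i = 0
      · have hfri : fr i = 0 := by simp [hfr_def, h0]
        rcases eq_or_ne i j with rfl | hne
        · simp [Matrix.diagonal_apply_eq, hfri]
        · simp [Matrix.diagonal_apply_ne _ hne, hfri]
      · have hdne : d i ≠ 0 := by
          simp only [hd_def, ne_eq, Complex.ofReal_eq_zero]; exact h0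
        have hPtij : Pt i j = if i = j then 1 else 0 := by
          rw [hdiag] at hij
          exact mul_left_cancel₀ hdne hij
        rw [hPtij]
        by_cases hij' : i = j <;> simp [Matrix.diagonal_apply, hij']
    calc g * P = V * diagonal fr * (star V * P * V) * star V := by
          rw [hg_def]
          calc V * diagonal fr * star V * P
              = V * diagonal fr * (star V * P) := by rw [Matrix.mul_assoc]
            _ = V * diagonal fr * (star V * P * (V * star V)) := by rw [hV2, Matrix.mul_one]
            _ = V * diagonal fr * (star V * P * V * star V) := by
                rw [Matrix.mul_assoc (star V * P)]
            _ = V * diagonal fr * (star V * P * V) * star V := by rw [← Matrix.mul_assoc]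
      _ = V * (diagonal fr * Pt) * star V := by rw [hPt_def]; rw [Matrix.mul_assoc V]
      _ = g := by rw [hfrP, hg_def, Matrix.mul_assoc V]

lemma eq_zero_of_trace_conjTranspose_mul_self {A : Matrix ι ι ℂ} (h : (Aᴴ * A).trace = 0) : A = 0 := by
  have h2 : ∑ j, ∑ i, (Complex.normSq (A i j) : ℂ) = 0 := by
    rw [← h, Matrix.trace]
    apply Finset.sum_congr rfl
    intro j _
    simp only [Matrix.diag_apply, Matrix.mul_apply, Matrix.conjTranspose_apply]
    apply Finset.sum_congr rfl
    intro i _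
    rw [Complex.normSq_eq_conj_mul_self]
    rfl
  have h3 : ∑ j, ∑ i, Complex.normSq (A i j) = 0 := by
    have := congrArg Complex.re h2
    simpa using this
  ext i j
  have h4 : ∀ j' ∈ Finset.univ, (0:ℝ) ≤ ∑ i, Complex.normSq (A i j') :=
    fun j' _ => Finset.sum_nonneg fun i _ => Complex.normSq_nonneg _
  have h5 := (Finset.sum_eq_zero_iff_of_nonneg h4).mp h3 j (Finset.mem_univ j)
  have h6 := (Finset.sum_eq_zero_iff_of_nonneg
    (fun i' _ => Complex.normSq_nonneg (A i' j))).mp h5 i (Finset.mem_univ i)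
  simpa using Complex.normSq_eq_zero.mp h6

/-- partial isometry identity : if `wᴴ*w` is idempotent then `w * (wᴴ * w) = w`. -/
lemma mul_conjTranspose_mul_self {w : Matrix ι ι ℂ} (h : (wᴴ * w) * (wᴴ * w) = wᴴ * w) :
    w * (wᴴ * w) = w := by
  have key : (w * (wᴴ * w) - w)ᴴ * (w * (wᴴ * w) - w) = 0 := by
    have e : (w * (wᴴ * w) - w)ᴴ * (w * (wᴴ * w) - w)
        = (wᴴ * w) * ((wᴴ * w) * (wᴴ * w)) - (wᴴ * w) * (wᴴ * w) - (wᴴ * w) * (wᴴ * w)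
          + wᴴ * w := by
      simp only [Matrix.conjTranspose_sub, Matrix.conjTranspose_mul,
        Matrix.conjTranspose_conjTranspose, Matrix.sub_mul, Matrix.mul_sub]
      noncomm_ring
    simp only [e, h]
    simp
  have := Matrix.conjTranspose_mul_self_eq_zero.mp key
  exact sub_eq_zero.mp this

lemma trace_psd_proj_zero {P : Matrix ι ι ℂ} (hherm : Pᴴ = P) (hidem : P * P = P)
    (htr : P.trace = 0) : P = 0 := by
  apply eq_zero_of_trace_conjTranspose_mul_self
  rw [hherm, hidem, htr]

/-- rank decrease lemma -/
lemma rank_lt_of_sub_proj {P q : Matrix ι ι ℂ} (hPP : P * P = P) (hPq : P * q = q) (hqP : q * P = q)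
    (hqq : q * q = q) (hq0 : q ≠ 0) :
    Module.finrank ℂ (LinearMap.range (P - q).mulVecLin)
      < Module.finrank ℂ (LinearMap.range P.mulVecLin) := by
  apply Submodule.finrank_lt_finrank_of_lt
  rw [lt_iff_le_and_ne]
  constructor
  · rintro x ⟨v, rfl⟩
    refine ⟨(P - q).mulVec v, ?_⟩
    rw [Matrix.mulVecLin_apply, Matrix.mulVecLin_apply, Matrix.mulVec_mulVec]
    congr 1
    rw [Matrix.mul_sub, hPP, hPq]
  · intro heq
    apply hq0
    ext i j
    have hqv : ∀ v, q.mulVec v = 0 := by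
      intro v
      have hmem : q.mulVec v ∈ LinearMap.range P.mulVecLin := by
        refine ⟨q.mulVec v, ?_⟩
        rw [Matrix.mulVecLin_apply, Matrix.mulVec_mulVec, hPq]
      rw [← heq] at hmem
      obtain ⟨w, hw⟩ := hmem
      rw [Matrix.mulVecLin_apply] at hw
      have h1 : q.mulVec ((P - q).mulVec w) = 0 := by
        rw [Matrix.mulVec_mulVec, Matrix.mul_sub, hqP, hqq, sub_self, Matrix.zero_mulVec]
      have h2 : q.mulVec (q.mulVec v) = q.mulVec v := by
        rw [Matrix.mulVec_mulVec, hqq]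
      rw [← hw] at h2
      rw [h1] at h2
      rw [← hw]
      exact h2.symm
    have := congrFun (hqv (Pi.single j 1)) i
    simpa [Matrix.mulVec_single] using this

theorem key_induction (B : Subalgebra ℂ (Matrix ι ι ℂ)) (hstar : ∀ b ∈ B, bᴴ ∈ B) :
    ∀ r : ℕ, ∀ P Q : Matrix ι ι ℂ, P ∈ comm (B : Set (Matrix ι ι ℂ)) → Q ∈ comm (B : Set (Matrix ι ι ℂ)) →
    Pᴴ = P → P * P = P → Qᴴ = Q → Q * Q = Q →
    (∀ b ∈ B, (b * P).trace = (b * Q).trace) →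
    Module.finrank ℂ (LinearMap.range P.mulVecLin) ≤ r →
    ∃ v : Matrix ι ι ℂ, v ∈ comm (B : Set (Matrix ι ι ℂ)) ∧ vᴴ * v = P ∧ v * vᴴ = Q := by
  have hstar' : ∀ b ∈ (B : Set (Matrix ι ι ℂ)), bᴴ ∈ (B : Set (Matrix ι ι ℂ)) := hstar
  intro r
  induction r with
  | zero =>
    intro P Q hPc hQc hPh hPi hQh hQi htr hrk
    -- rank 0 : P = 0
    have hP0 : P = 0 := by
      have h0 : Module.finrank ℂ (LinearMap.range P.mulVecLin) = 0 := Nat.le_zero.mp hrk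
      have hbot : LinearMap.range P.mulVecLin = ⊥ := Submodule.finrank_eq_zero.mp h0
      apply eq_of_mulVec_eq (B := (0 : Matrix ι ι ℂ))
      intro v
      have : P.mulVec v ∈ LinearMap.range P.mulVecLin := ⟨v, rfl⟩
      rw [hbot] at this
      simpa using this
    have hQ0 : Q = 0 := by
      apply trace_psd_proj_zero hQh hQi
      have := htr 1 B.one_mem
      rw [one_mul, one_mul, hP0] at this
      simpa using this.symm
    exact ⟨0, by intro b _; simp, by simp [hP0], by simp [hQ0]⟩
  | succ r ih =>
    intro P Q hPc hQc hPh hPi hQh hQi htr hrk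
    by_cases hP0 : P = 0
    · have hQ0 : Q = 0 := by
        apply trace_psd_proj_zero hQh hQi
        have := htr 1 B.one_mem
        rw [one_mul, one_mul, hP0] at this
        simpa using this.symm
      exact ⟨0, by intro b _; simp, by simp [hP0], by simp [hQ0]⟩
    -- Step 1 : find c in the commutant with Q * (c * P) ≠ 0
    have hex : ∃ c ∈ comm (B : Set (Matrix ι ι ℂ)), Q * (c * P) ≠ 0 := by
      by_contra hno
      push_neg at hno
      -- W = commutant orbit of range P
      let W : Submodule ℂ (ι → ℂ) :=
        Submodule.span ℂ {y | ∃ c ∈ comm (B : Set (Matrix ι ι ℂ)), ∃ x, y = (c * P).mulVec x}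
      obtain ⟨R, hR1, hR2, hR3⟩ := exists_proj W
      -- W invariant under every element of the commutant
      have hWinv : ∀ c ∈ comm (B : Set (Matrix ι ι ℂ)), ∀ x ∈ W, c.mulVec x ∈ W := by
        intro c hc x hx
        induction hx using Submodule.span_induction with
        | mem y hy =>
          obtain ⟨c', hc', x', rfl⟩ := hy
          rw [Matrix.mulVec_mulVec, ← Matrix.mul_assoc]
          exact Submodule.subset_span ⟨c * c', mul_mem_comm hc hc', x', rfl⟩
        | zero => simpa using (Submodule.zero_mem W)
        | add y z _ _ hy hz => rw [Matrix.mulVec_add]; exact Submodule.add_mem W hy hz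
        | smul a y _ hy => rw [Matrix.mulVec_smul]; exact Submodule.smul_mem W a hy
      -- R commutes with the commutant
      have hRcc : R ∈ comm (comm (B : Set (Matrix ι ι ℂ))) := by
        intro c hc
        exact proj_comm hR1 hR2 hR3 (hWinv c hc)
          (hWinv cᴴ (star_mem_comm hstar' hc))
      have hRB : R ∈ B := double_commutant B hstar hRcc
      -- R * P = P
      have hRP : R * P = P := by
        apply eq_of_mulVec_eq
        intro v
        rw [← Matrix.mulVec_mulVec]
        apply hR2
        exact Submodule.subset_span ⟨1, one_mem_comm _, v, by rw [one_mul]⟩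
      -- Q * R = 0
      have hQW : ∀ x ∈ W, Q.mulVec x = 0 := by
        intro x hx
        induction hx using Submodule.span_induction with
        | mem y hy =>
          obtain ⟨c', hc', x', rfl⟩ := hy
          rw [Matrix.mulVec_mulVec, hno c' hc', Matrix.zero_mulVec]
        | zero => simp
        | add y z _ _ hy hz => rw [Matrix.mulVec_add, hy, hz]; simp
        | smul a y _ hy => rw [Matrix.mulVec_smul, hy]; simp
      have hQR : Q * R = 0 := by
        apply eq_of_mulVec_eq (B := (0 : Matrix ι ι ℂ))
        intro v
        rw [← Matrix.mulVec_mulVec, Matrix.zero_mulVec]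
        exact hQW _ (hR3 v)
      -- contradiction via trace
      have h1 : P.trace = 0 := by
        have h2 := htr R hRB
        rw [hRP] at h2
        rw [h2, Matrix.trace_mul_comm, hQR, Matrix.trace_zero]
      exact hP0 (trace_psd_proj_zero hPh hPi h1)
    obtain ⟨c, hcB, hc0⟩ := hex
    set c₀ : Matrix ι ι ℂ := Q * (c * P) with hc₀_def
    have hc₀c : c₀ ∈ comm (B : Set (Matrix ι ι ℂ)) := mul_mem_comm hQc (mul_mem_comm hcB hPc)
    have hc₀P : c₀ * P = c₀ := by rw [hc₀_def, Matrix.mul_assoc, Matrix.mul_assoc, hPi]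
    have hQc₀ : Q * c₀ = c₀ := by rw [hc₀_def, ← Matrix.mul_assoc, hQi]
    obtain ⟨g, hgh, hgcomm, hgproj, hgne, hgP⟩ := gadget hc0
    -- g is in the commutant
    have hhc : c₀ᴴ * c₀ ∈ comm (B : Set (Matrix ι ι ℂ)) :=
      mul_mem_comm (star_mem_comm hstar' hc₀c) hc₀c
    have hgc : g ∈ comm (B : Set (Matrix ι ι ℂ)) := by
      intro b hb
      exact hgcomm b (hhc b hb)
    set v₁ : Matrix ι ι ℂ := c₀ * g with hv₁_def
    have hv₁c : v₁ ∈ comm (B : Set (Matrix ι ι ℂ)) := mul_mem_comm hc₀c hgc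
    set q : Matrix ι ι ℂ := v₁ᴴ * v₁ with hq_def
    have hqg : q = g * (c₀ᴴ * c₀) * g := by
      rw [hq_def, hv₁_def, Matrix.conjTranspose_mul, hgh]
      noncomm_ring
    have hqq : q * q = q := by rw [hqg]; exact hgproj
    have hq0 : q ≠ 0 := by rw [hqg]; exact hgne
    have hqh : qᴴ = q := by
      rw [hq_def, Matrix.conjTranspose_mul, Matrix.conjTranspose_conjTranspose]
    -- v₁ * P = v₁
    have hgPv : g * P = g := by
      apply hgP
      rw [Matrix.mul_assoc, hc₀P]
    have hv₁P : v₁ * P = v₁ := by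
      rw [hv₁_def, Matrix.mul_assoc, hgPv]
    have hQv₁ : Q * v₁ = v₁ := by rw [hv₁_def, ← Matrix.mul_assoc, hQc₀]
    have hqP : q * P = q := by rw [hq_def, Matrix.mul_assoc, hv₁P]
    have hPq : P * q = q := by
      have := congrArg conjTranspose hqP
      simpa [Matrix.conjTranspose_mul, hqh, hPh] using this
    -- v₁ * q = v₁
    have hv₁q : v₁ * q = v₁ := mul_conjTranspose_mul_self (by rw [← hq_def] at *; exact hqq)
    set q' : Matrix ι ι ℂ := v₁ * v₁ᴴ with hq'_def
    have hq'h : q'ᴴ = q' := by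
      rw [hq'_def, Matrix.conjTranspose_mul, Matrix.conjTranspose_conjTranspose]
    have hq'q' : q' * q' = q' := by
      rw [hq'_def]
      calc v₁ * v₁ᴴ * (v₁ * v₁ᴴ) = (v₁ * (v₁ᴴ * v₁)) * v₁ᴴ := by noncomm_ring
        _ = v₁ * v₁ᴴ := by rw [← hq_def, hv₁q]
    have hQq' : Q * q' = q' := by rw [hq'_def, ← Matrix.mul_assoc, hQv₁]
    have hq'Q : q' * Q = q' := by
      have := congrArg conjTranspose hQq'
      simpa [Matrix.conjTranspose_mul, hq'h, hQh] using this
    -- traces of q and q' agree against B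
    have htrq : ∀ b ∈ B, (b * q).trace = (b * q').trace := by
      intro b hb
      have hbv : b * v₁ = v₁ * b := hv₁c b hb
      calc (b * q).trace = ((b * v₁ᴴ) * v₁).trace := by rw [hq_def, Matrix.mul_assoc]
        _ = (v₁ * (b * v₁ᴴ)).trace := Matrix.trace_mul_comm (b * v₁ᴴ) v₁
        _ = (b * q').trace := by
            have e : v₁ * (b * v₁ᴴ) = b * q' := by
              rw [hq'_def, ← Matrix.mul_assoc, ← hbv, Matrix.mul_assoc]
            rw [e]
    -- new pair
    have hP₁c : P - q ∈ comm (B : Set (Matrix ι ι ℂ)) :=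
      sub_mem_comm hPc (mul_mem_comm (star_mem_comm hstar' hv₁c) hv₁c)
    have hQ₁c : Q - q' ∈ comm (B : Set (Matrix ι ι ℂ)) :=
      sub_mem_comm hQc (mul_mem_comm hv₁c (star_mem_comm hstar' hv₁c))
    have hP₁h : (P - q)ᴴ = P - q := by rw [Matrix.conjTranspose_sub, hPh, hqh]
    have hQ₁h : (Q - q')ᴴ = Q - q' := by rw [Matrix.conjTranspose_sub, hQh, hq'h]
    have hP₁i : (P - q) * (P - q) = P - q := by
      rw [Matrix.sub_mul, Matrix.mul_sub, Matrix.mul_sub, hPi, hPq, hqP, hqq]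
      simp
    have hQ₁i : (Q - q') * (Q - q') = Q - q' := by
      rw [Matrix.sub_mul, Matrix.mul_sub, Matrix.mul_sub, hQi, hQq', hq'Q, hq'q']
      simp
    have htr₁ : ∀ b ∈ B, (b * (P - q)).trace = (b * (Q - q')).trace := by
      intro b hb
      rw [Matrix.mul_sub, Matrix.mul_sub, Matrix.trace_sub, Matrix.trace_sub,
        htr b hb, htrq b hb]
    have hrk₁ : Module.finrank ℂ (LinearMap.range (P - q).mulVecLin) ≤ r := by
      have hlt := rank_lt_of_sub_proj hPi hPq hqP hqq hq0
      omega
    obtain ⟨v₂, hv₂c, hv₂1, hv₂2⟩ := ih (P - q) (Q - q') hP₁c hQ₁c hP₁h hP₁i hQ₁h hQ₁i htr₁ hrk₁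
    -- combine
    have hv₂q : v₂ * (P - q) = v₂ := by
      rw [← hv₂1]; exact mul_conjTranspose_mul_self (by rw [hv₂1]; exact hP₁i)
    have hv₂l : (Q - q') * v₂ = v₂ := by
      have h1 : v₂ * (v₂ᴴ * v₂) = v₂ := mul_conjTranspose_mul_self (by rw [hv₂1]; exact hP₁i)
      calc (Q - q') * v₂ = (v₂ * v₂ᴴ) * v₂ := by rw [hv₂2]
        _ = v₂ := by rw [Matrix.mul_assoc]; exact h1
    have hv₁l : q' * v₁ = v₁ := by
      rw [hq'_def, Matrix.mul_assoc]
      -- v₁ * (v₁ᴴ * v₁) = v₁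
      exact mul_conjTranspose_mul_self (by rw [← hq_def]; exact hqq)
    -- cross terms vanish
    have hcross1 : v₂ᴴ * v₁ = 0 := by
      have e1 : v₂ᴴ = v₂ᴴ * (Q - q') := by
        have := congrArg conjTranspose hv₂l
        simpa [Matrix.conjTranspose_mul, hQ₁h] using this.symm
      rw [e1, Matrix.mul_assoc]
      have e2 : (Q - q') * v₁ = 0 := by
        rw [Matrix.sub_mul, hQv₁, hv₁l, sub_self]
      rw [e2, Matrix.mul_zero]
    have hcross2 : v₁ᴴ * v₂ = 0 := by
      have := congrArg conjTranspose hcross1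
      simpa [Matrix.conjTranspose_mul] using this
    have hcross3 : v₂ * v₁ᴴ = 0 := by
      have e1 : v₁ᴴ = q * v₁ᴴ := by
        have := congrArg conjTranspose hv₁q
        simpa [Matrix.conjTranspose_mul, hqh] using this.symm
      have e2 : (P - q) * (q * v₁ᴴ) = 0 := by
        rw [← Matrix.mul_assoc, Matrix.sub_mul, hPq, hqq, sub_self, Matrix.zero_mul]
      calc v₂ * v₁ᴴ = v₂ * (P - q) * v₁ᴴ := by rw [hv₂q]
        _ = v₂ * ((P - q) * (q * v₁ᴴ)) := by rw [← e1, Matrix.mul_assoc]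
        _ = 0 := by rw [e2, Matrix.mul_zero]
    have hcross4 : v₁ * v₂ᴴ = 0 := by
      have := congrArg conjTranspose hcross3
      simpa [Matrix.conjTranspose_mul] using this
    refine ⟨v₁ + v₂, ?_, ?_, ?_⟩
    · intro b hb
      rw [Matrix.mul_add, Matrix.add_mul, hv₁c b hb, hv₂c b hb]
    · rw [Matrix.conjTranspose_add, Matrix.add_mul, Matrix.mul_add, Matrix.mul_add,
        ← hq_def, hv₂1, hcross2, hcross1]
      simp only [add_zero, zero_add]
      abel
    · rw [Matrix.conjTranspose_add, Matrix.add_mul, Matrix.mul_add, Matrix.mul_add,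
        ← hq'_def, hv₂2, hcross3, hcross4]
      simp only [add_zero, zero_add]
      abel



variable {d N : ℕ}

lemma trace_fromBlocks' (A : Matrix (Fin d) (Fin d) ℂ) (B C D : Matrix (Fin d) (Fin d) ℂ) :
    (fromBlocks A B C D).trace = A.trace + D.trace := by
  simp [Matrix.trace, Fintype.sum_sum_type, Matrix.fromBlocks]

lemma prod_fromBlocks (ρ ρ' : Fin N → Matrix (Fin d) (Fin d) ℂ) (ks : List (Fin N)) :
    (ks.map (fun k => fromBlocks (ρ k) 0 0 (ρ' k))).prod
      = fromBlocks (ks.map ρ).prod 0 0 (ks.map ρ').prod := by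
  induction ks with
  | nil => simp [← Matrix.fromBlocks_one]
  | cons k ks ih =>
    simp only [List.map_cons, List.prod_cons, ih, Matrix.fromBlocks_multiply]
    simp

lemma exists_list_map {α β : Type*} (f : α → β) :
    ∀ l : List β, (∀ y ∈ l, y ∈ Set.range f) → ∃ ks : List α, l = ks.map f := by
  intro l
  induction l with
  | nil => exact fun _ => ⟨[], rfl⟩
  | cons a l ih =>
    intro h
    obtain ⟨k, hk⟩ := h a List.mem_cons_self
    obtain ⟨ks, hks⟩ := ih fun y hy => h y (List.mem_cons_of_mem a hy)
    exact ⟨k :: ks, by rw [List.map_cons, hk, hks]⟩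

theorem reverse_direction (ρ ρ' : Fin N → Matrix (Fin d) (Fin d) ℂ)
    (hρ : ∀ k, (ρ k).PosSemidef) (hρ' : ∀ k, (ρ' k).PosSemidef)
    (htr : ∀ n : ℕ, 1 ≤ n → ∀ i : Fin n → Fin N,
        Matrix.trace (List.prod (List.ofFn fun j => ρ (i j))) =
          Matrix.trace (List.prod (List.ofFn fun j => ρ' (i j)))) :
    ∃ U ∈ Matrix.unitaryGroup (Fin d) ℂ, ∀ k, ρ' k = U * ρ k * star U := by
  classical
  set gens : Fin N → Matrix (Fin d ⊕ Fin d) (Fin d ⊕ Fin d) ℂ :=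
    fun k => fromBlocks (ρ k) 0 0 (ρ' k) with hgens_def
  set B : Subalgebra ℂ (Matrix (Fin d ⊕ Fin d) (Fin d ⊕ Fin d) ℂ) :=
    Algebra.adjoin ℂ (Set.range gens) with hB_def
  have hgherm : ∀ k, (gens k)ᴴ = gens k := by
    intro k
    rw [hgens_def]
    simp only [Matrix.fromBlocks_conjTranspose, Matrix.conjTranspose_zero]
    rw [(hρ k).1, (hρ' k).1]
  have hmemgen : ∀ k, gens k ∈ B := fun k => Algebra.subset_adjoin ⟨k, rfl⟩
  have hstar : ∀ b ∈ B, bᴴ ∈ B := by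
    intro b hb
    induction hb using Algebra.adjoin_induction with
    | mem x hx =>
      obtain ⟨k, rfl⟩ := hx
      rw [hgherm k]
      exact hmemgen k
    | algebraMap r =>
      rw [Algebra.algebraMap_eq_smul_one, Matrix.conjTranspose_smul,
        Matrix.conjTranspose_one, ← Algebra.algebraMap_eq_smul_one]
      exact Subalgebra.algebraMap_mem _ _
    | add x y hx hy ihx ihy =>
      rw [Matrix.conjTranspose_add]; exact add_mem ihx ihy
    | mul x y hx hy ihx ihy =>
      rw [Matrix.conjTranspose_mul]; exact mul_mem ihy ihx
  set P : Matrix (Fin d ⊕ Fin d) (Fin d ⊕ Fin d) ℂ := fromBlocks 1 0 0 0 with hP_def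
  set Q : Matrix (Fin d ⊕ Fin d) (Fin d ⊕ Fin d) ℂ := fromBlocks 0 0 0 1 with hQ_def
  have hPi : P * P = P := by rw [hP_def, Matrix.fromBlocks_multiply]; simp
  have hQi : Q * Q = Q := by rw [hQ_def, Matrix.fromBlocks_multiply]; simp
  have hPh : Pᴴ = P := by rw [hP_def, Matrix.fromBlocks_conjTranspose]; simp
  have hQh : Qᴴ = Q := by rw [hQ_def, Matrix.fromBlocks_conjTranspose]; simp
  have hcomm : ∀ (R : Matrix (Fin d ⊕ Fin d) (Fin d ⊕ Fin d) ℂ),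
      (∀ k, gens k * R = R * gens k) → R ∈ comm (B : Set _) := by
    intro R hR b hb
    induction hb using Algebra.adjoin_induction with
    | mem x hx => obtain ⟨k, rfl⟩ := hx; exact hR k
    | algebraMap r =>
      rw [Algebra.algebraMap_eq_smul_one, Matrix.smul_mul, Matrix.mul_smul, one_mul, mul_one]
    | add x y hx hy ihx ihy => rw [Matrix.add_mul, Matrix.mul_add, ihx, ihy]
    | mul x y hx hy ihx ihy =>
      rw [Matrix.mul_assoc, ihy, ← Matrix.mul_assoc, ihx, Matrix.mul_assoc]
  have hPc : P ∈ comm (B : Set _) := by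
    apply hcomm
    intro k
    rw [hgens_def, hP_def, Matrix.fromBlocks_multiply, Matrix.fromBlocks_multiply]
    simp
  have hQc : Q ∈ comm (B : Set _) := by
    apply hcomm
    intro k
    rw [hgens_def, hQ_def, Matrix.fromBlocks_multiply, Matrix.fromBlocks_multiply]
    simp
  -- the trace condition
  have htrace0 : ∀ b ∈ Submodule.span ℂ ((Submonoid.closure (Set.range gens) : Submonoid _) :
      Set (Matrix (Fin d ⊕ Fin d) (Fin d ⊕ Fin d) ℂ)), (b * P).trace = (b * Q).trace := by
    intro b hb'
    induction hb' using Submodule.span_induction with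
    | mem x hx =>
      obtain ⟨l, hl, rfl⟩ := Submonoid.exists_list_of_mem_closure hx
      obtain ⟨ks, rfl⟩ := exists_list_map gens l hl
      rw [hgens_def, prod_fromBlocks, hP_def, hQ_def, Matrix.fromBlocks_multiply,
        Matrix.fromBlocks_multiply]
      simp only [Matrix.mul_one, Matrix.mul_zero, Matrix.zero_mul, add_zero, zero_add,
        Matrix.one_mul]
      rw [trace_fromBlocks', trace_fromBlocks']
      simp only [Matrix.trace_zero, add_zero, zero_add]
      rcases ks with _ | ⟨k, ks'⟩
      · simp
      · have hlen : 1 ≤ (k :: ks').length := by simp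
        have := htr (k :: ks').length hlen (fun j => (k :: ks').get j)
        rwa [show (List.ofFn fun j => ρ ((k :: ks').get j)) = (k :: ks').map ρ by
            rw [← List.ofFn_getElem_eq_map]; rfl,
          show (List.ofFn fun j => ρ' ((k :: ks').get j)) = (k :: ks').map ρ' by
            rw [← List.ofFn_getElem_eq_map]; rfl] at this
    | zero => simp
    | add x y hx hy ihx ihy => rw [Matrix.add_mul, Matrix.add_mul, trace_add, trace_add, ihx, ihy]
    | smul a x hx ihx => rw [Matrix.smul_mul, Matrix.smul_mul, trace_smul, trace_smul, ihx]
  have htrace : ∀ b ∈ B, (b * P).trace = (b * Q).trace := by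
    intro b hb
    apply htrace0
    have := Algebra.adjoin_eq_span (R := ℂ) (s := Set.range gens)
    rw [hB_def] at hb
    rw [← this]
    exact hb
  obtain ⟨v, hvc, hv1, hv2⟩ := key_induction B hstar
    (Module.finrank ℂ (LinearMap.range P.mulVecLin)) P Q hPc hQc hPh hPi hQh hQi htrace le_rfl
  -- extract the unitary
  have hvP : v * P = v := by
    have h := mul_conjTranspose_mul_self (w := v) (by rw [hv1]; exact hPi)
    rw [hv1] at h
    exact h
  have hQv : Q * v = v := by
    calc Q * v = v * vᴴ * v := by rw [hv2]
      _ = v * (vᴴ * v) := by rw [Matrix.mul_assoc]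
      _ = v * P := by rw [hv1]
      _ = v := hvP
  set u : Matrix (Fin d) (Fin d) ℂ := v.toBlocks₂₁ with hu_def
  have hvform : v = fromBlocks 0 0 u 0 := by
    have h1 : v = Q * v * P := by rw [hQv, hvP]
    have hv' : v = fromBlocks v.toBlocks₁₁ v.toBlocks₁₂ v.toBlocks₂₁ v.toBlocks₂₂ :=
      (Matrix.fromBlocks_toBlocks v).symm
    conv_lhs => rw [h1]
    rw [hv', hP_def, hQ_def, Matrix.fromBlocks_multiply, Matrix.fromBlocks_multiply]
    simp [hu_def]
  have hu1 : uᴴ * u = 1 := by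
    have h := hv1
    rw [hvform, Matrix.fromBlocks_conjTranspose, Matrix.fromBlocks_multiply, hP_def] at h
    have := congrArg Matrix.toBlocks₁₁ h
    simpa using this
  have hu2 : u * uᴴ = 1 := by
    have h := hv2
    rw [hvform, Matrix.fromBlocks_conjTranspose, Matrix.fromBlocks_multiply, hQ_def] at h
    have := congrArg Matrix.toBlocks₂₂ h
    simpa using this
  have hint : ∀ k, ρ' k * u = u * ρ k := by
    intro k
    have h := hvc (gens k) (hmemgen k)
    rw [hvform, hgens_def, Matrix.fromBlocks_multiply, Matrix.fromBlocks_multiply] at h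
    have := congrArg Matrix.toBlocks₂₁ h
    simpa using this
  refine ⟨u, ?_, ?_⟩
  · rw [Matrix.mem_unitaryGroup_iff]
    rw [Matrix.star_eq_conjTranspose]
    exact hu2
  · intro k
    calc ρ' k = ρ' k * (u * uᴴ) := by rw [hu2, mul_one]
      _ = (ρ' k * u) * uᴴ := by rw [Matrix.mul_assoc]
      _ = u * ρ k * uᴴ := by rw [hint k]
      _ = u * ρ k * star u := by rw [Matrix.star_eq_conjTranspose]


theorem forward_direction (ρ ρ' : Fin N → Matrix (Fin d) (Fin d) ℂ)
    {U : Matrix (Fin d) (Fin d) ℂ} (hUmem : U ∈ Matrix.unitaryGroup (Fin d) ℂ)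
    (hU : ∀ k, ρ' k = U * ρ k * star U) :
    ∀ n : ℕ, 1 ≤ n → ∀ i : Fin n → Fin N,
        Matrix.trace (List.prod (List.ofFn fun j => ρ (i j))) =
          Matrix.trace (List.prod (List.ofFn fun j => ρ' (i j))) := by
  have hU1 : U * star U = 1 := Matrix.mem_unitaryGroup_iff.mp hUmem
  have hU2 : star U * U = 1 := Matrix.mem_unitaryGroup_iff'.mp hUmem
  have key : ∀ l : List (Matrix (Fin d) (Fin d) ℂ),
      (l.map (fun a => U * a * star U)).prod = U * l.prod * star U := by
    intro l
    induction l with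
    | nil =>
      simp only [List.map_nil, List.prod_nil]
      rw [Matrix.mul_one, hU1]
    | cons a l ih =>
      simp only [List.map_cons, List.prod_cons, ih]
      rw [show (U * a * star U) * (U * l.prod * star U)
          = U * (a * ((star U * U) * l.prod)) * star U from by noncomm_ring, hU2,
        Matrix.one_mul, ← Matrix.mul_assoc]
  intro n hn i
  have h1 : (List.ofFn fun j => ρ' (i j))
      = (List.ofFn fun j => ρ (i j)).map (fun a => U * a * star U) := by
    rw [List.map_ofFn]
    congr 1
    funext j
    exact hU (i j)
  rw [h1, key, Matrix.trace_mul_comm, ← Matrix.mul_assoc, hU2, Matrix.one_mul]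


end Barg

/-- Two `N`-tuples of density matrices on `ℂ^d` are jointly unitarily similar
(`ρ'_k = U ρ_k U†` for a single unitary `U`) iff all their Bargmann invariants agree:
`Tr(ρ_{i₁} ⋯ ρ_{iₙ}) = Tr(ρ'_{i₁} ⋯ ρ'_{iₙ})` for every `n ≥ 1` and indices
`i₁, …, iₙ ∈ {1, …, N}`. -/
theorem joint_unitary_similarity_iff_bargmann {N d : ℕ}
    (ρ ρ' : Fin N → Matrix (Fin d) (Fin d) ℂ)
    (hρ : ∀ k, IsDensityMatrix (ρ k)) (hρ' : ∀ k, IsDensityMatrix (ρ' k)) :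
    (∃ U ∈ Matrix.unitaryGroup (Fin d) ℂ, ∀ k, ρ' k = U * ρ k * star U) ↔
      (∀ n : ℕ, 1 ≤ n → ∀ i : Fin n → Fin N,
        Matrix.trace (List.prod (List.ofFn fun j => ρ (i j))) =
          Matrix.trace (List.prod (List.ofFn fun j => ρ' (i j)))) := by
  constructor
  · rintro ⟨U, hUmem, hU⟩
    exact Barg.forward_direction ρ ρ' hUmem hU
  · intro h
    exact Barg.reverse_direction ρ ρ' (fun k => (hρ k).1) (fun k => (hρ' k).1) h
end

section
/- For every integer n ≥ 3, the set ℬ_n|circ := {∏_{k=0}^{n−1} H_{k, (k+1) mod n} : H an n×n positive semidefinite circulant complex matrix with all diagonal entries equal to 1} equals {wⁿ : w ∈ 𝒫_n}, the image of the convex hull of the nth roots of unity under the nth power map. -/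
open scoped ComplexOrder

/-- The circulant matrix of `z ∈ ℂⁿ`: `C(z)_{jk} = z_{(k-j) mod n}`. -/
def circulantMatrix {n : ℕ} (z : Fin n → ℂ) : Matrix (Fin n) (Fin n) ℂ :=
  fun j k => z (k - j)

/-- An `n×n` complex matrix is circulant if it equals `C(z)` for some `z ∈ ℂⁿ`. -/
def IsCirculant {n : ℕ} (H : Matrix (Fin n) (Fin n) ℂ) : Prop :=
  ∃ z : Fin n → ℂ, H = circulantMatrix z

/-- `ω_n = exp(2πi/n)`. -/
noncomputable def primRoot (n : ℕ) : ℂ := Complex.exp (2 * Real.pi * Complex.I / n)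

/-- `𝒫_n`: the convex hull in `ℂ` of the `n`th roots of unity. -/
noncomputable def rootsOfUnityHull (n : ℕ) : Set ℂ :=
  convexHull ℝ (Set.range fun k : Fin n => primRoot n ^ (k : ℕ))

namespace BnAux

variable {n : ℕ}

noncomputable def e (n : ℕ) (a : Fin n) : ℂ := primRoot n ^ (a : ℕ)

lemma primRoot_pow_n (hn : n ≠ 0) : primRoot n ^ n = 1 :=
  (Complex.isPrimitiveRoot_exp n hn).pow_eq_one

lemma pow_mod (hn : n ≠ 0) (a : ℕ) : primRoot n ^ a = primRoot n ^ (a % n) := by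
  conv_lhs => rw [← Nat.div_add_mod a n]
  rw [pow_add, pow_mul, primRoot_pow_n hn, one_pow, one_mul]

lemma abs_primRoot (hn : n ≠ 0) : ‖primRoot n‖ = 1 := by
  have : primRoot n = Complex.exp ((2 * Real.pi / n : ℝ) * Complex.I) := by
    unfold primRoot; push_cast; ring_nf
  rw [this]; exact Complex.norm_exp_ofReal_mul_I _

variable [NeZero n]

lemma e_zero : e n 0 = 1 := by simp [e]

lemma e_add (a b : Fin n) : e n (a + b) = e n a * e n b := by
  rw [e, e, e, Fin.val_add, ← pow_mod (NeZero.ne n), pow_add]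

lemma conj_e (a : Fin n) : (starRingEnd ℂ) (e n a) = e n (-a) := by
  have habs : ‖e n a‖ = 1 := by
    rw [e, norm_pow, abs_primRoot (NeZero.ne n), one_pow]
  have h1 : e n a * e n (-a) = 1 := by rw [← e_add]; simp [e_zero]
  rw [← Complex.inv_eq_conj habs, eq_comm]
  exact eq_inv_of_mul_eq_one_left (by rw [mul_comm] at h1; exact h1)

lemma e_val_mul (a b : Fin n) : e n (a * b) = primRoot n ^ ((a : ℕ) * (b : ℕ)) := by
  rw [e, Fin.val_mul, ← pow_mod (NeZero.ne n)]

lemma sum_e_mul (h1 : 1 < n) (m : Fin n) :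
    ∑ j : Fin n, e n (j * m) = if m = 0 then (n : ℂ) else 0 := by
  have hn := NeZero.ne n
  have key : ∀ j : Fin n, e n (j * m) = (primRoot n ^ (m : ℕ)) ^ (j : ℕ) := by
    intro j; rw [e_val_mul, ← pow_mul, Nat.mul_comm]
  simp_rw [key]
  rw [Fin.sum_univ_eq_sum_range (fun i => (primRoot n ^ (m : ℕ)) ^ i) n]
  by_cases hm : m = 0
  · simp [hm]
  · rw [if_neg hm]
    have hprim : IsPrimitiveRoot (primRoot n) n := Complex.isPrimitiveRoot_exp n hn
    have hx1 : primRoot n ^ (m : ℕ) ≠ 1 := fun hx =>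
      hm (Fin.ext (by simpa using
        Nat.eq_zero_of_dvd_of_lt ((hprim.pow_eq_one_iff_dvd (m : ℕ)).mp hx) m.isLt))
    rw [geom_sum_eq hx1, ← pow_mul, Nat.mul_comm, pow_mul, primRoot_pow_n hn, one_pow,
      sub_self, zero_div]

lemma quad_circ (z x : Fin n → ℂ) :
    dotProduct (star x) ((circulantMatrix z).mulVec x)
      = ∑ a : Fin n, ∑ b : Fin n, (starRingEnd ℂ) (x a) * (z (b - a) * x b) := by
  simp [dotProduct, Matrix.mulVec, circulantMatrix, Finset.mul_sum,
    Complex.star_def]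

lemma quad_eval (z : Fin n → ℂ) (j : Fin n) :
    (∑ a : Fin n, ∑ b : Fin n,
        (starRingEnd ℂ) (e n (j * a)) * (z (b - a) * e n (j * b)))
      = n * ∑ r : Fin n, z r * e n (j * r) := by
  have step : ∀ a : Fin n,
      (∑ b : Fin n, (starRingEnd ℂ) (e n (j * a)) * (z (b - a) * e n (j * b)))
        = ∑ r : Fin n, z r * e n (j * r) := by
    intro a
    rw [← Equiv.sum_comp (Equiv.addLeft a)
      (fun b => (starRingEnd ℂ) (e n (j * a)) * (z (b - a) * e n (j * b)))]
    apply Finset.sum_congr rfl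
    intro r _
    have hb : (Equiv.addLeft a) r = a + r := rfl
    rw [hb, add_sub_cancel_left, conj_e]
    have he : e n (j * (a + r)) = e n (j * a) * e n (j * r) := by
      rw [mul_add, e_add]
    have h1 : e n (-(j * a)) * e n (j * a) = 1 := by
      rw [← e_add]; simp [e_zero]
    rw [he]
    linear_combination z r * e n (j * r) * h1
  rw [Finset.sum_congr rfl (fun a _ => step a), Finset.sum_const, Finset.card_univ,
    Fintype.card_fin, nsmul_eq_mul]

lemma quad_eval_rev (t : Fin n → ℝ) (x : Fin n → ℂ) :
    (∑ a : Fin n, ∑ b : Fin n, (starRingEnd ℂ) (x a) *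
        ((fun r => ∑ m : Fin n, (t m : ℂ) * e n (m * r)) (b - a) * x b))
      = ∑ m : Fin n, (t m : ℂ) *
          ((starRingEnd ℂ) (∑ k : Fin n, x k * e n (m * k)) *
            (∑ k : Fin n, x k * e n (m * k))) := by
  have expand : ∀ a b : Fin n, (starRingEnd ℂ) (x a) *
      ((∑ m : Fin n, (t m : ℂ) * e n (m * (b - a))) * x b)
        = ∑ m : Fin n, (t m : ℂ) *
            (((starRingEnd ℂ) (x a) * e n (-(m * a))) * (x b * e n (m * b))) := by
    intro a b
    rw [Finset.sum_mul, Finset.mul_sum]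
    apply Finset.sum_congr rfl
    intro m _
    have he : e n (m * (b - a)) = e n (m * b) * e n (-(m * a)) := by
      rw [← e_add]; congr 1; open Fin.CommRing in ring
    rw [he]; ring
  simp only [expand]
  have h1 : ∀ F : Fin n → Fin n → Fin n → ℂ,
      (∑ a : Fin n, ∑ b : Fin n, ∑ m : Fin n, F a b m)
        = ∑ m : Fin n, ∑ a : Fin n, ∑ b : Fin n, F a b m := fun F =>
    (Finset.sum_congr rfl fun a _ => Finset.sum_comm).trans Finset.sum_comm
  rw [h1]
  apply Finset.sum_congr rfl
  intro m _
  have hc : (starRingEnd ℂ) (∑ k : Fin n, x k * e n (m * k))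
      = ∑ a : Fin n, (starRingEnd ℂ) (x a) * e n (-(m * a)) := by
    rw [map_sum]
    exact Finset.sum_congr rfl fun a _ => by rw [map_mul, conj_e]
  rw [hc, Finset.sum_mul_sum, Finset.mul_sum]
  apply Finset.sum_congr rfl
  intro a _
  rw [Finset.mul_sum]

lemma forward_mem (h1n : 1 < n) (z : Fin n → ℂ)
    (hpsd : (circulantMatrix z).PosSemidef) (hz0 : z 0 = 1) :
    z 1 ∈ rootsOfUnityHull n := by
  set lam : Fin n → ℂ := fun j => ∑ r : Fin n, z r * e n (j * r) with hlam
  have hnn : ∀ j, 0 ≤ lam j := by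
    intro j
    have h := hpsd.dotProduct_mulVec_nonneg (fun k => e n (j * k))
    rw [quad_circ, quad_eval] at h
    have h' : (0:ℂ) ≤ (n:ℂ) * lam j := h
    have hnR : (0:ℝ) < (n:ℝ) := by
      have : 0 < n := by omega
      exact_mod_cast this
    rw [Complex.le_def] at h' ⊢
    simp only [Complex.mul_re, Complex.mul_im, Complex.natCast_re, Complex.natCast_im,
      Complex.zero_re, Complex.zero_im, zero_mul, mul_zero, sub_zero, add_zero,
      zero_add] at h' ⊢
    obtain ⟨ha, hb⟩ := h'
    constructor
    · nlinarith
    · rcases mul_eq_zero.mp hb.symm with h0 | h0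
      · exact absurd h0 (ne_of_gt hnR)
      · exact h0.symm
  have hre : ∀ j, lam j = ((lam j).re : ℂ) := by
    intro j
    have h := hnn j; rw [Complex.le_def] at h
    exact Complex.ext rfl (by simp [← h.2])
  have hrenn : ∀ j, 0 ≤ (lam j).re := fun j => by
    have h := hnn j; rw [Complex.le_def] at h; simpa using h.1
  have hsum : ∑ j : Fin n, lam j = n := by
    rw [hlam]
    calc (∑ j : Fin n, ∑ r : Fin n, z r * e n (j * r))
        = ∑ r : Fin n, ∑ j : Fin n, z r * e n (j * r) := Finset.sum_comm
      _ = ∑ r : Fin n, z r * ∑ j : Fin n, e n (j * r) := by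
          simp [Finset.mul_sum]
      _ = ∑ r : Fin n, z r * (if r = 0 then (n:ℂ) else 0) := by
          simp only [sum_e_mul h1n]
      _ = n := by
          simp only [mul_ite, mul_zero, Finset.sum_ite_eq', Finset.mem_univ, if_true]
          rw [hz0, one_mul]
  have hz1rep : ∑ j : Fin n, lam j * e n (-j) = n * z 1 := by
    calc (∑ j : Fin n, lam j * e n (-j))
        = ∑ j : Fin n, ∑ r : Fin n, z r * e n (j * (r - 1)) := by
          apply Finset.sum_congr rfl; intro j _
          rw [hlam, Finset.sum_mul]
          apply Finset.sum_congr rfl; intro r _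
          rw [mul_assoc, ← e_add]
          congr 2
          open Fin.CommRing in ring
      _ = ∑ r : Fin n, ∑ j : Fin n, z r * e n (j * (r - 1)) := Finset.sum_comm
      _ = ∑ r : Fin n, (if r = 1 then z r * (n:ℂ) else 0) := by
          simp only [← Finset.mul_sum, sum_e_mul h1n, mul_ite, mul_zero, sub_eq_zero]
      _ = n * z 1 := by
          simp only [Finset.sum_ite_eq', Finset.mem_univ, if_true]
          ring
  have hresum : ∑ j : Fin n, (lam j).re = n := by
    have h := congrArg Complex.re hsum
    simpa [Complex.re_sum] using h
  have key : z 1 = ∑ j : Fin n, ((lam j).re / n) • e n (-j) := by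
    have hstep : (∑ j : Fin n, ((lam j).re / n) • e n (-j))
        = ((n:ℝ)⁻¹ : ℂ) * ∑ j : Fin n, lam j * e n (-j) := by
      rw [Finset.mul_sum]
      apply Finset.sum_congr rfl; intro j _
      rw [Complex.real_smul]
      rw [hre j]
      push_cast
      simp only [Complex.ofReal_re]
      ring
    rw [hstep, hz1rep]
    have hn0 : (n:ℂ) ≠ 0 := by
      exact_mod_cast Nat.cast_ne_zero.mpr (by omega)
    push_cast
    field_simp
  rw [rootsOfUnityHull, key]
  refine Convex.sum_mem (convex_convexHull ℝ _) ?_ ?_ ?_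
  · intro j _
    exact div_nonneg (hrenn j) (by positivity)
  · rw [← Finset.sum_div, hresum]
    field_simp
  · intro j _
    exact subset_convexHull ℝ _ ⟨-j, rfl⟩

/-- Reverse: from convex weights on roots of unity, build a PSD circulant. -/
lemma reverse_dir (t : Fin n → ℝ) (ht0 : ∀ m, 0 ≤ t m)
    (ht1 : ∑ m : Fin n, t m = 1) :
    ∃ H : Matrix (Fin n) (Fin n) ℂ, IsCirculant H ∧ H.PosSemidef ∧
      (∀ i, H i i = 1) ∧
      (∀ c : Fin n, H 0 c = ∑ m : Fin n, (t m : ℂ) * e n (m * c)) := by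
  set Z : Fin n → ℂ := fun r => ∑ m : Fin n, (t m : ℂ) * e n (m * r) with hZ
  have hconjZ : ∀ a : Fin n, (starRingEnd ℂ) (Z a) = Z (-a) := by
    intro a
    rw [hZ]
    simp only [map_sum, map_mul, Complex.conj_ofReal, conj_e]
    apply Finset.sum_congr rfl
    intro m _
    congr 2
    open Fin.CommRing in ring
  refine ⟨circulantMatrix Z, ⟨Z, rfl⟩, Matrix.PosSemidef.of_dotProduct_mulVec_nonneg ?_ ?_, ?_, ?_⟩
  · ext j k
    rw [Matrix.conjTranspose_apply]
    show (starRingEnd ℂ) (Z (j - k)) = Z (k - j)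
    rw [hconjZ, neg_sub]
  · intro x
    rw [quad_circ]
    rw [show (∑ a : Fin n, ∑ b : Fin n, (starRingEnd ℂ) (x a) * (Z (b - a) * x b))
        = ∑ m : Fin n, (t m : ℂ) *
            ((starRingEnd ℂ) (∑ k : Fin n, x k * e n (m * k)) *
              (∑ k : Fin n, x k * e n (m * k))) from quad_eval_rev t x]
    apply Finset.sum_nonneg
    intro m _
    set S := ∑ k : Fin n, x k * e n (m * k)
    have hS : (starRingEnd ℂ) S * S = (Complex.normSq S : ℂ) := by
      rw [mul_comm, Complex.mul_conj]
    rw [hS, ← Complex.ofReal_mul, Complex.zero_le_real]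
    exact mul_nonneg (ht0 m) (Complex.normSq_nonneg S)
  · intro i
    show Z (i - i) = 1
    rw [sub_self, hZ]
    simp only [mul_zero, e_zero, mul_one]
    rw [← Complex.ofReal_sum, ht1, Complex.ofReal_one]
  · intro c
    show Z (c - 0) = _
    rw [sub_zero, hZ]

end BnAux

/-- For `n ≥ 3`, the set `ℬ_n|circ` of cyclic products `∏_k H_{k,k+1}` of positive
semidefinite circulant matrices with unit diagonal is the image of `𝒫_n` under the
`n`th power map. -/
theorem Bn_circ_eq_power_image_of_polygon {n : ℕ} (hn : 3 ≤ n) :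
    {p : ℂ | ∃ H : Matrix (Fin n) (Fin n) ℂ, IsCirculant H ∧ H.PosSemidef ∧
        (∀ i, H i i = 1) ∧ p = ∏ k : Fin n, H k (k + ⟨1, by omega⟩)} =
      (fun w : ℂ => w ^ n) '' rootsOfUnityHull n := by
  haveI : NeZero n := ⟨by omega⟩
  have h1n : 1 < n := by omega
  have hone : (⟨1, by omega⟩ : Fin n) = 1 := by
    apply Fin.ext
    show 1 = (1 : Fin n).val
    rw [Fin.val_one', Nat.mod_eq_of_lt (by omega)]
  classical
  ext p
  simp only [Set.mem_setOf_eq, Set.mem_image]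
  constructor
  · rintro ⟨H, ⟨z, rfl⟩, hpsd, hdiag, rfl⟩
    have hz0 : z 0 = 1 := by
      have h := hdiag 0
      simpa [circulantMatrix, sub_self] using h
    refine ⟨z 1, BnAux.forward_mem h1n z hpsd hz0, ?_⟩
    rw [hone]
    have hprod : ∀ k : Fin n, circulantMatrix z k (k + 1) = z 1 := fun k => by
      show z ((k + 1) - k) = z 1
      rw [add_sub_cancel_left]
    rw [Finset.prod_congr rfl (fun k _ => hprod k), Finset.prod_const,
      Finset.card_univ, Fintype.card_fin]
  · rintro ⟨w, hw, rfl⟩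
    rw [rootsOfUnityHull, convexHull_eq] at hw
    obtain ⟨ι, s, wt, pts, hw0, hw1, hmem, hx⟩ := hw
    have hx' : ∑ i ∈ s, wt i • pts i = w := by
      rw [← Finset.centerMass_eq_of_sum_1 s pts hw1]; exact hx
    set f : Fin n → ℂ := fun k => primRoot n ^ (k : ℕ) with hf
    set g : ι → Fin n := fun i => if h : ∃ k : Fin n, f k = pts i then h.choose else 0
      with hgdef
    have hg : ∀ i ∈ s, f (g i) = pts i := by
      intro i hi
      have h : ∃ k : Fin n, f k = pts i := hmem i hi
      simp only [hgdef, dif_pos h]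
      exact h.choose_spec
    set t : Fin n → ℝ := fun m => ∑ i ∈ s.filter (fun i => g i = m), wt i with htdef
    have ht0 : ∀ m, 0 ≤ t m := fun m =>
      Finset.sum_nonneg fun i hi => hw0 i (Finset.mem_filter.mp hi).1
    have ht1 : ∑ m : Fin n, t m = 1 := (Finset.sum_fiberwise s g wt).trans hw1
    have htw : ∑ m : Fin n, t m • f m = w := by
      calc ∑ m : Fin n, t m • f m
          = ∑ m : Fin n, ∑ i ∈ s.filter (fun i => g i = m), wt i • pts i := by
            apply Finset.sum_congr rfl; intro m _
            rw [htdef, Finset.sum_smul]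
            apply Finset.sum_congr rfl; intro i hi
            obtain ⟨his, hgi⟩ := Finset.mem_filter.mp hi
            rw [← hg i his, hgi]
        _ = ∑ i ∈ s, wt i • pts i := Finset.sum_fiberwise s g _
        _ = w := hx'
    obtain ⟨H, hC, hpsd, hdiag, hrow⟩ := BnAux.reverse_dir t ht0 ht1
    refine ⟨H, hC, hpsd, hdiag, ?_⟩
    obtain ⟨z, rfl⟩ := hC
    have hz1 : z 1 = w := by
      have h01 : circulantMatrix z 0 1 = z 1 := by
        show z (1 - 0) = z 1; rw [sub_zero]
      have h := hrow 1
      rw [h01] at h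
      rw [h, ← htw]
      apply Finset.sum_congr rfl
      intro m _
      rw [mul_one, Complex.real_smul]
      rfl
    rw [hone]
    have hprod : ∀ k : Fin n, circulantMatrix z k (k + 1) = z 1 := fun k => by
      show z ((k + 1) - k) = z 1
      rw [add_sub_cancel_left]
    rw [Finset.prod_congr rfl (fun k _ => hprod k), Finset.prod_const,
      Finset.card_univ, Fintype.card_fin, hz1]
end

section
/- For every integer n ≥ 3, the topological boundary (frontier) in ℂ of the set {wⁿ : w ∈ 𝒫_n} equals the curve {(t + (1−t) ω_n)ⁿ : t ∈ [0,1]}. -/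
open Complex Set Real

namespace Poly

variable {n : ℕ}

/-- The sector `K` of angle `2π/n` at the origin. -/
def Ksec (n : ℕ) : Set ℂ :=
  {w | 0 ≤ w.im ∧ ((starRingEnd ℂ) (primRoot n) * w).im ≤ 0}

/-- parametrization of the edge from `1` to `ω`. -/
noncomputable def pseg (n : ℕ) (t : ℝ) : ℂ := (t : ℂ) + (1 - (t : ℂ)) * primRoot n

lemma primRoot_eq (n : ℕ) :
    primRoot n = Complex.exp (((2 * Real.pi / n : ℝ) : ℂ) * Complex.I) := by
  unfold primRoot
  congr 1
  push_cast
  ring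

lemma primRoot_re (n : ℕ) : (primRoot n).re = Real.cos (2 * Real.pi / n) := by
  rw [primRoot_eq, Complex.exp_ofReal_mul_I_re]

lemma primRoot_im (n : ℕ) : (primRoot n).im = Real.sin (2 * Real.pi / n) := by
  rw [primRoot_eq, Complex.exp_ofReal_mul_I_im]

lemma alpha_pos (hn : 3 ≤ n) : 0 < 2 * Real.pi / n := by
  have : (0:ℝ) < n := by positivity
  positivity

lemma alpha_lt_pi (hn : 3 ≤ n) : 2 * Real.pi / n < Real.pi := by
  have hn' : (3:ℝ) ≤ n := by exact_mod_cast hn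
  rw [div_lt_iff₀ (by linarith)]
  nlinarith [Real.pi_pos]

lemma sinA_pos (hn : 3 ≤ n) : 0 < Real.sin (2 * Real.pi / n) :=
  Real.sin_pos_of_pos_of_lt_pi (alpha_pos hn) (alpha_lt_pi hn)

lemma cosA_gt (hn : 3 ≤ n) : -1 < Real.cos (2 * Real.pi / n) := by
  nlinarith [sinA_pos hn, Real.sin_sq_add_cos_sq (2 * Real.pi / n)]

lemma one_add_cosA_pos (hn : 3 ≤ n) : 0 < 1 + Real.cos (2 * Real.pi / n) := by
  linarith [cosA_gt hn]

lemma primRoot_pow (hn : n ≠ 0) : primRoot n ^ n = 1 :=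
  (Complex.isPrimitiveRoot_exp n hn).pow_eq_one

lemma isPrim (hn : n ≠ 0) : IsPrimitiveRoot (primRoot n) n :=
  Complex.isPrimitiveRoot_exp n hn

lemma conj_mul_primRoot (hn : 3 ≤ n) :
    (starRingEnd ℂ) (primRoot n) * primRoot n = 1 := by
  rw [Complex.conj_mul']
  have : ‖primRoot n‖ = 1 := by
    rw [primRoot_eq, Complex.norm_exp]
    simp
  rw [this]
  norm_num

/-- The affine functional whose level set `= 1 + cos α` is the line through `1` and `ω`. -/
noncomputable def phi (n : ℕ) (w : ℂ) : ℝ :=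
  (w * (starRingEnd ℂ) (1 + primRoot n)).re

lemma conjRoot_re (n : ℕ) :
    ((starRingEnd ℂ) (primRoot n)).re = Real.cos (2 * Real.pi / n) := by
  simp [primRoot_re]

lemma conjRoot_im (n : ℕ) :
    ((starRingEnd ℂ) (primRoot n)).im = -Real.sin (2 * Real.pi / n) := by
  simp [primRoot_im]

lemma conj_mul_im (n : ℕ) (w : ℂ) :
    ((starRingEnd ℂ) (primRoot n) * w).im
      = Real.cos (2 * Real.pi / n) * w.im - Real.sin (2 * Real.pi / n) * w.re := by
  rw [Complex.mul_im, conjRoot_re, conjRoot_im]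
  ring

lemma mem_Ksec_iff (n : ℕ) (w : ℂ) :
    w ∈ Ksec n ↔ 0 ≤ w.im ∧
      Real.cos (2 * Real.pi / n) * w.im - Real.sin (2 * Real.pi / n) * w.re ≤ 0 := by
  unfold Ksec
  rw [Set.mem_setOf_eq, conj_mul_im]

lemma pseg_re (n : ℕ) (t : ℝ) :
    (pseg n t).re = t + (1 - t) * Real.cos (2 * Real.pi / n) := by
  simp [pseg, primRoot_re]

lemma pseg_im (n : ℕ) (t : ℝ) :
    (pseg n t).im = (1 - t) * Real.sin (2 * Real.pi / n) := by
  simp [pseg, primRoot_im]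

lemma phi_def (n : ℕ) (w : ℂ) :
    phi n w = w.re * (1 + Real.cos (2 * Real.pi / n))
      + w.im * Real.sin (2 * Real.pi / n) := by
  unfold phi
  rw [Complex.mul_re]
  simp [primRoot_re, primRoot_im]
  try ring

/-- membership of scaled points in the sector. -/
lemma Ksec_smul {w : ℂ} (hw : w ∈ Ksec n) {s : ℝ} (hs : 0 ≤ s) :
    (s : ℂ) * w ∈ Ksec n := by
  rw [mem_Ksec_iff] at hw ⊢
  simp only [Complex.mul_im, Complex.mul_re, Complex.ofReal_re, Complex.ofReal_im]
  constructor
  · nlinarith [hw.1]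
  · nlinarith [hw.2]

lemma pseg_mem_Ksec (hn : 3 ≤ n) {t : ℝ} (ht : t ∈ Set.Icc (0:ℝ) 1) :
    pseg n t ∈ Ksec n := by
  obtain ⟨h0, h1⟩ := ht
  have hS := sinA_pos hn
  rw [mem_Ksec_iff, pseg_re, pseg_im]
  constructor
  · nlinarith
  · nlinarith [Real.sin_sq_add_cos_sq (2 * Real.pi / n)]

lemma phi_pseg (hn : 3 ≤ n) (t : ℝ) :
    phi n (pseg n t) = 1 + Real.cos (2 * Real.pi / n) := by
  have hpy := Real.sin_sq_add_cos_sq (2 * Real.pi / n)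
  rw [phi_def, pseg_re, pseg_im]
  linear_combination (1 - t) * hpy

lemma phi_smul (n : ℕ) (s : ℝ) (w : ℂ) : phi n ((s:ℂ) * w) = s * phi n w := by
  rw [phi_def, phi_def]
  simp only [Complex.mul_re, Complex.mul_im, Complex.ofReal_re, Complex.ofReal_im]
  ring

/-- On the sector, the functional `phi` is positive away from `0`. -/
lemma phi_pos (hn : 3 ≤ n) {w : ℂ} (hw : w ∈ Ksec n) (hw0 : w ≠ 0) :
    0 < phi n w := by
  rw [mem_Ksec_iff] at hw
  obtain ⟨hy, hsec⟩ := hw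
  have hS := sinA_pos hn
  have hC := one_add_cosA_pos hn
  rw [phi_def]
  set C := Real.cos (2 * Real.pi / n)
  set S := Real.sin (2 * Real.pi / n)
  rcases lt_or_eq_of_le hy with hy' | hy'
  · -- y > 0 : S * goal ≥ y * (1 + C) > 0
    nlinarith [Real.sin_sq_add_cos_sq (2 * Real.pi / n)]
  · -- y = 0 : then x > 0
    have hx : 0 ≤ w.re := by nlinarith
    have hx0 : w.re ≠ 0 := by
      intro h
      exact hw0 (Complex.ext (by simp [h]) (by simp [← hy']))
    nlinarith [lt_of_le_of_ne hx (Ne.symm hx0)]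

/-- Points on the line `phi = 1 + cos α` inside the sector are on the edge. -/
lemma line_param (hn : 3 ≤ n) {w : ℂ} (hw : w ∈ Ksec n)
    (hline : phi n w = 1 + Real.cos (2 * Real.pi / n)) :
    ∃ t ∈ Set.Icc (0:ℝ) 1, w = pseg n t := by
  rw [mem_Ksec_iff] at hw
  obtain ⟨hy, hsec⟩ := hw
  have hS := sinA_pos hn
  have hC := one_add_cosA_pos hn
  rw [phi_def] at hline
  have hpy := Real.sin_sq_add_cos_sq (2 * Real.pi / n)
  set C := Real.cos (2 * Real.pi / n) with hCdef
  set S := Real.sin (2 * Real.pi / n) with hSdef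
  set x := w.re with hxdef
  set y := w.im with hydef
  refine ⟨1 - y / S, ?_, ?_⟩
  · constructor
    · -- 0 ≤ 1 - y/S ⟺ y ≤ S
      rw [sub_nonneg, div_le_one hS]
      nlinarith
    · rw [sub_le_self_iff]
      positivity
  · apply Complex.ext
    · rw [pseg_re]
      field_simp
      nlinarith
    · rw [pseg_im]
      field_simp
      rw [hSdef, hydef]; ring

/-- Every nonzero point of the sector is a positive multiple of an edge point. -/
lemma cone_repr (hn : 3 ≤ n) {w : ℂ} (hw : w ∈ Ksec n) (hw0 : w ≠ 0) :
    ∃ s : ℝ, 0 < s ∧ s * (1 + Real.cos (2 * Real.pi / n)) = phi n w ∧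
      ∃ t ∈ Set.Icc (0:ℝ) 1, w = (s : ℂ) * pseg n t := by
  have hC := one_add_cosA_pos hn
  have hφ := phi_pos hn hw hw0
  set s : ℝ := phi n w / (1 + Real.cos (2 * Real.pi / n)) with hsdef
  have hs : 0 < s := by positivity
  refine ⟨s, hs, by rw [hsdef]; field_simp, ?_⟩
  have hv : ((s⁻¹ : ℝ) : ℂ) * w ∈ Ksec n := Ksec_smul hw (inv_pos.mpr hs).le
  have hline : phi n (((s⁻¹ : ℝ) : ℂ) * w) = 1 + Real.cos (2 * Real.pi / n) := by
    rw [phi_smul, hsdef]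
    field_simp
  obtain ⟨t, ht, hteq⟩ := line_param hn hv hline
  refine ⟨t, ht, ?_⟩
  rw [← hteq]
  have hs0 : (s : ℂ) ≠ 0 := by exact_mod_cast ne_of_gt hs
  push_cast
  field_simp

/-- Points of the sector below the edge line lie in the cone over the edge. -/
lemma cone_repr' (hn : 3 ≤ n) {w : ℂ} (hw : w ∈ Ksec n)
    (hb : phi n w ≤ 1 + Real.cos (2 * Real.pi / n)) :
    ∃ s ∈ Set.Icc (0:ℝ) 1, ∃ t ∈ Set.Icc (0:ℝ) 1, w = (s : ℂ) * pseg n t := by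
  by_cases hw0 : w = 0
  · exact ⟨0, by norm_num, 0, by norm_num, by simp [hw0]⟩
  · obtain ⟨s, hs, hsphi, t, ht, hteq⟩ := cone_repr hn hw hw0
    have hC := one_add_cosA_pos hn
    refine ⟨s, ⟨le_of_lt hs, ?_⟩, t, ht, hteq⟩
    nlinarith

lemma sum_roots (hn : 3 ≤ n) : ∑ i ∈ Finset.range n, primRoot n ^ i = 0 :=
  (isPrim (by omega)).geom_sum_eq_zero (by omega)

lemma vertex_mem (hn : 3 ≤ n) (k : ℕ) : primRoot n ^ k ∈ rootsOfUnityHull n := by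
  apply subset_convexHull
  exact ⟨⟨k % n, Nat.mod_lt _ (by omega)⟩, by
    simp only
    rw [← pow_eq_pow_mod k (primRoot_pow (n := n) (by omega))]⟩

lemma zero_mem (hn : 3 ≤ n) : (0 : ℂ) ∈ rootsOfUnityHull n := by
  have h := Finset.centerMass_mem_convexHull (R := ℝ) (E := ℂ)
    (Finset.univ : Finset (Fin n)) (w := fun _ => (1:ℝ))
    (fun i _ => zero_le_one) (by simp; positivity)
    (z := fun k : Fin n => primRoot n ^ (k : ℕ)) (fun i _ => Set.mem_range_self i)
  have hc : (Finset.univ : Finset (Fin n)).centerMass (fun _ => (1:ℝ))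
      (fun k : Fin n => primRoot n ^ (k : ℕ)) = 0 := by
    rw [Finset.centerMass]
    simp only [one_smul]
    rw [Fin.sum_univ_eq_sum_range (fun k => primRoot n ^ k), sum_roots hn]
    simp
  rwa [hc] at h

/-- The cone over the edge is inside the polygon. -/
lemma cone_subset_hull (hn : 3 ≤ n) {s t : ℝ} (hs : s ∈ Set.Icc (0:ℝ) 1)
    (ht : t ∈ Set.Icc (0:ℝ) 1) : (s : ℂ) * pseg n t ∈ rootsOfUnityHull n := by
  have hconv : Convex ℝ (rootsOfUnityHull n) := convex_convexHull ℝ _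
  have h1 : (1 : ℂ) ∈ rootsOfUnityHull n := by simpa using vertex_mem hn 0
  have hω : primRoot n ∈ rootsOfUnityHull n := by simpa using vertex_mem hn 1
  have hseg : pseg n t ∈ rootsOfUnityHull n := by
    have := hconv h1 hω ht.1 (by linarith [ht.2] : 0 ≤ 1 - t) (by ring)
    simpa [pseg, smul_eq_mul] using this
  have := hconv hseg (zero_mem hn) hs.1 (by linarith [hs.2] : 0 ≤ 1 - s) (by ring)
  simpa [smul_eq_mul] using this

lemma primRoot_pow_re (n : ℕ) (m : ℕ) :
    ((primRoot n) ^ m).re = Real.cos (2 * Real.pi * m / n) := by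
  rw [primRoot_eq, ← Complex.exp_nat_mul]
  have h : (m : ℂ) * (((2 * Real.pi / n : ℝ) : ℂ) * Complex.I)
      = ((2 * Real.pi * m / n : ℝ) : ℂ) * Complex.I := by push_cast; ring
  rw [h, Complex.exp_ofReal_mul_I_re]

lemma primRoot_pow_im (n : ℕ) (m : ℕ) :
    ((primRoot n) ^ m).im = Real.sin (2 * Real.pi * m / n) := by
  rw [primRoot_eq, ← Complex.exp_nat_mul]
  have h : (m : ℂ) * (((2 * Real.pi / n : ℝ) : ℂ) * Complex.I)
      = ((2 * Real.pi * m / n : ℝ) : ℂ) * Complex.I := by push_cast; ring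
  rw [h, Complex.exp_ofReal_mul_I_im]

lemma cosB_pos (hn : 3 ≤ n) : 0 < Real.cos (Real.pi / n) := by
  have hn' : (3:ℝ) ≤ n := by exact_mod_cast hn
  apply Real.cos_pos_of_mem_Ioo
  constructor
  · have : 0 < Real.pi / n := by positivity
    linarith [Real.pi_pos]
  · rw [div_lt_div_iff₀ (by positivity) (by norm_num)]
    nlinarith [Real.pi_pos]

/-- The vertices lie in the half-plane `phi ≤ 1 + cos α`. -/
lemma phi_vertex_le (hn : 3 ≤ n) (m : ℕ) :
    phi n (primRoot n ^ m) ≤ 1 + Real.cos (2 * Real.pi / n) := by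
  rw [pow_eq_pow_mod m (primRoot_pow (n := n) (by omega))]
  set m' := m % n with hm'
  have hmn : m' < n := Nat.mod_lt _ (by omega)
  have hn0 : (0:ℝ) < n := by positivity
  rcases Nat.eq_zero_or_pos m' with h0 | h1
  · rw [h0]
    rw [phi_def]
    norm_num
  · rw [phi_def, primRoot_pow_re, primRoot_pow_im]
    have e1 : 2 * Real.pi * m' / n = 2 * (m' * Real.pi / n) := by ring
    have e2 : 2 * Real.pi / n = 2 * (Real.pi / n) := by ring
    rw [e1, e2, Real.cos_two_mul', Real.cos_two_mul', Real.sin_two_mul, Real.sin_two_mul]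
    set a := Real.sin (m' * Real.pi / n)
    set b := Real.cos (m' * Real.pi / n)
    set u := Real.sin (Real.pi / n)
    set v := Real.cos (Real.pi / n)
    have hab : a ^ 2 + b ^ 2 = 1 := Real.sin_sq_add_cos_sq _
    have huv : u ^ 2 + v ^ 2 = 1 := Real.sin_sq_add_cos_sq _
    have ha : 0 ≤ a := by
      apply Real.sin_nonneg_of_nonneg_of_le_pi
      · positivity
      · rw [div_le_iff₀ hn0]
        have : (m' : ℝ) ≤ n := by exact_mod_cast hmn.le
        nlinarith [Real.pi_pos]
    have hv : 0 < v := cosB_pos hn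
    have hd : 0 ≤ a * v - b * u := by
      have h1' : (1:ℝ) ≤ m' := by exact_mod_cast h1
      have hle : (m' : ℝ) ≤ n := by exact_mod_cast hmn.le
      have := Real.sin_nonneg_of_nonneg_of_le_pi
        (x := m' * Real.pi / n - Real.pi / n)
        (by rw [sub_nonneg, div_le_div_iff₀ hn0 hn0]
            nlinarith [mul_nonneg (mul_nonneg (sub_nonneg.mpr h1') Real.pi_pos.le) hn0.le])
        (by have hb : (m':ℝ) * Real.pi / n ≤ Real.pi := by
              rw [div_le_iff₀ hn0]; nlinarith [Real.pi_pos]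
            have hnn : 0 ≤ Real.pi / n := by positivity
            linarith)
      rwa [Real.sin_sub] at this
    nlinarith [mul_nonneg (mul_nonneg ha hv.le) hd]

/-- The polygon is contained in the half-plane `phi ≤ 1 + cos α`. -/
lemma hull_phi_le (hn : 3 ≤ n) {z : ℂ} (hz : z ∈ rootsOfUnityHull n) :
    phi n z ≤ 1 + Real.cos (2 * Real.pi / n) := by
  have hlin : IsLinearMap ℝ (phi n) := by
    constructor
    · intro x y; simp only [phi_def, Complex.add_re, Complex.add_im]; ring
    · intro c x
      simp only [phi_def, Complex.real_smul, Complex.mul_re, Complex.mul_im,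
        Complex.ofReal_re, Complex.ofReal_im, smul_eq_mul]
      ring
  have : rootsOfUnityHull n ⊆ {z | phi n z ≤ 1 + Real.cos (2 * Real.pi / n)} := by
    apply convexHull_min
    · rintro w ⟨k, rfl⟩
      exact phi_vertex_le hn _
    · exact convex_halfSpace_le hlin _
  exact this hz

lemma conj_eq_pow (hn : 3 ≤ n) :
    (starRingEnd ℂ) (primRoot n) = primRoot n ^ (n - 1) := by
  have hω0 : primRoot n ≠ 0 := by
    intro h
    have := conj_mul_primRoot hn
    rw [h] at this
    simp at this
  have h2 : primRoot n ^ (n - 1) * primRoot n = 1 := by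
    rw [← pow_succ]
    have : n - 1 + 1 = n := by omega
    rw [this, primRoot_pow (by omega)]
  have h3 := conj_mul_primRoot hn
  exact mul_right_cancel₀ hω0 (by rw [h3, h2])

lemma conj_mul_mem_hull (hn : 3 ≤ n) {z : ℂ} (hz : z ∈ rootsOfUnityHull n) :
    (starRingEnd ℂ) (primRoot n) * z ∈ rootsOfUnityHull n := by
  set c := (starRingEnd ℂ) (primRoot n) with hc
  set V := Set.range fun k : Fin n => primRoot n ^ (k : ℕ) with hV
  have himg : (fun w => c * w) '' V ⊆ V := by
    rintro w ⟨v, ⟨k, rfl⟩, rfl⟩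
    refine ⟨⟨(n - 1 + (k : ℕ)) % n, Nat.mod_lt _ (by omega)⟩, ?_⟩
    simp only
    rw [← pow_eq_pow_mod _ (primRoot_pow (n := n) (by omega)), pow_add, ← conj_eq_pow hn]
  have hmap : (fun w => c * w) '' (convexHull ℝ V) = convexHull ℝ ((fun w => c * w) '' V) := by
    exact (LinearMap.mulLeft ℝ c).toAffineMap.image_convexHull V
  have : c * z ∈ (fun w => c * w) '' (convexHull ℝ V) := ⟨z, hz, rfl⟩
  rw [hmap] at this
  exact convexHull_min (Set.Subset.trans himg (subset_convexHull ℝ V)) (convex_convexHull ℝ V) this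

lemma conj_pow_mul_mem_hull (hn : 3 ≤ n) (k : ℕ) {z : ℂ} (hz : z ∈ rootsOfUnityHull n) :
    ((starRingEnd ℂ) (primRoot n)) ^ k * z ∈ rootsOfUnityHull n := by
  induction k with
  | zero => simpa using hz
  | succ k ih =>
      have := conj_mul_mem_hull hn ih
      rw [← mul_assoc, ← pow_succ'] at this
      exact this

/-- The rotated sectors cover the plane. -/
lemma sector_covering (hn : 3 ≤ n) (z : ℂ) :
    ∃ k < n, ((starRingEnd ℂ) (primRoot n)) ^ k * z ∈ Ksec n := by
  set c := (starRingEnd ℂ) (primRoot n) with hcdef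
  have hcn : c ^ n = 1 := by
    rw [hcdef, ← map_pow, primRoot_pow (by omega : n ≠ 0), map_one]
  set g : ℕ → ℝ := fun j => (c ^ j * z).im with hgdef
  have gmod : ∀ i, g i = g (i % n) := by
    intro i
    simp only [hgdef]
    rw [← pow_eq_pow_mod i hcn]
  have hmemiff : ∀ k, (c ^ k * z ∈ Ksec n ↔ 0 ≤ g k ∧ g (k + 1) ≤ 0) := by
    intro k
    unfold Ksec
    rw [Set.mem_setOf_eq]
    have : c * (c ^ k * z) = c ^ (k + 1) * z := by rw [← mul_assoc, ← pow_succ']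
    rw [this]
  have hsum : ∑ j ∈ Finset.range n, g j = 0 := by
    have hs : ∑ j ∈ Finset.range n, c ^ j = 0 := by
      calc ∑ j ∈ Finset.range n, c ^ j
          = (starRingEnd ℂ) (∑ j ∈ Finset.range n, primRoot n ^ j) := by
            rw [map_sum]
            exact Finset.sum_congr rfl (fun j _ => (map_pow _ _ _).symm)
        _ = 0 := by rw [sum_roots hn, map_zero]
    have : ∑ j ∈ Finset.range n, g j = ((∑ j ∈ Finset.range n, c ^ j) * z).im := by
      rw [Finset.sum_mul, Complex.im_sum]
    rw [this, hs, zero_mul, Complex.zero_im]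
  by_contra hcon
  push_neg at hcon
  have Hc : ∀ k, 0 ≤ g k → 0 < g (k + 1) := by
    intro k hk
    by_contra hle
    push_neg at hle
    have hk' : k % n < n := Nat.mod_lt _ (by omega)
    apply (fun h => h ((hmemiff (k % n)).mpr ?_)) (hcon (k % n) hk')
    constructor
    · rw [← gmod]; exact hk
    · have he : g (k % n + 1) = g (k + 1) := by
        rw [gmod (k % n + 1), gmod (k + 1)]
        congr 1
        exact Nat.ModEq.add_right 1 (Nat.mod_modEq k n)
      rw [he]; exact hle
  by_cases hex : ∃ j < n, 0 ≤ g j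
  · obtain ⟨j, hj, hgj⟩ := hex
    have hpos : ∀ m, 0 < g (j + 1 + m) := by
      intro m
      induction m with
      | zero => simpa using Hc j hgj
      | succ m ih =>
          have : j + 1 + (m + 1) = (j + 1 + m) + 1 := by omega
          rw [this]
          exact Hc _ ih.le
    have hall : ∀ k < n, 0 < g k := by
      intro k hk
      have hle : (j + 1) % n ≤ n := (Nat.mod_lt _ (by omega : 0 < n)).le
      set m := n + k - (j + 1) % n with hm
      have key : g (j + 1 + m) = g k := by
        rw [gmod (j + 1 + m), gmod k]
        congr 1
        have e1 : (j + 1 + m) ≡ ((j + 1) % n + m) [MOD n] :=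
          ((Nat.mod_modEq (j + 1) n).symm.add_right m)
        have e2 : (j + 1) % n + m = n + k := by omega
        show (j + 1 + m) % n = k % n
        have e3 : (j + 1 + m) % n = (n + k) % n := by rw [← e2]; exact e1
        rw [e3, Nat.add_mod_left]
      rw [← key]
      exact hpos m
    have : 0 < ∑ j ∈ Finset.range n, g j :=
      Finset.sum_pos (fun i hi => hall i (Finset.mem_range.mp hi))
        ⟨0, Finset.mem_range.mpr (by omega)⟩
    linarith [hsum]
  · push_neg at hex
    have : ∑ j ∈ Finset.range n, g j < 0 :=
      Finset.sum_neg (fun i hi => hex i (Finset.mem_range.mp hi))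
        ⟨0, Finset.mem_range.mpr (by omega)⟩
    linarith [hsum]

lemma sinB_pos (hn : 3 ≤ n) : 0 < Real.sin (Real.pi / n) := by
  apply Real.sin_pos_of_pos_of_lt_pi
  · have : (0:ℝ) < n := by positivity
    positivity
  · have hn' : (3:ℝ) ≤ n := by exact_mod_cast hn
    rw [div_lt_iff₀ (by positivity)]
    nlinarith [Real.pi_pos]

lemma primRoot_norm (n : ℕ) : ‖primRoot n‖ = 1 := by
  rw [primRoot_eq, Complex.norm_exp]
  simp

/-- Key angular estimate: every sector point makes an angle at most `π/n` with the
bisector direction. -/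
lemma sector_dot (hn : 3 ≤ n) {w : ℂ} (hw : w ∈ Ksec n) :
    Real.cos (Real.pi / n) * ‖w‖ ≤
      w.re * Real.cos (Real.pi / n) + w.im * Real.sin (Real.pi / n) := by
  rw [mem_Ksec_iff] at hw
  obtain ⟨hy, hsec⟩ := hw
  have e2 : 2 * Real.pi / n = 2 * (Real.pi / n) := by ring
  rw [e2, Real.cos_two_mul', Real.sin_two_mul] at hsec
  have hu := sinB_pos hn
  have hv := cosB_pos hn
  set u := Real.sin (Real.pi / n)
  set v := Real.cos (Real.pi / n)
  set x := w.re
  set y := w.im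
  have hL : 0 ≤ x * v + y * u := by nlinarith
  have hw2 : ‖w‖ ^ 2 = x ^ 2 + y ^ 2 := by
    rw [Complex.sq_norm, Complex.normSq_apply]
    ring
  have hsq : (v * ‖w‖) ^ 2 ≤ (x * v + y * u) ^ 2 := by
    rw [mul_pow, hw2]
    nlinarith [mul_nonneg hy (sub_nonneg.mpr hsec)]
  have h0 : 0 ≤ v * ‖w‖ := by positivity
  nlinarith [hsq, h0, hL]

lemma cos_multiple_lt_aux (hn : 3 ≤ n) {i : ℕ} (h2 : 2 ≤ i) (hhalf : 2 * i ≤ n) :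
    Real.cos (2 * Real.pi * i / n) < Real.cos (2 * Real.pi / n) := by
  have hn0 : (0:ℝ) < n := by positivity
  apply Real.cos_lt_cos_of_nonneg_of_le_pi
  · positivity
  · rw [div_le_iff₀ hn0]
    have : (2 * i : ℝ) ≤ n := by exact_mod_cast hhalf
    nlinarith [Real.pi_pos]
  · rw [div_lt_div_iff₀ hn0 hn0]
    have hi2 : (2:ℝ) ≤ i := by exact_mod_cast h2
    have := mul_lt_mul_of_pos_right
      (mul_lt_mul_of_pos_left (show (1:ℝ) < i by linarith)
        (by positivity : (0:ℝ) < 2 * Real.pi)) hn0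
    linarith

lemma cos_multiple_lt (hn : 3 ≤ n) {i : ℕ} (h2 : 2 ≤ i) (h2' : i ≤ n - 2) :
    Real.cos (2 * Real.pi * i / n) < Real.cos (2 * Real.pi / n) := by
  rcases le_or_gt (2 * i) n with hc | hc
  · exact cos_multiple_lt_aux hn h2 hc
  · have hni : 2 ≤ n - i := by omega
    have hhalf : 2 * (n - i) ≤ n := by omega
    have key := cos_multiple_lt_aux hn hni hhalf
    have hrw : 2 * Real.pi * (n - i : ℕ) / n = 2 * Real.pi - 2 * Real.pi * i / n := by
      have hin : i ≤ n := by omega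
      rw [Nat.cast_sub hin]
      field_simp
    rw [hrw, Real.cos_two_pi_sub] at key
    exact key

noncomputable def curve (n : ℕ) (t : ℝ) : ℂ := pseg n t ^ n

lemma pseg_ne_zero (hn : 3 ≤ n) (t : ℝ) : pseg n t ≠ 0 := by
  intro h
  have h1 := phi_pseg hn t
  rw [h] at h1
  have h2 : phi n 0 = 0 := by rw [phi_def]; simp
  rw [h2] at h1
  linarith [one_add_cosA_pos hn]

lemma curve_ne_zero (hn : 3 ≤ n) (t : ℝ) : curve n t ≠ 0 :=
  pow_ne_zero _ (pseg_ne_zero hn t)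

lemma real_rigid {v ρ A A' B B' cI : ℝ} (hv : 0 < v) (hρ : 0 < ρ)
    (hAB : A ^ 2 + B ^ 2 = ρ ^ 2) (hAB' : A' ^ 2 + B' ^ 2 = ρ ^ 2)
    (hA : v * ρ ≤ A) (hA' : v * ρ ≤ A')
    (hinner : A' * A + B' * B = cI * ρ ^ 2) : 2 * v ^ 2 - 1 ≤ cI := by
  have hvρ : 0 < v * ρ := mul_pos hv hρ
  have hAsq : (v * ρ) ^ 2 ≤ A ^ 2 := by nlinarith
  have hAsq' : (v * ρ) ^ 2 ≤ A' ^ 2 := by nlinarith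
  have hmain : (2 * v ^ 2 - 1) * ρ ^ 2 ≤ cI * ρ ^ 2 := by
    rw [← hinner]
    nlinarith [sq_nonneg (B + B'), mul_nonneg (sub_nonneg.mpr hA) (sub_nonneg.mpr hA'),
      mul_nonneg hvρ.le (sub_nonneg.mpr hA), mul_nonneg hvρ.le (sub_nonneg.mpr hA')]
  have hρ2 : 0 < ρ ^ 2 := by positivity
  exact le_of_mul_le_mul_right hmain hρ2

/-- the "middle sectors" estimate: if both `w` and `ω^i • w` are in the sector
with `w ≠ 0` and `2 ≤ i ≤ n-2`, we get a contradiction. -/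
lemma sector_rigid (hn : 3 ≤ n) {w : ℂ} (hw : w ∈ Ksec n) (hw0 : w ≠ 0)
    {i : ℕ} (hi2 : 2 ≤ i) (hi2' : i ≤ n - 2) (hiw : primRoot n ^ i * w ∈ Ksec n) :
    False := by
  have hρ : 0 < ‖w‖ := norm_pos_iff.mpr hw0
  have hnorm : ‖primRoot n ^ i * w‖ = ‖w‖ := by
    rw [norm_mul, norm_pow, primRoot_norm, one_pow, one_mul]
  have hA := sector_dot hn hw
  have hA' := sector_dot hn hiw
  rw [hnorm] at hA'
  have hu := sinB_pos hn
  have hv := cosB_pos hn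
  have huv : Real.sin (Real.pi / n) ^ 2 + Real.cos (Real.pi / n) ^ 2 = 1 :=
    Real.sin_sq_add_cos_sq _
  have h2 : ‖w‖ ^ 2 = w.re ^ 2 + w.im ^ 2 := by
    rw [Complex.sq_norm, Complex.normSq_apply]; ring
  have h2' : ‖w‖ ^ 2 = (primRoot n ^ i * w).re ^ 2 + (primRoot n ^ i * w).im ^ 2 := by
    rw [← hnorm, Complex.sq_norm, Complex.normSq_apply]; ring
  have hkey : 2 * Real.cos (Real.pi / n) ^ 2 - 1 ≤ Real.cos (2 * Real.pi * i / n) := by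
    apply real_rigid (v := Real.cos (Real.pi / n)) (ρ := ‖w‖)
      (A := w.re * Real.cos (Real.pi / n) + w.im * Real.sin (Real.pi / n))
      (A' := (primRoot n ^ i * w).re * Real.cos (Real.pi / n)
        + (primRoot n ^ i * w).im * Real.sin (Real.pi / n))
      (B := w.im * Real.cos (Real.pi / n) - w.re * Real.sin (Real.pi / n))
      (B' := (primRoot n ^ i * w).im * Real.cos (Real.pi / n)
        - (primRoot n ^ i * w).re * Real.sin (Real.pi / n))
      hv hρ ?_ ?_ hA hA' ?_
    · rw [h2]; linear_combination (w.re ^ 2 + w.im ^ 2) * huv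
    · rw [h2']
      linear_combination ((primRoot n ^ i * w).re ^ 2 + (primRoot n ^ i * w).im ^ 2) * huv
    · have hinner : (primRoot n ^ i * w).re * w.re + (primRoot n ^ i * w).im * w.im
          = Real.cos (2 * Real.pi * i / n) * ‖w‖ ^ 2 := by
        rw [Complex.mul_re, Complex.mul_im, primRoot_pow_re, primRoot_pow_im, h2]
        ring
      rw [← hinner]
      linear_combination ((primRoot n ^ i * w).re * w.re
        + (primRoot n ^ i * w).im * w.im) * huv
  have hlt := cos_multiple_lt hn hi2 hi2'
  have e2 : 2 * Real.pi / n = 2 * (Real.pi / n) := by ring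
  rw [e2, Real.cos_two_mul] at hlt
  linarith

lemma pseg_one : pseg n 1 = 1 := by
  unfold pseg
  push_cast
  ring

/-- Radial uniqueness: two positively-parallel points on the curve coincide. -/
lemma curve_parallel_unique (hn : 3 ≤ n) {t₁ t₂ : ℝ} (h1 : t₁ ∈ Set.Icc (0:ℝ) 1)
    (h2 : t₂ ∈ Set.Icc (0:ℝ) 1) {r : ℝ} (hr : 0 < r)
    (heq : curve n t₁ = (r : ℂ) * curve n t₂) : r = 1 := by
  haveI : NeZero n := ⟨by omega⟩
  have hn0 : ((n:ℝ)) ≠ 0 := by positivity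
  set c : ℝ := r ^ ((n:ℝ))⁻¹ with hcdef
  have hc : 0 < c := Real.rpow_pos_of_pos hr _
  have hcn : c ^ n = r := by
    rw [hcdef, ← Real.rpow_natCast (r ^ ((n:ℝ))⁻¹) n, ← Real.rpow_mul hr.le,
      inv_mul_cancel₀ hn0, Real.rpow_one]
  set v₂ : ℂ := (c : ℂ) * pseg n t₂ with hv₂def
  have hv₂K : v₂ ∈ Ksec n := Ksec_smul (pseg_mem_Ksec hn h2) hc.le
  have hv₂0 : v₂ ≠ 0 :=
    mul_ne_zero (by exact_mod_cast ne_of_gt hc) (pseg_ne_zero hn t₂)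
  have hpow : pseg n t₁ ^ n = v₂ ^ n := by
    rw [hv₂def, mul_pow]
    have : ((c : ℂ)) ^ n = ((r : ℝ) : ℂ) := by
      rw [← Complex.ofReal_pow, hcn]
    rw [this]
    exact heq
  have hroot : ∃ i < n, primRoot n ^ i = pseg n t₁ * v₂⁻¹ := by
    apply (isPrim (by omega : n ≠ 0)).eq_pow_of_pow_eq_one
    rw [mul_pow, inv_pow, hpow, mul_inv_cancel₀ (pow_ne_zero _ hv₂0)]
  obtain ⟨i, hi, hieq⟩ := hroot
  have hv1 : pseg n t₁ = primRoot n ^ i * v₂ := by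
    rw [hieq]
    field_simp
  have hS := sinA_pos hn
  have hCpos := one_add_cosA_pos hn
  -- final reduction `c = 1 → r = 1`
  have hfin : c = 1 → r = 1 := by
    intro h
    rw [← hcn, h, one_pow]
  rcases Nat.eq_zero_or_pos i with hi0 | hipos
  · -- i = 0 : compare with the linear functional
    rw [hi0, pow_zero, one_mul] at hv1
    have hφ : phi n (pseg n t₁) = c * phi n (pseg n t₂) := by
      rw [hv1, hv₂def, phi_smul]
    rw [phi_pseg hn, phi_pseg hn] at hφ
    apply hfin
    have hz : (1 + Real.cos (2 * Real.pi / n)) * (1 - c) = 0 := by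
      linear_combination hφ
    rcases mul_eq_zero.mp hz with h | h
    · linarith
    · linarith
  rcases eq_or_lt_of_le (show 1 ≤ i from hipos) with hi1 | hi1'
  · -- i = 1
    rw [← hi1, pow_one] at hv1
    have hv₂im : v₂.im = 0 := by
      have hge : 0 ≤ v₂.im := hv₂K.1
      have hle : ((starRingEnd ℂ) (primRoot n) * pseg n t₁).im ≤ 0 :=
        (pseg_mem_Ksec hn h1).2
      rw [hv1, ← mul_assoc, conj_mul_primRoot hn, one_mul] at hle
      linarith
    have ht₂ : t₂ = 1 := by
      rw [hv₂def, Complex.mul_im] at hv₂im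
      simp only [Complex.ofReal_re, Complex.ofReal_im, zero_mul, add_zero] at hv₂im
      rw [pseg_im] at hv₂im
      have h7 : (1 - t₂) * Real.sin (2 * Real.pi / n) = 0 := by
        rcases mul_eq_zero.mp hv₂im with h | h
        · exact absurd h (ne_of_gt hc)
        · exact h
      rcases mul_eq_zero.mp h7 with h | h
      · linarith
      · linarith
    rw [ht₂, pseg_one, mul_one] at hv₂def
    rw [hv₂def] at hv1
    have him : (pseg n t₁).im = (primRoot n * (c:ℂ)).im := by rw [hv1]
    have hre : (pseg n t₁).re = (primRoot n * (c:ℂ)).re := by rw [hv1]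
    rw [pseg_im, Complex.mul_im] at him
    rw [pseg_re, Complex.mul_re] at hre
    simp only [Complex.ofReal_re, Complex.ofReal_im, mul_zero, zero_add, add_zero,
      zero_mul, primRoot_re, primRoot_im] at him hre
    -- him : (1 - t₁) * S = S * c ; hre : t₁ + (1 - t₁) * C = C * c
    apply hfin
    nlinarith [him, hre, hS]
  -- now 2 ≤ i
  rcases le_or_gt i (n - 2) with hle2 | hgt2
  · exact absurd (hv1 ▸ pseg_mem_Ksec hn h1)
      (fun h => sector_rigid hn hv₂K hv₂0 hi1' hle2 h)
  · have hieq' : i = n - 1 := by omega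
    rw [hieq', ← conj_eq_pow hn] at hv1
    have him1 : (pseg n t₁).im = 0 := by
      have hge : 0 ≤ (pseg n t₁).im := (pseg_mem_Ksec hn h1).1
      have hle : ((starRingEnd ℂ) (primRoot n) * v₂).im ≤ 0 := hv₂K.2
      rw [← hv1] at hle
      linarith
    have ht₁ : t₁ = 1 := by
      rw [pseg_im] at him1
      nlinarith [him1, hS]
    rw [ht₁, pseg_one] at hv1
    have hv₂eq : v₂ = primRoot n := by
      have h5 : primRoot n * ((starRingEnd ℂ) (primRoot n) * v₂) = primRoot n * 1 := by
        rw [← hv1]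
      rw [← mul_assoc, mul_comm (primRoot n), conj_mul_primRoot hn, one_mul, mul_one] at h5
      exact h5
    rw [hv₂def] at hv₂eq
    have him : ((c:ℂ) * pseg n t₂).im = (primRoot n).im := by rw [hv₂eq]
    have hre : ((c:ℂ) * pseg n t₂).re = (primRoot n).re := by rw [hv₂eq]
    rw [Complex.mul_im, pseg_im] at him
    rw [Complex.mul_re, pseg_re] at hre
    simp only [Complex.ofReal_re, Complex.ofReal_im, zero_mul, add_zero, sub_zero,
      primRoot_re, primRoot_im] at him hre
    -- him : c * ((1 - t₂) * S) = S ; hre : c * (t₂ + (1 - t₂) * C) = C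
    apply hfin
    have h1t : c * (1 - t₂) = 1 := by
      have h6 : (c * (1 - t₂) - 1) * Real.sin (2 * Real.pi / n) = 0 := by
        linear_combination him
      rcases mul_eq_zero.mp h6 with h | h
      · linarith
      · linarith
    have ht₂ : t₂ = 0 := by nlinarith [h1t, hre, h2.1, hc, hCpos]
    nlinarith [h1t, ht₂]

/-- The image set, parametrized over the compact square. -/
noncomputable def Sset (n : ℕ) : Set ℂ :=
  (fun q : ℝ × ℝ => ((q.1 : ℂ)) * curve n q.2) ''
    (Set.Icc (0:ℝ) 1 ×ˢ Set.Icc (0:ℝ) 1)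

lemma mem_Sset_iff (n : ℕ) (z : ℂ) :
    z ∈ Sset n ↔ ∃ u ∈ Set.Icc (0:ℝ) 1, ∃ t ∈ Set.Icc (0:ℝ) 1,
      z = (u : ℂ) * curve n t := by
  constructor
  · rintro ⟨⟨u, t⟩, ⟨hu, ht⟩, rfl⟩
    exact ⟨u, hu, t, ht, rfl⟩
  · rintro ⟨u, hu, t, ht, rfl⟩
    exact ⟨(u, t), ⟨hu, ht⟩, rfl⟩

lemma continuous_curve (n : ℕ) : Continuous (curve n) := by
  unfold curve pseg
  fun_prop

lemma Sset_compact (n : ℕ) : IsCompact (Sset n) := by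
  apply (isCompact_Icc.prod isCompact_Icc).image
  have : Continuous fun q : ℝ × ℝ => ((q.1 : ℂ)) := by fun_prop
  exact this.mul ((continuous_curve n).comp continuous_snd)

lemma zero_mem_Sset (hn : 3 ≤ n) : (0 : ℂ) ∈ Sset n := by
  rw [mem_Sset_iff]
  exact ⟨0, by norm_num, 0, by norm_num, by simp⟩

/-- Step A : the image of the polygon under `z ^ n` is `Sset n`. -/
lemma image_eq (hn : 3 ≤ n) :
    (fun w : ℂ => w ^ n) '' rootsOfUnityHull n = Sset n := by
  apply Set.Subset.antisymm
  · rintro z ⟨w, hw, rfl⟩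
    obtain ⟨k, hk, hkK⟩ := sector_covering hn w
    have hmem : ((starRingEnd ℂ) (primRoot n)) ^ k * w ∈ rootsOfUnityHull n :=
      conj_pow_mul_mem_hull hn k hw
    have hphile : phi n (((starRingEnd ℂ) (primRoot n)) ^ k * w)
        ≤ 1 + Real.cos (2 * Real.pi / n) := hull_phi_le hn hmem
    obtain ⟨s, hs, t, ht, hrep⟩ := cone_repr' hn hkK hphile
    have hwn : (((starRingEnd ℂ) (primRoot n)) ^ k * w) ^ n = w ^ n := by
      rw [mul_pow, ← pow_mul, mul_comm k n, pow_mul, ← map_pow,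
        primRoot_pow (by omega : n ≠ 0), map_one, one_pow, one_mul]
    rw [mem_Sset_iff]
    refine ⟨s ^ n, ⟨pow_nonneg hs.1 n, pow_le_one₀ hs.1 hs.2⟩, t, ht, ?_⟩
    show w ^ n = _
    rw [← hwn, hrep, mul_pow]
    unfold curve
    push_cast
    ring
  · rintro z hz
    rw [mem_Sset_iff] at hz
    obtain ⟨u, hu, t, ht, rfl⟩ := hz
    set s : ℝ := u ^ ((n:ℝ))⁻¹ with hsdef
    have hn0 : ((n:ℝ)) ≠ 0 := by positivity
    have hs0 : 0 ≤ s := Real.rpow_nonneg hu.1 _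
    have hsn : s ^ n = u := by
      rw [hsdef, ← Real.rpow_natCast (u ^ ((n:ℝ))⁻¹) n, ← Real.rpow_mul hu.1,
        inv_mul_cancel₀ hn0, Real.rpow_one]
    have hs1 : s ≤ 1 := by
      rcases eq_or_lt_of_le hu.1 with h0 | h0
      · rw [hsdef, ← h0, Real.zero_rpow (by positivity)]
        norm_num
      · exact Real.rpow_le_one hu.1 hu.2 (by positivity)
    refine ⟨(s : ℂ) * pseg n t, cone_subset_hull hn ⟨hs0, hs1⟩ ht, ?_⟩
    simp only
    rw [mul_pow]
    unfold curve
    rw [← Complex.ofReal_pow, hsn]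

lemma primRoot_ne_zero (n : ℕ) : primRoot n ≠ 0 := by
  rw [primRoot_eq]
  exact Complex.exp_ne_zero _

/-- Radial surjectivity: every nonzero complex number is a positive multiple of a
point on the curve. -/
lemma curve_surj (hn : 3 ≤ n) {z : ℂ} (hz : z ≠ 0) :
    ∃ r : ℝ, ∃ t : ℝ, 0 < r ∧ t ∈ Set.Icc (0:ℝ) 1 ∧ z = (r : ℂ) * curve n t := by
  have hnC : ((n:ℂ)) ≠ 0 := by
    simp only [ne_eq, Nat.cast_eq_zero]
    omega
  set v : ℂ := Complex.exp (Complex.log z / n) with hvdef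
  have hvn : v ^ n = z := by
    rw [hvdef, ← Complex.exp_nat_mul]
    rw [mul_div_cancel₀ _ hnC, Complex.exp_log hz]
  have hv0 : v ≠ 0 := Complex.exp_ne_zero _
  obtain ⟨k, hk, hkK⟩ := sector_covering hn v
  have hw0 : ((starRingEnd ℂ) (primRoot n)) ^ k * v ≠ 0 := by
    apply mul_ne_zero _ hv0
    apply pow_ne_zero
    simp only [ne_eq, map_eq_zero]
    exact primRoot_ne_zero n
  obtain ⟨s, hs, _, t, ht, hrep⟩ := cone_repr hn hkK hw0
  have hwn : (((starRingEnd ℂ) (primRoot n)) ^ k * v) ^ n = z := by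
    rw [mul_pow, ← pow_mul, mul_comm k n, pow_mul, ← map_pow,
      primRoot_pow (by omega : n ≠ 0), map_one, one_pow, one_mul, hvn]
  refine ⟨s ^ n, t, pow_pos hs n, ht, ?_⟩
  rw [← hwn, hrep, mul_pow]
  unfold curve
  push_cast
  ring

/-- Points of the curve are not interior points of `Sset`. -/
lemma curve_not_interior (hn : 3 ≤ n) {t : ℝ} (ht : t ∈ Set.Icc (0:ℝ) 1) :
    curve n t ∉ interior (Sset n) := by
  have hmem : curve n t ∈ closure ((Sset n)ᶜ) := by
    rw [mem_closure_iff_seq_limit]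
    refine ⟨fun j => ((1 + 1/(j+1) : ℝ) : ℂ) * curve n t, ?_, ?_⟩
    · intro j
      simp only [Set.mem_compl_iff]
      intro hmem
      rw [mem_Sset_iff] at hmem
      obtain ⟨u, hu, t', ht', hequ⟩ := hmem
      have hlam : (1:ℝ) < 1 + 1/(j+1) := by
        have h9 : (0:ℝ) < 1/((j:ℝ)+1) := by positivity
        linarith
      have hu0 : 0 < u := by
        rcases lt_or_eq_of_le hu.1 with h | h
        · exact h
        · exfalso
          rw [← h] at hequ
          simp only [Complex.ofReal_zero, zero_mul] at hequ
          have hcz : curve n t = 0 := by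
            have hl0 : ((1 + 1/(j+1) : ℝ) : ℂ) ≠ 0 := by
              exact_mod_cast ne_of_gt (lt_trans zero_lt_one hlam)
            exact (mul_eq_zero.mp hequ).resolve_left hl0
          exact curve_ne_zero hn t hcz
      have hu0' : ((u:ℝ):ℂ) ≠ 0 := by exact_mod_cast ne_of_gt hu0
      have hratio : curve n t' = (((1 + 1/(j+1))/u : ℝ) : ℂ) * curve n t := by
        rw [eq_comm] at hequ
        push_cast
        rw [div_mul_eq_mul_div, eq_div_iff hu0', mul_comm (curve n t') _]
        rw [hequ]
        push_cast
        ring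
      have hone := curve_parallel_unique hn ht' ht
        (by positivity : (0:ℝ) < (1 + 1/(j+1))/u) hratio
      have hueq : u = 1 + 1/(j+1) := by
        rw [div_eq_one_iff_eq (ne_of_gt hu0)] at hone
        linarith [hone]
      linarith [hu.2, hlam]
    · have hb : Filter.Tendsto (fun j : ℕ => (1 + 1/(j+1) : ℝ)) Filter.atTop (nhds 1) := by
        have h1 := tendsto_one_div_add_atTop_nhds_zero_nat (𝕜 := ℝ)
        have h2 := h1.const_add (1:ℝ)
        simpa using h2
      have hc : Filter.Tendsto (fun j : ℕ => ((1 + 1/(j+1) : ℝ) : ℂ)) Filter.atTop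
          (nhds ((1:ℝ):ℂ)) := (Complex.continuous_ofReal.tendsto _).comp hb
      have h3 := hc.mul_const (curve n t)
      simpa using h3
  rw [closure_compl] at hmem
  exact hmem

/-- Strict sublevel points are interior. -/
lemma inner_mem_interior (hn : 3 ≤ n) {u t : ℝ} (hu0 : 0 ≤ u) (hu1 : u < 1)
    (ht : t ∈ Set.Icc (0:ℝ) 1) : (u : ℂ) * curve n t ∈ interior (Sset n) := by
  by_contra hni
  have hz : (u:ℂ) * curve n t ∈ closure ((Sset n)ᶜ) := by
    rw [closure_compl]
    exact hni
  obtain ⟨x, hxmem, hxtend⟩ := mem_closure_iff_seq_limit.mp hz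
  have hrep : ∀ j, ∃ r t' : ℝ, (1 < r) ∧ t' ∈ Set.Icc (0:ℝ) 1 ∧ x j = (r:ℂ) * curve n t' := by
    intro j
    have hx0 : x j ≠ 0 := fun h0 => (hxmem j) (h0 ▸ zero_mem_Sset hn)
    obtain ⟨r, t', hr, ht', heq⟩ := curve_surj hn hx0
    refine ⟨r, t', ?_, ht', heq⟩
    by_contra hle
    push_neg at hle
    exact hxmem j ((mem_Sset_iff n (x j)).mpr ⟨r, ⟨hr.le, hle⟩, t', ht', heq⟩)
  choose r τ hr hτ hxeq using hrep
  obtain ⟨ts, hts, φ, hφ, hτtend⟩ := isCompact_Icc.tendsto_subseq hτ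
  have hcne : curve n ts ≠ 0 := curve_ne_zero hn ts
  have hγ : Filter.Tendsto (fun j => curve n (τ (φ j))) Filter.atTop (nhds (curve n ts)) :=
    ((continuous_curve n).tendsto ts).comp hτtend
  have hxφ : Filter.Tendsto (fun j => x (φ j)) Filter.atTop
      (nhds ((u:ℂ) * curve n t)) := hxtend.comp hφ.tendsto_atTop
  have hγne : ∀ j, ‖curve n (τ (φ j))‖ ≠ 0 :=
    fun j => norm_ne_zero_iff.mpr (curve_ne_zero hn _)
  have hrval : ∀ j, r (φ j) = ‖x (φ j)‖ / ‖curve n (τ (φ j))‖ := by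
    intro j
    rw [hxeq (φ j), norm_mul, Complex.norm_real, Real.norm_eq_abs,
      abs_of_pos (lt_trans zero_lt_one (hr (φ j)))]
    rw [mul_div_assoc, div_self (hγne j), mul_one]
  have hrtend : Filter.Tendsto (fun j => r (φ j)) Filter.atTop
      (nhds (‖(u:ℂ) * curve n t‖ / ‖curve n ts‖)) := by
    have h1 : Filter.Tendsto (fun j => ‖x (φ j)‖) Filter.atTop
        (nhds ‖(u:ℂ) * curve n t‖) := hxφ.norm
    have h2 : Filter.Tendsto (fun j => ‖curve n (τ (φ j))‖) Filter.atTop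
        (nhds ‖curve n ts‖) := hγ.norm
    have h3 := h1.div h2 (norm_ne_zero_iff.mpr hcne)
    exact h3.congr fun j => by
      simp only [Pi.div_apply]
      exact (hrval j).symm
  set R : ℝ := ‖(u:ℂ) * curve n t‖ / ‖curve n ts‖ with hRdef
  have hR1 : 1 ≤ R :=
    ge_of_tendsto hrtend (Filter.Eventually.of_forall fun j => (hr (φ j)).le)
  have hzeq : (u:ℂ) * curve n t = (R:ℂ) * curve n ts := by
    have h2 : Filter.Tendsto (fun j => ((r (φ j) : ℝ):ℂ) * curve n (τ (φ j)))
        Filter.atTop (nhds ((R:ℂ) * curve n ts)) :=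
      (((Complex.continuous_ofReal.tendsto R).comp hrtend)).mul hγ
    have h3 : (fun j => ((r (φ j) : ℝ):ℂ) * curve n (τ (φ j))) = fun j => x (φ j) :=
      funext fun j => (hxeq (φ j)).symm
    rw [h3] at h2
    exact tendsto_nhds_unique hxφ h2
  rcases eq_or_lt_of_le hu0 with h0 | h0
  · rw [← h0] at hzeq
    simp only [Complex.ofReal_zero, zero_mul] at hzeq
    have hR0 : ((R:ℝ):ℂ) ≠ 0 := by
      have : (0:ℝ) < R := lt_of_lt_of_le zero_lt_one hR1
      exact_mod_cast ne_of_gt this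
    exact hcne ((mul_eq_zero.mp hzeq.symm).resolve_left hR0)
  · have hu0' : ((u:ℝ):ℂ) ≠ 0 := by exact_mod_cast ne_of_gt h0
    have hrat : curve n t = (((R/u) : ℝ) : ℂ) * curve n ts := by
      push_cast
      rw [div_mul_eq_mul_div, eq_div_iff hu0', mul_comm (curve n t) _]
      rw [← hzeq]
    have hone := curve_parallel_unique hn ht hts
      (show (0:ℝ) < R/u by positivity) hrat
    rw [div_eq_one_iff_eq (ne_of_gt h0)] at hone
    linarith

/-- The frontier of `Sset` is the curve. -/
lemma frontier_Sset (hn : 3 ≤ n) :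
    frontier (Sset n) = curve n '' Set.Icc (0:ℝ) 1 := by
  rw [(Sset_compact n).isClosed.frontier_eq]
  ext z
  constructor
  · rintro ⟨hzS, hzni⟩
    rw [mem_Sset_iff] at hzS
    obtain ⟨u, hu, t, ht, rfl⟩ := hzS
    rcases eq_or_lt_of_le hu.2 with h1 | h1
    · rw [h1]
      simp only [Complex.ofReal_one, one_mul]
      exact ⟨t, ht, rfl⟩
    · exact absurd (inner_mem_interior hn hu.1 h1 ht) hzni
  · rintro ⟨t, ht, rfl⟩
    constructor
    · rw [mem_Sset_iff]
      exact ⟨1, by norm_num, t, ht, by simp⟩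
    · exact curve_not_interior hn ht

end Poly

/-- For `n ≥ 3`, the topological boundary in `ℂ` of `{wⁿ : w ∈ 𝒫_n}` is the curve
`{(t + (1-t) ω_n)ⁿ : t ∈ [0,1]}`. -/
theorem frontier_power_image_of_polygon {n : ℕ} (hn : 3 ≤ n) :
    frontier ((fun w : ℂ => w ^ n) '' rootsOfUnityHull n) =
      (fun t : ℝ => ((t : ℂ) + (1 - (t : ℂ)) * primRoot n) ^ n) '' Set.Icc (0 : ℝ) 1 := by
  rw [Poly.image_eq hn, Poly.frontier_Sset hn]
  rfl
end

section
/- For every integer n ≥ 3, the set {wⁿ : w ∈ 𝒫_n} (the image of the convex hull of the nth roots of unity under the nth power map) is a convex subset of ℂ. -/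
open Real Set

section
variable {n : ℕ} (hn : 3 ≤ n)

lemma eta_pos (hn : 3 ≤ n) : 0 < π / n := by
  apply div_pos pi_pos; exact_mod_cast Nat.lt_of_lt_of_le (by norm_num) hn

lemma eta_lt (hn : 3 ≤ n) : π / n < π / 2 := by
  apply div_lt_div_of_pos_left pi_pos (by norm_num)
  exact_mod_cast Nat.lt_of_lt_of_le (by norm_num) hn

lemma cos_pos_on (hn : 3 ≤ n) {x : ℝ} (hx : x ∈ Icc (-(π/n)) (π/n)) : 0 < Real.cos x := by
  apply Real.cos_pos_of_mem_Ioo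
  constructor
  · linarith [hx.1, eta_lt hn]
  · linarith [hx.2, eta_lt hn]

lemma n_mul_eta (hn : 3 ≤ n) : (n:ℝ) * (π / n) = π := by
  have : (n:ℝ) ≠ 0 := by positivity -- ?
  field_simp

section
variable {n : ℕ}

lemma gDeriv (n : ℕ) (hn : 3 ≤ n) (x : ℝ) :
    HasDerivAt (fun y => -(Real.cos (((n:ℝ)-1)*y) * Real.cos y ^ (n-1)))
      (((n:ℝ)-1) * Real.cos x ^ (n-2) * Real.sin ((n:ℝ)*x)) x := by
  have h1 : HasDerivAt (fun y : ℝ => ((n:ℝ)-1)*y) ((n:ℝ)-1) x := by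
    simpa using (hasDerivAt_id x).const_mul ((n:ℝ)-1)
  have h2 := h1.cos
  have h3 : HasDerivAt (fun y => Real.cos y ^ (n-1))
      ((n-1 : ℕ) * Real.cos x ^ (n-1-1) * (-Real.sin x)) x := (Real.hasDerivAt_cos x).pow (n-1)
  have h4 := (h2.mul h3).neg
  refine h4.congr_deriv ?_
  have e1 : n - 1 - 1 = n - 2 := by omega
  have e2 : ((n-1 : ℕ) : ℝ) = (n:ℝ) - 1 := by
    have : (1:ℕ) ≤ n := by omega
    push_cast [this]; ring
  have e3 : Real.cos x ^ (n-1) = Real.cos x ^ (n-2) * Real.cos x := by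
    rw [← pow_succ]; congr 1; omega
  rw [e1, e2, e3]
  have e4 : (n:ℝ)*x = (((n:ℝ)-1)*x) + x := by ring
  rw [e4, Real.sin_add]
  ring

lemma lemE (hn : 3 ≤ n) {φ : ℝ} (hφ : φ ∈ Icc (-(π/n)) (π/n)) :
    -(Real.cos (((n:ℝ)-1)*φ) * Real.cos φ ^ (n-1)) ≤ Real.cos (π/n) ^ n := by
  set g : ℝ → ℝ := fun y => -(Real.cos (((n:ℝ)-1)*y) * Real.cos y ^ (n-1)) with hg
  have npos : (0:ℝ) < n := by exact_mod_cast Nat.lt_of_lt_of_le (by norm_num) hn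
  have key : ∀ x ∈ Icc 0 (π/n), g x ≤ g (π/n) := by
    have mono : MonotoneOn g (Icc 0 (π/n)) := by
      apply monotoneOn_of_hasDerivWithinAt_nonneg (convex_Icc _ _)
        (Continuous.continuousOn (by continuity))
        (f' := fun x => ((n:ℝ)-1) * Real.cos x ^ (n-2) * Real.sin ((n:ℝ)*x))
        (fun x hx => (gDeriv n hn x).hasDerivWithinAt)
      intro x hx
      rw [interior_Icc] at hx
      have hx1 : 0 < x := hx.1
      have hx2 : x < π/n := hx.2
      have hcos : 0 < Real.cos x := by
        apply Real.cos_pos_of_mem_Ioo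
        constructor <;> nlinarith [eta_lt hn, eta_pos hn, pi_pos]
      have hsin : 0 ≤ Real.sin ((n:ℝ)*x) := by
        apply Real.sin_nonneg_of_nonneg_of_le_pi
        · positivity
        · calc (n:ℝ)*x ≤ (n:ℝ)*(π/n) := by
                apply mul_le_mul_of_nonneg_left (le_of_lt hx2) (le_of_lt npos)
            _ = π := n_mul_eta hn
      have : (0:ℝ) ≤ (n:ℝ)-1 := by
        have : (3:ℝ) ≤ n := by exact_mod_cast hn
        linarith
      positivity
    intro x hx
    exact mono hx (right_mem_Icc.mpr (le_of_lt (eta_pos hn))) hx.2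
  have geval : g (π/n) = Real.cos (π/n) ^ n := by
    have e : ((n:ℝ)-1) * (π/n) = π - π/n := by
      field_simp
    rw [hg]
    simp only [e, Real.cos_pi_sub]
    have e3 : Real.cos (π/n) ^ n = Real.cos (π/n) * Real.cos (π/n) ^ (n-1) := by
      rw [← pow_succ']; congr 1; omega
    rw [e3]; ring
  rcases le_or_gt 0 φ with h | h
  · have := key φ ⟨h, hφ.2⟩
    rw [geval] at this; exact this
  · have hmem : -φ ∈ Icc (0:ℝ) (π/n) := ⟨by linarith, by linarith [hφ.1]⟩
    have := key (-φ) hmem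
    rw [geval] at this
    have e : g (-φ) = g φ := by
      rw [hg]
      simp [mul_neg, Real.cos_neg]
    rwa [e] at this

end

lemma fDeriv (hn : 3 ≤ n) {φ : ℝ} {x : ℝ} (hx : Real.cos x ≠ 0) :
    HasDerivAt (fun y => Real.cos ((n:ℝ)*y - ((n:ℝ)-1)*φ) / Real.cos y ^ n)
      ((-(n:ℝ) * Real.sin (((n:ℝ)-1)*(x-φ)) * Real.cos x ^ (n-1)) / (Real.cos x ^ n)^2) x := by
  have h1 : HasDerivAt (fun y : ℝ => (n:ℝ)*y - ((n:ℝ)-1)*φ) (n:ℝ) x := by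
    simpa using ((hasDerivAt_id x).const_mul (n:ℝ)).sub_const (((n:ℝ)-1)*φ)
  have h2 := h1.cos
  have h3 : HasDerivAt (fun y => Real.cos y ^ n)
      ((n : ℕ) * Real.cos x ^ (n-1) * (-Real.sin x)) x := (Real.hasDerivAt_cos x).pow n
  have h4 := h2.div h3 (pow_ne_zero n hx)
  refine h4.congr_deriv ?_
  have e3 : Real.cos x ^ n = Real.cos x ^ (n-1) * Real.cos x := by
    rw [← pow_succ]; congr 1; omega
  have e4 : ((n:ℝ)-1)*(x-φ) = ((n:ℝ)*x - ((n:ℝ)-1)*φ) - x := by ring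
  rw [e4, Real.sin_sub _ x]
  field_simp
  rw [e3]
  ring

lemma starAux (hn : 3 ≤ n) {φ ψ : ℝ} (hφ : φ ∈ Set.Icc (-(π/n)) (π/n))
    (hψ : ψ ∈ Set.Icc (-(π/n)) (π/n)) (hle : φ ≤ ψ) :
    Real.cos ((n:ℝ)*ψ - ((n:ℝ)-1)*φ) * Real.cos φ ^ (n-1) ≤ Real.cos ψ ^ n := by
  have n3 : (3:ℝ) ≤ (n:ℝ) := by exact_mod_cast hn
  have nm1 : (0:ℝ) < (n:ℝ)-1 := by linarith
  have hcφ : 0 < Real.cos φ := cos_pos_on hn hφ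
  have hcψ : 0 < Real.cos ψ := cos_pos_on hn hψ
  have hcη : 0 < Real.cos (π/n) := cos_pos_on hn
    ⟨by linarith [eta_pos hn], le_refl _⟩
  set f : ℝ → ℝ := fun y => Real.cos ((n:ℝ)*y - ((n:ℝ)-1)*φ) / Real.cos y ^ n with hf
  have fcont : ∀ D : Set ℝ, D ⊆ Set.Icc (-(π/n)) (π/n) → ContinuousOn f D := by
    intro D hD
    apply ContinuousOn.div
    · fun_prop
    · fun_prop
    · intro x hx
      exact pow_ne_zero n (ne_of_gt (cos_pos_on hn (hD hx)))
  rcases le_or_gt ψ (φ + π/((n:ℝ)-1)) with hA | hB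
  · -- Case A : f antitone on [φ, ψ]
    have hsub : Set.Icc φ ψ ⊆ Set.Icc (-(π/n)) (π/n) := by
      intro x hx; exact ⟨le_trans hφ.1 hx.1, le_trans hx.2 hψ.2⟩
    have anti : AntitoneOn f (Set.Icc φ ψ) := by
      apply antitoneOn_of_hasDerivWithinAt_nonpos (convex_Icc _ _) (fcont _ hsub)
        (f' := fun x => (-(n:ℝ) * Real.sin (((n:ℝ)-1)*(x-φ)) * Real.cos x ^ (n-1)) / (Real.cos x ^ n)^2)
        (fun x hx => (fDeriv hn (ne_of_gt (cos_pos_on hn (hsub (interior_subset hx))))).hasDerivWithinAt)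
      intro x hx
      rw [interior_Icc] at hx
      have hxm : x ∈ Set.Icc (-(π/n)) (π/n) := hsub ⟨le_of_lt hx.1, le_of_lt hx.2⟩
      have hsin : 0 ≤ Real.sin (((n:ℝ)-1)*(x-φ)) := by
        apply Real.sin_nonneg_of_nonneg_of_le_pi
        · have : 0 ≤ x - φ := by linarith [hx.1]
          positivity
        · have h1 : x - φ ≤ π/((n:ℝ)-1) := by linarith [hx.2]
          calc ((n:ℝ)-1)*(x-φ) ≤ ((n:ℝ)-1)*(π/((n:ℝ)-1)) :=
                mul_le_mul_of_nonneg_left h1 (le_of_lt nm1)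
            _ = π := by field_simp
      have hcx : 0 < Real.cos x := cos_pos_on hn hxm
      have num : -(n:ℝ) * Real.sin (((n:ℝ)-1)*(x-φ)) * Real.cos x ^ (n-1) ≤ 0 := by
        have : (0:ℝ) ≤ (n:ℝ) * Real.sin (((n:ℝ)-1)*(x-φ)) * Real.cos x ^ (n-1) := by positivity
        linarith
      apply div_nonpos_of_nonpos_of_nonneg num (by positivity)
    have key := anti (Set.left_mem_Icc.mpr hle) (Set.right_mem_Icc.mpr hle) hle
    rw [hf] at key
    simp only at key
    have e1 : (n:ℝ)*φ - ((n:ℝ)-1)*φ = φ := by ring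
    rw [e1] at key
    rw [div_le_div_iff₀ (by positivity) (by positivity)] at key
    -- key : cos(nψ - (n-1)φ) * cos φ ^ n ≤ cos φ * cos ψ ^ n
    have e3 : Real.cos φ ^ n = Real.cos φ ^ (n-1) * Real.cos φ := by
      rw [← pow_succ]; congr 1; omega
    apply le_of_mul_le_mul_right _ hcφ
    calc Real.cos ((n:ℝ)*ψ - ((n:ℝ)-1)*φ) * Real.cos φ ^ (n-1) * Real.cos φ
        = Real.cos ((n:ℝ)*ψ - ((n:ℝ)-1)*φ) * Real.cos φ ^ n := by rw [e3]; ring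
      _ ≤ Real.cos φ * Real.cos ψ ^ n := key
      _ = Real.cos ψ ^ n * Real.cos φ := by ring
  · -- Case B : f monotone on [φ + π/(n-1), π/n]
    have hlow : -(π/n) ≤ φ + π/((n:ℝ)-1) := by
      have : 0 < π/((n:ℝ)-1) := by positivity
      linarith [hφ.1]
    have hup : φ + π/((n:ℝ)-1) ≤ π/n := le_trans (le_of_lt hB) hψ.2
    have hsub : Set.Icc (φ + π/((n:ℝ)-1)) (π/n) ⊆ Set.Icc (-(π/n)) (π/n) := by
      intro x hx; exact ⟨le_trans hlow hx.1, hx.2⟩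
    have mono : MonotoneOn f (Set.Icc (φ + π/((n:ℝ)-1)) (π/n)) := by
      apply monotoneOn_of_hasDerivWithinAt_nonneg (convex_Icc _ _) (fcont _ hsub)
        (f' := fun x => (-(n:ℝ) * Real.sin (((n:ℝ)-1)*(x-φ)) * Real.cos x ^ (n-1)) / (Real.cos x ^ n)^2)
        (fun x hx => (fDeriv hn (ne_of_gt (cos_pos_on hn (hsub (interior_subset hx))))).hasDerivWithinAt)
      intro x hx
      rw [interior_Icc] at hx
      have hxm : x ∈ Set.Icc (-(π/n)) (π/n) := hsub ⟨le_of_lt hx.1, le_of_lt hx.2⟩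
      have hcx : 0 < Real.cos x := cos_pos_on hn hxm
      have hsin : Real.sin (((n:ℝ)-1)*(x-φ)) ≤ 0 := by
        have harg1 : π ≤ ((n:ℝ)-1)*(x-φ) := by
          have h1 : π/((n:ℝ)-1) ≤ x - φ := by linarith [hx.1]
          calc π = ((n:ℝ)-1)*(π/((n:ℝ)-1)) := by field_simp
            _ ≤ ((n:ℝ)-1)*(x-φ) := mul_le_mul_of_nonneg_left h1 (le_of_lt nm1)
        have harg2 : ((n:ℝ)-1)*(x-φ) ≤ 2*π := by
          have h1 : x - φ ≤ 2*(π/n) := by linarith [hx.2, hφ.1]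
          have h2 : ((n:ℝ)-1)*(x-φ) ≤ ((n:ℝ)-1)*(2*(π/n)) := by
            apply mul_le_mul_of_nonneg_left h1 (le_of_lt nm1)
          have npos : (0:ℝ) < n := by linarith
          have h3 : ((n:ℝ)-1)*(2*(π/n)) ≤ 2*π := by
            have e : ((n:ℝ)-1)*(2*(π/n)) = 2*π*(((n:ℝ)-1)/n) := by ring
            have e2 : ((n:ℝ)-1)/n ≤ 1 := by
              rw [div_le_one npos]; linarith
            rw [e]
            nlinarith [pi_pos]
          linarith
        have := Real.sin_nonneg_of_nonneg_of_le_pi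
          (x := ((n:ℝ)-1)*(x-φ) - π) (by linarith) (by linarith)
        rw [Real.sin_sub_pi] at this
        linarith
      have num : 0 ≤ -(n:ℝ) * Real.sin (((n:ℝ)-1)*(x-φ)) * Real.cos x ^ (n-1) := by
        have h0 : 0 ≤ -Real.sin (((n:ℝ)-1)*(x-φ)) := by linarith
        have : 0 ≤ (n:ℝ) * (-Real.sin (((n:ℝ)-1)*(x-φ))) * Real.cos x ^ (n-1) := by positivity
        linarith [this]
      positivity
    have hψmem : ψ ∈ Set.Icc (φ + π/((n:ℝ)-1)) (π/n) := ⟨le_of_lt hB, hψ.2⟩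
    have hηmem : (π/n) ∈ Set.Icc (φ + π/((n:ℝ)-1)) (π/n) := ⟨hup, le_refl _⟩
    have key := mono hψmem hηmem hψ.2
    rw [hf] at key
    simp only at key
    have e1 : (n:ℝ)*(π/n) - ((n:ℝ)-1)*φ = π - ((n:ℝ)-1)*φ := by rw [n_mul_eta hn]
    rw [e1, Real.cos_pi_sub] at key
    rw [div_le_div_iff₀ (by positivity) (by positivity)] at key
    -- key : cos(nψ-(n-1)φ) * cos(π/n)^n ≤ -cos((n-1)φ) * cos ψ ^ n
    have hE := lemE hn hφ
    -- -(cos((n-1)φ) * cos φ^(n-1)) ≤ cos(π/n)^n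
    apply le_of_mul_le_mul_right _ (show (0:ℝ) < Real.cos (π/n) ^ n by positivity)
    calc Real.cos ((n:ℝ)*ψ - ((n:ℝ)-1)*φ) * Real.cos φ ^ (n-1) * Real.cos (π/n) ^ n
        = (Real.cos ((n:ℝ)*ψ - ((n:ℝ)-1)*φ) * Real.cos (π/n) ^ n) * Real.cos φ ^ (n-1) := by ring
      _ ≤ (-Real.cos (((n:ℝ)-1)*φ) * Real.cos ψ ^ n) * Real.cos φ ^ (n-1) := by
          apply mul_le_mul_of_nonneg_right key (by positivity)
      _ = (-(Real.cos (((n:ℝ)-1)*φ) * Real.cos φ ^ (n-1))) * Real.cos ψ ^ n := by ring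
      _ ≤ Real.cos (π/n) ^ n * Real.cos ψ ^ n := by
          apply mul_le_mul_of_nonneg_right hE (by positivity)
      _ = Real.cos ψ ^ n * Real.cos (π/n) ^ n := by ring

lemma star (hn : 3 ≤ n) {φ ψ : ℝ} (hφ : φ ∈ Set.Icc (-(π/n)) (π/n))
    (hψ : ψ ∈ Set.Icc (-(π/n)) (π/n)) :
    Real.cos ((n:ℝ)*ψ - ((n:ℝ)-1)*φ) * Real.cos φ ^ (n-1) ≤ Real.cos ψ ^ n := by
  rcases le_or_gt φ ψ with h | h
  · exact starAux hn hφ hψ h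
  · have hφ' : -φ ∈ Set.Icc (-(π/n)) (π/n) := ⟨by linarith [hφ.2], by linarith [hφ.1]⟩
    have hψ' : -ψ ∈ Set.Icc (-(π/n)) (π/n) := ⟨by linarith [hψ.2], by linarith [hψ.1]⟩
    have key := starAux hn (φ := -φ) (ψ := -ψ) hφ' hψ' (by linarith)
    have e1 : (n:ℝ)*(-ψ) - ((n:ℝ)-1)*(-φ) = -((n:ℝ)*ψ - ((n:ℝ)-1)*φ) := by ring
    rw [e1] at key
    simp only [Real.cos_neg] at key
    exact key

lemma oddCos (hn : 3 ≤ n) (d : ℤ) (hd : Odd d) : Real.cos (d * π / n) ≤ Real.cos (π/n) := by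
  have npos : (0:ℝ) < n := by
    exact_mod_cast Nat.lt_of_lt_of_le (by norm_num) hn
  have n2pos : (0:ℤ) < 2*n := by positivity
  set m : ℤ := d % (2*n) with hm
  set q : ℤ := d / (2*n) with hq
  have hm0 : 0 ≤ m := Int.emod_nonneg d (by omega)
  have hmlt : m < 2*n := Int.emod_lt_of_pos d n2pos
  have hmodd : Odd m := by
    rw [Int.odd_iff, hm, Int.emod_emod_of_dvd d ⟨(n:ℤ), rfl⟩]
    exact Int.odd_iff.mp hd
  have hm1 : 1 ≤ m := by
    rcases hmodd with ⟨t, ht⟩; omega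
  have hmub : m ≤ 2*n - 1 := by omega
  have hds : d = m + (2*n) * q := by
    rw [hm, hq]; have := Int.mul_ediv_add_emod d (2*n); omega
  have e0 : (d:ℝ) = (m:ℝ) + 2*(n:ℝ)*(q:ℝ) := by exact_mod_cast congrArg (Int.cast : ℤ → ℝ) hds
  have e1 : (d:ℝ) * π / n = (m:ℝ)*π/n + (q:ℝ) * (2*π) := by
    rw [e0]; field_simp
  rw [e1, Real.cos_add_int_mul_two_pi]
  have hmr1 : (1:ℝ) ≤ (m:ℝ) := by exact_mod_cast hm1
  have hmr2 : (m:ℝ) ≤ 2*(n:ℝ) - 1 := by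
    have : (m:ℝ) ≤ ((2*n - 1 : ℤ):ℝ) := by exact_mod_cast hmub
    push_cast at this; linarith
  have h3 : (m:ℝ)*π/n ≤ (2*(n:ℝ)-1)*π/n := by
    rw [div_le_div_iff₀ npos npos]
    nlinarith [pi_pos, mul_nonneg (mul_nonneg (by linarith : (0:ℝ) ≤ 2*(n:ℝ)-1-m) pi_pos.le) npos.le]
  have h4 : (2*(n:ℝ)-1)*π/n = 2*π - π/n := by field_simp
  have h5 : π/n ≤ (m:ℝ)*π/n := by
    rw [div_le_div_iff₀ npos npos]
    nlinarith [pi_pos, mul_nonneg (mul_nonneg (by linarith : (0:ℝ) ≤ (m:ℝ)-1) pi_pos.le) npos.le]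
  rcases le_or_gt ((m:ℝ)*π/n) π with hc | hc
  · exact Real.cos_le_cos_of_nonneg_of_le_pi (by positivity) hc h5
  · have e2 : (m:ℝ)*π/n = 2*π - (2*π - (m:ℝ)*π/n) := by ring
    rw [e2, Real.cos_two_pi_sub]
    apply Real.cos_le_cos_of_nonneg_of_le_pi (le_of_lt (eta_pos hn)) (by linarith)
    linarith
lemma reMulLinear (c : ℂ) : IsLinearMap ℝ (fun z : ℂ => (z * c).re) := by
  constructor
  · intro x y; simp [add_mul]
  · intro a x
    simp [Complex.real_smul, smul_eq_mul]
    ring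

lemma ncast_ne (hn : 3 ≤ n) : (n:ℂ) ≠ 0 := Nat.cast_ne_zero.mpr (by omega)

lemma vertex_exp (hn : 3 ≤ n) (k : ℕ) :
    primRoot n ^ k = Complex.exp (((2*(k:ℝ)*π/n : ℝ) : ℂ) * Complex.I) := by
  rw [primRoot, ← Complex.exp_nat_mul]
  congr 1
  have hne := ncast_ne hn
  push_cast
  field_simp

lemma hull_halfplane (hn : 3 ≤ n) {w : ℂ} (hw : w ∈ rootsOfUnityHull n) (j : ℤ) :
    (w * Complex.exp (((-((2*(j:ℝ)+1)*π/n)) : ℝ) * Complex.I)).re ≤ Real.cos (π/n) := by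
  have hsub : rootsOfUnityHull n ⊆
      {z : ℂ | (z * Complex.exp (((-((2*(j:ℝ)+1)*π/n)) : ℝ) * Complex.I)).re ≤ Real.cos (π/n)} := by
    apply convexHull_min ?_ (convex_halfSpace_le (reMulLinear _) _)
    rintro z ⟨k, rfl⟩
    simp only [Set.mem_setOf_eq]
    rw [vertex_exp hn (k:ℕ), ← Complex.exp_add]
    have e1 : ((2*((k:ℕ):ℝ)*π/n : ℝ) : ℂ) * Complex.I + ((-((2*(j:ℝ)+1)*π/n)) : ℝ) * Complex.I
        = (((2*((k:ℕ):ℝ) - (2*(j:ℝ)+1))*π/n : ℝ) : ℂ) * Complex.I := by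
      push_cast
      ring
    rw [e1, Complex.exp_ofReal_mul_I_re]
    have e2 : (2*((k:ℕ):ℝ) - (2*(j:ℝ)+1))*π/n = ((2*(k:ℤ) - 2*j - 1 : ℤ) : ℝ)*π/n := by
      push_cast; ring
    rw [e2]
    exact oddCos hn _ ⟨(k:ℤ) - j - 1, by ring⟩
  exact hsub hw
lemma forward (hn : 3 ≤ n) {w : ℂ} (hw : w ∈ rootsOfUnityHull n) {φ : ℝ}
    (hφ : φ ∈ Set.Icc (-(π/n)) (π/n)) :
    -(Real.cos (π/n)^n / Real.cos φ ^ (n-1)) ≤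
      (w^n * Complex.exp (((-(((n:ℝ)-1)*φ)) : ℝ) * Complex.I)).re := by
  have npos : (0:ℝ) < n := by
    exact_mod_cast Nat.lt_of_lt_of_le (by norm_num) hn
  have hcφ : 0 < Real.cos φ := cos_pos_on hn hφ
  have hcη : 0 < Real.cos (π/n) := cos_pos_on hn ⟨by linarith [eta_pos hn], le_refl _⟩
  set s : ℝ := ‖w‖ with hsdef
  set θ : ℝ := Complex.arg w with hθdef
  have hpolar : (s:ℂ) * Complex.exp ((θ:ℝ) * Complex.I) = w := Complex.norm_mul_exp_arg_mul_I w
  have s0 : 0 ≤ s := norm_nonneg w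
  set j : ℤ := ⌊θ * n / (2*π)⌋ with hjdef
  have hj1 : (j:ℝ) * (2*π) ≤ θ*n := by
    have := Int.floor_le (θ * n / (2*π))
    rw [le_div_iff₀ (by positivity)] at this
    exact this
  have hj2 : θ*n < ((j:ℝ)+1) * (2*π) := by
    have := Int.lt_floor_add_one (θ * n / (2*π))
    rw [div_lt_iff₀ (by positivity)] at this
    exact_mod_cast this
  set ψ : ℝ := θ - (2*(j:ℝ)+1)*π/n with hψdef
  have hψe : ψ = (θ*n - (2*(j:ℝ)+1)*π)/n := by rw [hψdef]; field_simp
  have hψmem : ψ ∈ Set.Icc (-(π/n)) (π/n) := by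
    rw [hψe]
    constructor
    · rw [show -(π/(n:ℝ)) = (-π)/n from (neg_div _ _).symm, div_le_div_iff₀ npos npos]
      nlinarith [pi_pos]
    · rw [div_le_div_iff₀ npos npos]
      nlinarith [pi_pos]
  have hcψ : 0 < Real.cos ψ := cos_pos_on hn hψmem
  -- the half plane bound at j
  have hs : s * Real.cos ψ ≤ Real.cos (π/n) := by
    have hhp := hull_halfplane hn hw j
    rw [← hpolar, mul_assoc, ← Complex.exp_add] at hhp
    have e1 : (θ:ℂ) * Complex.I + ((-((2*(j:ℝ)+1)*π/n)) : ℝ) * Complex.I = ((ψ:ℝ):ℂ) * Complex.I := by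
      rw [hψdef]; push_cast; ring
    rw [e1, Complex.re_ofReal_mul, Complex.exp_ofReal_mul_I_re] at hhp
    exact hhp
  have hsle : s ≤ Real.cos (π/n) / Real.cos ψ := by
    rw [le_div_iff₀ hcψ]; exact hs
  -- compute the real part
  have hwn : w^n = ((s^n : ℝ):ℂ) * Complex.exp (((n:ℝ)*θ : ℝ) * Complex.I) := by
    rw [← hpolar, mul_pow, ← Complex.exp_nat_mul]
    push_cast
    ring_nf
  have hre : (w^n * Complex.exp (((-(((n:ℝ)-1)*φ)) : ℝ) * Complex.I)).re
      = s^n * Real.cos ((n:ℝ)*θ - ((n:ℝ)-1)*φ) := by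
    rw [hwn, mul_assoc, ← Complex.exp_add]
    have e2 : (((n:ℝ)*θ : ℝ):ℂ) * Complex.I + ((-(((n:ℝ)-1)*φ)) : ℝ) * Complex.I
        = (((n:ℝ)*θ - ((n:ℝ)-1)*φ : ℝ):ℂ) * Complex.I := by push_cast; ring
    rw [e2, Complex.re_ofReal_mul, Complex.exp_ofReal_mul_I_re]
  rw [hre]
  -- angle reduction
  have hang : (n:ℝ)*θ - ((n:ℝ)-1)*φ = ((n:ℝ)*ψ - ((n:ℝ)-1)*φ + π) + (j:ℝ)*(2*π) := by
    rw [hψdef]; field_simp; ring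
  have hcosr : Real.cos ((n:ℝ)*θ - ((n:ℝ)-1)*φ) = -Real.cos ((n:ℝ)*ψ - ((n:ℝ)-1)*φ) := by
    rw [hang, Real.cos_add_int_mul_two_pi, Real.cos_add_pi]
  rw [hcosr]
  rw [mul_neg, neg_le_neg_iff]
  -- goal : s^n * cos(nψ - (n-1)φ) ≤ cos(π/n)^n / cos φ^(n-1)
  rcases le_or_gt (Real.cos ((n:ℝ)*ψ - ((n:ℝ)-1)*φ)) 0 with hcc | hcc
  · have h1 : s^n * Real.cos ((n:ℝ)*ψ - ((n:ℝ)-1)*φ) ≤ 0 :=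
      mul_nonpos_of_nonneg_of_nonpos (pow_nonneg s0 n) hcc
    have h2 : (0:ℝ) < Real.cos (π/n)^n / Real.cos φ ^ (n-1) := by positivity
    linarith
  · have h1 : s^n ≤ (Real.cos (π/n) / Real.cos ψ)^n := pow_le_pow_left₀ s0 hsle n
    have h2 : s^n * Real.cos ((n:ℝ)*ψ - ((n:ℝ)-1)*φ)
        ≤ (Real.cos (π/n)^n / Real.cos ψ^n) * Real.cos ((n:ℝ)*ψ - ((n:ℝ)-1)*φ) := by
      rw [← div_pow]
      exact mul_le_mul_of_nonneg_right h1 (le_of_lt hcc)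
    have hstar := star hn hφ hψmem
    have h3 : (Real.cos (π/n)^n / Real.cos ψ^n) * Real.cos ((n:ℝ)*ψ - ((n:ℝ)-1)*φ)
        ≤ Real.cos (π/n)^n / Real.cos φ ^ (n-1) := by
      rw [div_mul_eq_mul_div, div_le_div_iff₀ (by positivity) (by positivity)]
      calc Real.cos (π/n)^n * Real.cos ((n:ℝ)*ψ - ((n:ℝ)-1)*φ) * Real.cos φ ^ (n-1)
          = Real.cos (π/n)^n * (Real.cos ((n:ℝ)*ψ - ((n:ℝ)-1)*φ) * Real.cos φ ^ (n-1)) := by ring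
        _ ≤ Real.cos (π/n)^n * Real.cos ψ^n := by
            apply mul_le_mul_of_nonneg_left hstar (by positivity)
    linarith
lemma primRoot_pow_n (hn : 3 ≤ n) : primRoot n ^ n = 1 := by
  rw [primRoot, ← Complex.exp_nat_mul]
  have hne := ncast_ne hn
  rw [show (n:ℂ) * (2 * (π:ℝ) * Complex.I / n) = 2 * (π:ℝ) * Complex.I by field_simp]
  exact Complex.exp_two_pi_mul_I

lemma primRoot_ne_one (hn : 3 ≤ n) : primRoot n ≠ 1 := by
  intro h
  have npos : (0:ℝ) < n := by exact_mod_cast Nat.lt_of_lt_of_le (by norm_num) hn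
  have hn3 : (3:ℝ) ≤ n := by exact_mod_cast hn
  have e1 : primRoot n = Complex.exp (((2*π/n : ℝ):ℂ) * Complex.I) := by
    rw [primRoot]; congr 1; push_cast; field_simp
  rw [e1] at h
  have h2 : Real.cos (2*π/n) = 1 := by
    have := congrArg Complex.re h
    rwa [Complex.exp_ofReal_mul_I_re, Complex.one_re] at this
  have h3 : 2*π/n ≠ 0 := by positivity
  have h4 : 2*π/n < 2*π := by
    rw [div_lt_iff₀ npos]
    nlinarith [pi_pos]
  have h5 : -(2*π) < 2*π/n := by
    have : (0:ℝ) < 2*π/n := by positivity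
    linarith [pi_pos]
  rw [Real.cos_eq_one_iff_of_lt_of_lt h5 h4] at h2
  exact h3 h2

lemma zero_mem_hull (hn : 3 ≤ n) : (0:ℂ) ∈ rootsOfUnityHull n := by
  have hsum : ∑ k : Fin n, primRoot n ^ (k:ℕ) = 0 := by
    rw [Fin.sum_univ_eq_sum_range (fun k => primRoot n ^ k) n]
    rw [geom_sum_eq (primRoot_ne_one hn) n, primRoot_pow_n hn]
    simp
  have hmem := Finset.centerMass_mem_convexHull (Finset.univ : Finset (Fin n))
    (w := fun _ => (1:ℝ)) (fun i _ => zero_le_one)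
    (by
      simp only [Finset.sum_const, Finset.card_univ, Fintype.card_fin, nsmul_eq_mul, mul_one]
      exact_mod_cast Nat.lt_of_lt_of_le (by norm_num) hn)
    (z := fun k : Fin n => primRoot n ^ (k:ℕ))
    (fun i _ => Set.mem_range_self i)
  rw [Finset.centerMass] at hmem
  simp only [one_smul] at hmem
  rw [hsum, smul_zero] at hmem
  rw [rootsOfUnityHull]
  exact hmem

lemma one_mem_hull (hn : 3 ≤ n) : (1:ℂ) ∈ rootsOfUnityHull n := by
  apply subset_convexHull
  exact ⟨⟨0, by omega⟩, by simp⟩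

lemma prim_mem_hull (hn : 3 ≤ n) : primRoot n ∈ rootsOfUnityHull n := by
  apply subset_convexHull
  exact ⟨⟨1, by omega⟩, by simp⟩

noncomputable def targetSet (n : ℕ) : Set ℂ :=
  ⋂ φ ∈ Set.Icc (-(π/n)) (π/n),
    {z : ℂ | -(Real.cos (π/n)^n / Real.cos φ ^ (n-1)) ≤
      (z * Complex.exp (((-(((n:ℝ)-1)*φ)) : ℝ) * Complex.I)).re}

lemma targetSet_convex (n : ℕ) : Convex ℝ (targetSet n) := by
  apply convex_iInter
  intro φ
  apply convex_iInter
  intro _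
  exact convex_halfSpace_ge (reMulLinear _) _
set_option maxHeartbeats 1000000 in
lemma backward (hn : 3 ≤ n) {z : ℂ} (hz : z ∈ targetSet n) :
    ∃ w ∈ rootsOfUnityHull n, w^n = z := by
  have npos : (0:ℝ) < n := by exact_mod_cast Nat.lt_of_lt_of_le (by norm_num) hn
  have hn3 : (3:ℝ) ≤ n := by exact_mod_cast hn
  have hηp := eta_pos hn
  have hcη : 0 < Real.cos (π/n) := cos_pos_on hn ⟨by linarith, le_refl _⟩
  rcases eq_or_ne z 0 with rfl | hz0
  · exact ⟨0, zero_mem_hull hn, zero_pow (by omega)⟩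
  set α := Complex.arg z with hα
  have hα1 : -π < α := Complex.neg_pi_lt_arg z
  have hα2 : α ≤ π := Complex.arg_le_pi z
  set φ₀ : ℝ := if 0 < α then (α - π)/n else (α + π)/n with hφ₀
  clear_value φ₀
  have hφ₀mem : φ₀ ∈ Set.Icc (-(π/n)) (π/n) := by
    rw [hφ₀]; split_ifs with hc
    · constructor
      · rw [show -(π/(n:ℝ)) = (-π)/n from (neg_div _ _).symm]
        exact (div_le_div_iff_of_pos_right npos).mpr (by linarith)
      · exact (div_le_div_iff_of_pos_right npos).mpr (by linarith)
    · push_neg at hc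
      constructor
      · rw [show -(π/(n:ℝ)) = (-π)/n from (neg_div _ _).symm]
        exact (div_le_div_iff_of_pos_right npos).mpr (by linarith)
      · exact (div_le_div_iff_of_pos_right npos).mpr (by linarith)
  have hcos0 : 0 < Real.cos φ₀ := cos_pos_on hn hφ₀mem
  have hn_e : (n:ℝ)*φ₀ = α - π ∨ (n:ℝ)*φ₀ = α + π := by
    rw [hφ₀]; split_ifs with hc
    · left; field_simp
    · right; field_simp
  have hexpφ : Complex.exp ((((n:ℝ)*φ₀ : ℝ):ℂ) * Complex.I) = -Complex.exp ((α:ℝ) * Complex.I) := by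
    rcases hn_e with h | h
    · rw [h]
      rw [show ((α - π : ℝ):ℂ) * Complex.I = (α:ℝ)*Complex.I - (π:ℝ)*Complex.I by push_cast; ring]
      rw [Complex.exp_sub, Complex.exp_pi_mul_I]
      field_simp
    · rw [h]
      rw [show ((α + π : ℝ):ℂ) * Complex.I = (α:ℝ)*Complex.I + (π:ℝ)*Complex.I by push_cast; ring]
      rw [Complex.exp_add, Complex.exp_pi_mul_I]
      ring
  have hcosα : Real.cos (α - ((n:ℝ)-1)*φ₀) = -Real.cos φ₀ := by
    rcases hn_e with h | h
    · have e : α - ((n:ℝ)-1)*φ₀ = (α - (n:ℝ)*φ₀) + φ₀ := by ring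
      rw [e, h]
      rw [show α - (α - π) + φ₀ = φ₀ + π by ring, Real.cos_add_pi]
    · have e : α - ((n:ℝ)-1)*φ₀ = (α - (n:ℝ)*φ₀) + φ₀ := by ring
      rw [e, h]
      rw [show α - (α + π) + φ₀ = φ₀ - π by ring, Real.cos_sub_pi]
  -- use the constraint at φ₀
  have hcon : -(Real.cos (π/n)^n / Real.cos φ₀ ^ (n-1)) ≤
      (z * Complex.exp (((-(((n:ℝ)-1)*φ₀)) : ℝ) * Complex.I)).re := by
    rw [targetSet] at hz
    exact Set.mem_iInter₂.mp hz φ₀ hφ₀mem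
  have hre : (z * Complex.exp (((-(((n:ℝ)-1)*φ₀)) : ℝ) * Complex.I)).re
      = ‖z‖ * Real.cos (α - ((n:ℝ)-1)*φ₀) := by
    conv_lhs => rw [← Complex.norm_mul_exp_arg_mul_I z]
    rw [mul_assoc, ← Complex.exp_add]
    rw [show (α:ℂ) * Complex.I + ((-(((n:ℝ)-1)*φ₀)) : ℝ) * Complex.I
        = ((α - ((n:ℝ)-1)*φ₀ : ℝ):ℂ) * Complex.I by push_cast; ring]
    rw [Complex.re_ofReal_mul, Complex.exp_ofReal_mul_I_re]
  rw [hre, hcosα] at hcon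
  have habs : ‖z‖ ≤ (Real.cos (π/n) / Real.cos φ₀)^n := by
    rw [div_pow]
    have h1 : ‖z‖ * Real.cos φ₀ ≤ Real.cos (π/n)^n / Real.cos φ₀ ^ (n-1) := by
      linarith
    rw [le_div_iff₀ (by positivity)]
    calc ‖z‖ * Real.cos φ₀ ^ n
        = (‖z‖ * Real.cos φ₀) * Real.cos φ₀ ^ (n-1) := by
          rw [show Real.cos φ₀ ^ n = Real.cos φ₀ * Real.cos φ₀ ^ (n-1) by
            rw [← pow_succ']; congr 1; omega]
          ring
      _ ≤ (Real.cos (π/n)^n / Real.cos φ₀ ^ (n-1)) * Real.cos φ₀ ^ (n-1) := by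
          apply mul_le_mul_of_nonneg_right h1 (by positivity)
      _ = Real.cos (π/n)^n := by field_simp
  set s : ℝ := ‖z‖ ^ ((n:ℝ)⁻¹) with hs
  clear_value s
  have hz0' : 0 ≤ ‖z‖ := norm_nonneg z
  have hs_n : s ^ n = ‖z‖ := by
    rw [hs, ← Real.rpow_natCast (‖z‖ ^ ((n:ℝ)⁻¹)) n, ← Real.rpow_mul hz0',
      inv_mul_cancel₀ (ne_of_gt npos), Real.rpow_one]
  have hs0 : 0 ≤ s := by rw [hs]; positivity
  have hsle : s ≤ Real.cos (π/n) / Real.cos φ₀ :=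
    le_of_pow_le_pow_left₀ (n := n) (by omega) (by positivity) (by rw [hs_n]; exact habs)
  set θ : ℝ := φ₀ + π/n with hθ
  clear_value θ
  have hθ1 : 0 ≤ θ := by rw [hθ]; linarith [hφ₀mem.1]
  have hθ2 : θ ≤ 2*(π/n) := by rw [hθ]; linarith [hφ₀mem.2]
  have h2η : 2*(π/n) ≤ π := by
    rw [show 2*(π/(n:ℝ)) = 2*π/n by ring, div_le_iff₀ npos]
    nlinarith [pi_pos]
  set w : ℂ := ((s : ℝ):ℂ) * Complex.exp ((θ:ℝ) * Complex.I) with hw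
  clear_value w
  have hwn : w^n = z := by
    rw [hw, mul_pow, ← Complex.exp_nat_mul]
    have e : (n:ℂ) * (((θ:ℝ):ℂ) * Complex.I) = (((n:ℝ)*φ₀ + π : ℝ):ℂ) * Complex.I := by
      rw [hθ]
      have hne := ncast_ne hn
      push_cast
      field_simp
    rw [e, show (((n:ℝ)*φ₀ + π : ℝ):ℂ) * Complex.I
        = (((n:ℝ)*φ₀ : ℝ):ℂ) * Complex.I + (π:ℝ)*Complex.I by push_cast; ring,
      Complex.exp_add, hexpφ, Complex.exp_pi_mul_I]
    rw [← Complex.ofReal_pow, hs_n]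
    rw [show -Complex.exp ((α:ℝ) * Complex.I) * (-1) = Complex.exp ((α:ℝ) * Complex.I) by ring]
    exact Complex.norm_mul_exp_arg_mul_I z
  -- membership in the hull
  set S2 : ℝ := Real.sin (2*(π/n)) with hS2def
  clear_value S2
  have hS2 : 0 < S2 := by
    rw [hS2def]
    apply Real.sin_pos_of_pos_of_lt_pi (by positivity)
    rw [show 2*(π/(n:ℝ)) = 2*π/n by ring, div_lt_iff₀ npos]
    nlinarith [pi_pos]
  have hsinη : 0 < Real.sin (π/n) :=
    Real.sin_pos_of_pos_of_lt_pi hηp (by linarith [eta_lt hn, pi_pos])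
  set a : ℝ := s * Real.sin (2*(π/n) - θ) / S2 with hadef
  set b : ℝ := s * Real.sin θ / S2 with hbdef
  clear_value a b
  have hsin1 : 0 ≤ Real.sin (2*(π/n) - θ) :=
    Real.sin_nonneg_of_nonneg_of_le_pi (by linarith) (by linarith)
  have hsin2 : 0 ≤ Real.sin θ :=
    Real.sin_nonneg_of_nonneg_of_le_pi hθ1 (by linarith)
  have ha : 0 ≤ a := by rw [hadef]; positivity
  have hb : 0 ≤ b := by rw [hbdef]; positivity
  have hiden : Real.sin (2*(π/n) - θ) + Real.sin θ = 2 * Real.sin (π/n) * Real.cos φ₀ := by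
    rw [show 2*(π/(n:ℝ)) - θ = π/n - φ₀ by rw [hθ]; ring, show θ = π/n + φ₀ by rw [hθ]; ring]
    rw [Real.sin_sub, Real.sin_add]
    ring
  have hS2e : S2 = 2 * Real.sin (π/n) * Real.cos (π/n) := by
    rw [hS2def, Real.sin_two_mul]
  have hab_eq : a + b = s * Real.cos φ₀ / Real.cos (π/n) := by
    rw [hadef, hbdef, ← add_div, ← mul_add, hiden, hS2e]
    field_simp
  have hab : a + b ≤ 1 := by
    rw [hab_eq, div_le_one hcη]
    calc s * Real.cos φ₀ ≤ (Real.cos (π/n) / Real.cos φ₀) * Real.cos φ₀ :=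
          mul_le_mul_of_nonneg_right hsle (le_of_lt hcos0)
      _ = Real.cos (π/n) := by field_simp
  have hω : primRoot n = Complex.exp (((2*(π/n) : ℝ):ℂ) * Complex.I) := by
    rw [primRoot]
    congr 1
    have hne := ncast_ne hn
    push_cast
    field_simp
  have hw_eq : w = ((a:ℝ):ℂ) + ((b:ℝ):ℂ) * primRoot n := by
    have key : s * Real.sin (2*(π/n) - θ) + (s * Real.sin θ) * Real.cos (2*(π/n))
        = (s * Real.cos θ) * S2 := by
      rw [Real.sin_sub, hS2def]; ring
    rw [hω, hw]
    apply Complex.ext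
    · rw [Complex.re_ofReal_mul, Complex.exp_ofReal_mul_I_re, Complex.add_re,
        Complex.ofReal_re, Complex.re_ofReal_mul, Complex.exp_ofReal_mul_I_re]
      rw [hadef, hbdef, div_mul_eq_mul_div, ← add_div, key,
        mul_div_cancel_right₀ _ (ne_of_gt hS2)]
    · rw [Complex.im_ofReal_mul, Complex.exp_ofReal_mul_I_im, Complex.add_im,
        Complex.ofReal_im, Complex.im_ofReal_mul, Complex.exp_ofReal_mul_I_im]
      rw [hbdef, ← hS2def, zero_add, div_mul_cancel₀ _ (ne_of_gt hS2)]
  -- conclude membership by convexity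
  have hPconv : Convex ℝ (rootsOfUnityHull n) := convex_convexHull ℝ _
  have h1mem : (1:ℂ) ∈ rootsOfUnityHull n := one_mem_hull hn
  have hωmem : primRoot n ∈ rootsOfUnityHull n := prim_mem_hull hn
  have h0mem : (0:ℂ) ∈ rootsOfUnityHull n := zero_mem_hull hn
  have hq0 : 0 ≤ a + b := add_nonneg ha hb
  rcases eq_or_lt_of_le hq0 with hq | hq
  · -- a + b = 0, so w = 0
    have ha0 : a = 0 := by linarith
    have hb0 : b = 0 := by linarith
    refine ⟨w, ?_, hwn⟩
    have e0 : w = 0 := by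
      rw [hw_eq, ha0, hb0]
      push_cast
      ring
    rw [e0]
    exact h0mem
  · set q : ℝ := a + b with hqdef
    clear_value q
    have hm : (a/q) • (1:ℂ) + (b/q) • primRoot n ∈ rootsOfUnityHull n := by
      apply hPconv h1mem hωmem (div_nonneg ha (le_of_lt hq)) (div_nonneg hb (le_of_lt hq))
      rw [← add_div, ← hqdef, div_self (ne_of_gt hq)]
    have h2 : q • ((a/q) • (1:ℂ) + (b/q) • primRoot n) + (1 - q) • (0:ℂ) ∈ rootsOfUnityHull n :=
      hPconv hm h0mem (le_of_lt hq) (by linarith) (by ring)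
    have he : q • ((a/q) • (1:ℂ) + (b/q) • primRoot n) + (1 - q) • (0:ℂ) = w := by
      rw [hw_eq]
      simp only [smul_add, smul_smul, smul_zero, add_zero]
      rw [mul_div_cancel₀ a (ne_of_gt hq), mul_div_cancel₀ b (ne_of_gt hq)]
      rw [Complex.real_smul, Complex.real_smul, mul_one]
    rw [he] at h2
    exact ⟨w, h2, hwn⟩
lemma image_eq_target (hn : 3 ≤ n) :
    (fun w : ℂ => w ^ n) '' rootsOfUnityHull n = targetSet n := by
  apply Set.Subset.antisymm
  · rintro _ ⟨w, hw, rfl⟩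
    rw [targetSet]
    exact Set.mem_iInter₂.mpr fun φ hφ => forward hn hw hφ
  · intro z hz
    obtain ⟨w, hw, hwn⟩ := backward hn hz
    exact ⟨w, hw, hwn⟩
end

/-- For `n ≥ 3`, the image of the convex hull of the `n`th roots of unity under the
`n`th power map is a convex subset of `ℂ`. -/
theorem convex_power_image_of_polygon {n : ℕ} (hn : 3 ≤ n) :
    Convex ℝ ((fun w : ℂ => w ^ n) '' rootsOfUnityHull n) := by
  rw [image_eq_target hn]
  exact targetSet_convex n
end

section
/- For all integers n ≥ 3 and d ≥ 2, ℬ_n(d) = ℬ_n(2): every complex number of the form ∏_{k=1}^{n} ⟪ψ_k, ψ_{k⊕1}⟫ for unit vectors ψ₁,…,ψₙ in ℂ^d is also of this form for some unit vectors in ℂ², and conversely. -/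
set_option maxHeartbeats 1000000
open Finset
noncomputable section
namespace BA
abbrev E (d : ℕ) : Type := EuclideanSpace ℂ (Fin d)
local notation "⟪" x ", " y "⟫" => @inner ℂ _ _ x y

def mk2 (a b : ℂ) : E 2 := (WithLp.equiv 2 (Fin 2 → ℂ)).symm ![a, b]

lemma mk2_apply0 (a b : ℂ) : (mk2 a b) 0 = a := rfl
lemma mk2_apply1 (a b : ℂ) : (mk2 a b) 1 = b := rfl

lemma inner_self_one {d : ℕ} {x : E d} (h : ‖x‖ = 1) : ⟪x, x⟫ = 1 := by
  rw [@inner_self_eq_norm_sq_to_K ℂ, h]; norm_num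

lemma inner_self_one' {d : ℕ} {x : E d} (h : ⟪x, x⟫ = 1) : ‖x‖ = 1 := by
  have h2 : RCLike.re ⟪x, x⟫ = ‖x‖^2 := @inner_self_eq_norm_sq ℂ _ _ _ _ x
  rw [h] at h2; simp at h2
  nlinarith [norm_nonneg x]

lemma inner2 (x y : E 2) :
    ⟪x, y⟫ = (starRingEnd ℂ) (x 0) * y 0 + (starRingEnd ℂ) (x 1) * y 1 := by
  simp [PiLp.inner_apply, RCLike.inner_apply, Fin.sum_univ_two]; ring

lemma norm_mk2' (a b : ℂ) (h : Complex.normSq a + Complex.normSq b = 1) :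
    ‖mk2 a b‖ = 1 := by
  apply inner_self_one'
  rw [inner2, mk2_apply0, mk2_apply1]
  rw [mul_comm ((starRingEnd ℂ) a) a, mul_comm ((starRingEnd ℂ) b) b,
    Complex.mul_conj, Complex.mul_conj, ← Complex.ofReal_add, h]
  norm_num

def perp (y : E 2) : E 2 := mk2 (-(starRingEnd ℂ) (y 1)) ((starRingEnd ℂ) (y 0))

lemma perp_apply0 (y : E 2) : (perp y) 0 = -(starRingEnd ℂ) (y 1) := rfl
lemma perp_apply1 (y : E 2) : (perp y) 1 = (starRingEnd ℂ) (y 0) := rfl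

lemma inner_perp_right (y : E 2) : ⟪y, perp y⟫ = 0 := by
  rw [inner2, perp_apply0, perp_apply1]; ring

lemma inner_perp_left (y : E 2) : ⟪perp y, y⟫ = 0 := by
  rw [inner2, perp_apply0, perp_apply1]
  simp only [map_neg, Complex.conj_conj]
  ring

lemma norm_perp {y : E 2} (h : ‖y‖ = 1) : ‖perp y‖ = 1 := by
  have h1 := inner_self_one h
  rw [inner2] at h1
  apply inner_self_one'
  rw [inner2, perp_apply0, perp_apply1]
  simp only [map_neg, Complex.conj_conj]
  rw [← h1]; ring

/-- expansion of a unit vector of `E 2` in the orthonormal basis `{y, perp y}` -/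
lemma repr2 {y : E 2} (h : ‖y‖ = 1) (u : E 2) :
    u = ⟪y, u⟫ • y + ⟪perp y, u⟫ • perp y := by
  have h1 := inner_self_one h
  rw [inner2] at h1
  ext i
  fin_cases i
  · show u 0 = (⟪y, u⟫ • y + ⟪perp y, u⟫ • perp y) 0
    rw [PiLp.add_apply, PiLp.smul_apply, PiLp.smul_apply, perp_apply0,
      inner2, inner2, perp_apply0, perp_apply1]
    simp only [map_neg, Complex.conj_conj, smul_eq_mul]
    linear_combination (-(u 0)) * h1
  · show u 1 = (⟪y, u⟫ • y + ⟪perp y, u⟫ • perp y) 1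
    rw [PiLp.add_apply, PiLp.smul_apply, PiLp.smul_apply, perp_apply1,
      inner2, inner2, perp_apply0, perp_apply1]
    simp only [map_neg, Complex.conj_conj, smul_eq_mul]
    linear_combination (-(u 1)) * h1

lemma inner_comb_left {d : ℕ} (x p b : E d) (α β : ℂ) :
    ⟪α • x + β • p, b⟫ = (starRingEnd ℂ) α * ⟪x, b⟫ + (starRingEnd ℂ) β * ⟪p, b⟫ := by
  rw [inner_add_left, inner_smul_left, inner_smul_left]

lemma inner_comb {d : ℕ} {x p : E d} (hx : ‖x‖ = 1) (hp : ‖p‖ = 1)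
    (hxp : ⟪x,p⟫ = 0) (hpx : ⟪p,x⟫ = 0) (α β γ δ : ℂ) :
    ⟪α • x + β • p, γ • x + δ • p⟫ = (starRingEnd ℂ) α * γ + (starRingEnd ℂ) β * δ := by
  simp only [inner_add_left, inner_add_right, inner_smul_left, inner_smul_right,
    inner_self_one hx, inner_self_one hp, hxp, hpx]
  ring

def ChainMem (m d : ℕ) (s z : ℂ) : Prop :=
  ∃ x : ℕ → E d, (∀ k, ‖x k‖ = 1) ∧ ⟪x 0, x m⟫ = s ∧
    z = ∏ k ∈ range m, ⟪x k, x (k+1)⟫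

/-- gluing: prepend a vertex to a qubit chain, matching a model triple. -/
lemma glue {m : ℕ} {c t s w : ℂ} {a x b : E 2}
    (ha : ‖a‖ = 1) (hx : ‖x‖ = 1) (hb : ‖b‖ = 1)
    (hax : ⟪a,x⟫ = c) (hxb : ⟪x,b⟫ = t) (hab : ⟪a,b⟫ = s)
    (hw : ChainMem m 2 t w) : ChainMem (m+1) 2 s (c*w) := by
  classical
  obtain ⟨y, hyu, hyend, hyprod⟩ := hw
  set β := ⟪perp x, a⟫ with hβdef
  set g := ⟪perp x, b⟫ with hgdef
  set g' := ⟪perp (y 0), y m⟫ with hg'def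
  have hxa : ⟪x,a⟫ = (starRingEnd ℂ) c := by rw [← hax]; exact (inner_conj_symm x a).symm
  have hpx1 : ‖perp x‖ = 1 := norm_perp hx
  have hpy1 : ‖perp (y 0)‖ = 1 := norm_perp (hyu 0)
  -- decomposition of a and b in the basis {x, perp x}
  have hrepa : a = ((starRingEnd ℂ) c) • x + β • perp x := by
    have := repr2 hx a
    rw [hxa] at this
    exact this
  have hrepb : b = t • x + g • perp x := by
    have := repr2 hx b
    have hxb' : ⟪x,b⟫ = t := hxb
    rw [hxb'] at this
    exact this
  have hrepym : y m = t • (y 0) + g' • perp (y 0) := by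
    have := repr2 (hyu 0) (y m)
    rw [hyend] at this
    exact this
  -- Parseval-type facts
  have hcomb := inner_comb hx hpx1 (inner_perp_right x) (inner_perp_left x)
  have hcomby := inner_comb (hyu 0) hpy1 (inner_perp_right (y 0)) (inner_perp_left (y 0))
  have hβ1 : (starRingEnd ℂ) ((starRingEnd ℂ) c) * ((starRingEnd ℂ) c)
      + (starRingEnd ℂ) β * β = 1 := by
    have h1 := inner_self_one ha
    rw [hrepa, hcomb] at h1
    exact h1
  have hg1 : (starRingEnd ℂ) t * t + (starRingEnd ℂ) g * g = 1 := by
    have h1 := inner_self_one hb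
    rw [hrepb, hcomb] at h1
    exact h1
  have hg'1 : (starRingEnd ℂ) t * t + (starRingEnd ℂ) g' * g' = 1 := by
    have h1 := inner_self_one (hyu m)
    rw [hrepym, hcomby] at h1
    exact h1
  have hgg' : (starRingEnd ℂ) g * g = (starRingEnd ℂ) g' * g' := by
    linear_combination hg1 - hg'1
  -- the phase-corrected coefficient
  set β' : ℂ := if g' = 0 then β else (starRingEnd ℂ) ((starRingEnd ℂ) β * g / g') with hβ'def
  have hβ'g : (starRingEnd ℂ) β' * g' = (starRingEnd ℂ) β * g := by
    rw [hβ'def]; split_ifs with hcase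
    · have hg0 : g = 0 := by
        have : (starRingEnd ℂ) g * g = 0 := by rw [hgg', hcase]; ring
        rcases mul_eq_zero.mp this with h | h
        · simpa using h
        · exact h
      rw [hcase, hg0]
    · have hg'c : (starRingEnd ℂ) g' ≠ 0 := fun hz => hcase (by simpa using hz)
      rw [Complex.conj_conj]
      field_simp
  have hβ'n : (starRingEnd ℂ) β' * β' = (starRingEnd ℂ) β * β := by
    rw [hβ'def]; split_ifs with hcase
    · rfl
    · have hg'n : (starRingEnd ℂ) g' * g' ≠ 0 := by
        intro hz
        rcases mul_eq_zero.mp hz with h | h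
        · exact hcase (by simpa using h)
        · exact hcase h
      have h2 : (starRingEnd ℂ) ((starRingEnd ℂ) ((starRingEnd ℂ) β * g / g')) *
          ((starRingEnd ℂ) ((starRingEnd ℂ) β * g / g'))
          = ((starRingEnd ℂ) β * β) *
            (((starRingEnd ℂ) g * g) / ((starRingEnd ℂ) g' * g')) := by
        have hg'c : (starRingEnd ℂ) g' ≠ 0 := fun hz => hcase (by simpa using hz)
        rw [Complex.conj_conj, map_div₀, map_mul, Complex.conj_conj]
        field_simp
      rw [h2, hgg', div_self hg'n, mul_one]
  -- the new vertex
  set z0 := ((starRingEnd ℂ) c) • (y 0) + β' • perp (y 0) with hz0def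
  have hz0n : ‖z0‖ = 1 := by
    apply inner_self_one'
    rw [hz0def, hcomby]
    rw [hβ'n]
    exact hβ1
  have hz0y0 : ⟪z0, y 0⟫ = c := by
    simp only [hz0def, inner_comb_left, inner_self_one (hyu 0), inner_perp_left,
      Complex.conj_conj, mul_one, mul_zero, add_zero]
  have hz0ym : ⟪z0, y m⟫ = s := by
    have hs_eq : s = c * t + (starRingEnd ℂ) β * g := by
      rw [← hab, hrepa, inner_comb_left, Complex.conj_conj, hxb, ← hgdef]
    rw [hz0def, inner_comb_left, Complex.conj_conj, hyend, ← hg'def, hβ'g, hs_eq]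
  -- assemble the chain
  refine ⟨fun k => if k = 0 then z0 else y (k-1), ?_, ?_, ?_⟩
  · intro k
    dsimp only
    split_ifs
    · exact hz0n
    · exact hyu _
  · simp only [if_pos rfl, if_neg (Nat.succ_ne_zero m)]
    simpa using hz0ym
  · rw [Finset.prod_range_succ']
    have e0 : (fun k => if k = 0 then z0 else y (k-1)) 0 = z0 := rfl
    have e1 : ∀ k : ℕ, (fun k => if k = 0 then z0 else y (k-1)) (k+1) = y k := by
      intro k; simp
    have hterm : ∀ k ∈ range m,
        ⟪(fun k => if k = 0 then z0 else y (k-1)) (k+1),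
          (fun k => if k = 0 then z0 else y (k-1)) (k+1+1)⟫ = ⟪y k, y (k+1)⟫ := by
      intro k _
      rw [e1 k, e1 (k+1)]
    rw [Finset.prod_congr rfl hterm]
    have ef : (inner ℂ ((fun k : ℕ => if k = 0 then z0 else y (k-1)) 0)
        ((fun k : ℕ => if k = 0 then z0 else y (k-1)) (0+1)) : ℂ) = c := by
      have h0 : (fun k : ℕ => if k = 0 then z0 else y (k-1)) 0 = z0 := rfl
      have h1 : (fun k : ℕ => if k = 0 then z0 else y (k-1)) (0+1) = y 0 := rfl
      rw [h0, h1]; exact hz0y0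
    rw [ef, ← hyprod]
    ring

lemma abs_inner_le {d : ℕ} {x y : E d} (hx : ‖x‖ = 1) (hy : ‖y‖ = 1) :
    ‖⟪x, y⟫‖ ≤ 1 := by
  have := norm_inner_le_norm (𝕜 := ℂ) x y
  rw [hx, hy] at this
  simpa using this


lemma middle_eq {d : ℕ} (p q r : E d) (hq : ‖q‖ = 1) :
    ⟪p - ⟪q,p⟫ • q, r - ⟪q,r⟫ • q⟫ = ⟪p,r⟫ - ⟪p,q⟫ * ⟪q,r⟫ := by
  simp only [inner_sub_left, inner_sub_right, inner_smul_left, inner_smul_right,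
    inner_self_one hq]
  have h1 : ⟪q, p⟫ = (starRingEnd ℂ) ⟪p, q⟫ := (inner_conj_symm q p).symm
  rw [h1]
  ring_nf


lemma norm_sub_proj {d : ℕ} (p q : E d) (hp : ‖p‖ = 1) (hq : ‖q‖ = 1) :
    ‖p - ⟪q,p⟫ • q‖^2 = 1 - Complex.normSq ⟪p,q⟫ := by
  have h := @inner_self_eq_norm_sq ℂ _ _ _ _ (p - ⟪q,p⟫ • q)
  rw [← h]
  have e : ⟪p - ⟪q,p⟫ • q, p - ⟪q,p⟫ • q⟫ = 1 - ⟪p,q⟫ * ⟪q,p⟫ := by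
    have := middle_eq p q p hq
    rw [this, inner_self_one hp]
  rw [e]
  have h2 : ⟪q, p⟫ = (starRingEnd ℂ) ⟪p, q⟫ := (inner_conj_symm q p).symm
  rw [h2, Complex.mul_conj]
  simp


/-- Cauchy–Schwarz for the "deleted middle vertex": squared version. -/
lemma middle_normSq {d : ℕ} (p q r : E d) (hp : ‖p‖ = 1) (hq : ‖q‖ = 1) (hr : ‖r‖ = 1) :
    Complex.normSq (⟪p,r⟫ - ⟪p,q⟫ * ⟪q,r⟫) ≤
      (1 - Complex.normSq ⟪p,q⟫) * (1 - Complex.normSq ⟪q,r⟫) := by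
  rw [← middle_eq p q r hq]
  have hcs := norm_inner_le_norm (𝕜 := ℂ) (p - ⟪q,p⟫ • q) (r - ⟪q,r⟫ • q)
  have h1 := norm_sub_proj p q hp hq
  have h2 := norm_sub_proj r q hr hq
  have h3 : Complex.normSq ⟪r,q⟫ = Complex.normSq ⟪q,r⟫ := by
    rw [(inner_conj_symm r q).symm]
    exact Complex.normSq_conj _
  rw [h3] at h2
  have hnn1 : (0:ℝ) ≤ ‖p - ⟪q,p⟫ • q‖ := norm_nonneg _
  have hnn2 : (0:ℝ) ≤ ‖r - ⟪q,r⟫ • q‖ := norm_nonneg _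
  have key : ‖⟪p - ⟪q,p⟫ • q, r - ⟪q,r⟫ • q⟫‖ ^ 2 ≤
      (1 - Complex.normSq ⟪p,q⟫) * (1 - Complex.normSq ⟪q,r⟫) := by
    rw [← h1, ← h2]
    have : ‖⟪p - ⟪q,p⟫ • q, r - ⟪q,r⟫ • q⟫‖ ≤
        ‖p - ⟪q,p⟫ • q‖ * ‖r - ⟪q,r⟫ • q‖ := by
      exact hcs
    nlinarith [norm_nonneg ⟪p - ⟪q,p⟫ • q, r - ⟪q,r⟫ • q⟫]
  rw [← Complex.sq_norm]
  exact key


/-- The fundamental inequality: for unit `p q r`,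
`|⟪p,q⟫⟪q,r⟫| + |⟪p,r⟫ - ⟪p,q⟫⟪q,r⟫| ≤ 1`. -/
lemma key_ineq {d : ℕ} (p q r : E d) (hp : ‖p‖ = 1) (hq : ‖q‖ = 1) (hr : ‖r‖ = 1) :
    ‖⟪p,q⟫ * ⟪q,r⟫‖ + ‖⟪p,r⟫ - ⟪p,q⟫ * ⟪q,r⟫‖ ≤ 1 := by
  have h := middle_normSq p q r hp hq hr
  set A := ‖⟪p,q⟫‖ with hA
  set B := ‖⟪q,r⟫‖ with hB
  set X := ‖⟪p,r⟫ - ⟪p,q⟫ * ⟪q,r⟫‖ with hX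
  have hA1 : A ≤ 1 := abs_inner_le hp hq
  have hB1 : B ≤ 1 := abs_inner_le hq hr
  have hA0 : 0 ≤ A := norm_nonneg _
  have hB0 : 0 ≤ B := norm_nonneg _
  have hX0 : 0 ≤ X := norm_nonneg _
  have hsq : X^2 ≤ (1 - A^2) * (1 - B^2) := by
    rw [hX, Complex.sq_norm, hA, hB, Complex.sq_norm, Complex.sq_norm]
    exact h
  have habs : ‖⟪p,q⟫ * ⟪q,r⟫‖ = A * B := by
    rw [norm_mul]
  rw [habs]
  have h1ab : 0 ≤ 1 - A*B := by nlinarith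
  nlinarith [sq_nonneg (A - B), sq_nonneg (X - (1 - A*B)), hsq, h1ab]


lemma inner_mk2 (a b c d : ℂ) :
    ⟪mk2 a b, mk2 c d⟫ = (starRingEnd ℂ) a * c + (starRingEnd ℂ) b * d := by
  simp [mk2, PiLp.inner_apply, RCLike.inner_apply, Fin.sum_univ_two]; ring


lemma norm_mk2 (a b : ℂ) (h : Complex.normSq a + Complex.normSq b = 1) :
    ‖mk2 a b‖ = 1 := by
  apply inner_self_one'
  rw [inner_mk2]
  rw [mul_comm ((starRingEnd ℂ) a) a, mul_comm ((starRingEnd ℂ) b) b,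
    Complex.mul_conj, Complex.mul_conj, ← Complex.ofReal_add, h]
  norm_num


lemma ellipse_attain (s v : ℂ) (h : ‖v‖ + ‖v - s‖ ≤ 1) :
    ChainMem 2 2 s v := by
  classical
  set av := ‖v‖ with hav
  have hav0 : 0 ≤ av := norm_nonneg v
  have hvs0 : 0 ≤ ‖v - s‖ := norm_nonneg _
  have h1av : av ≤ 1 := by linarith
  have hs1 : ‖s‖ ≤ 1 := by
    have : s = v - (v - s) := by ring
    rw [this]
    calc ‖v - (v - s)‖ ≤ ‖v‖ + ‖v - s‖ := by
          rw [sub_sub_cancel]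
          have := norm_add_le (v - s) s
          have h2 := norm_sub_le v s
          calc ‖s‖ = ‖v - (v - s)‖ := by ring_nf
            _ ≤ ‖v‖ + ‖v - s‖ := by
                have := norm_sub_le v (v - s)
                simpa using this
      _ ≤ 1 := h
  set ns := Complex.normSq s with hns
  have hns1 : ns ≤ 1 := by
    have : ns = (‖s‖)^2 := (Complex.sq_norm s).symm
    nlinarith [norm_nonneg s]
  have hns0 : 0 ≤ ns := Complex.normSq_nonneg s
  set p := (v * (starRingEnd ℂ) s).re with hp
  set B := 2*p + 1 - ns with hB
  -- squared distance expansion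
  have hsub : Complex.normSq (v - s) = Complex.normSq v - 2*p + ns := by
    rw [Complex.normSq_sub, hp, hns]; ring
  have hnv : Complex.normSq v = av^2 := (Complex.sq_norm v).symm
  have hvs1 : ‖v - s‖ ≤ 1 - av := by linarith
  have hsubsq : Complex.normSq (v - s) ≤ (1 - av)^2 := by
    rw [← Complex.sq_norm]
    nlinarith
  have hB2 : 2*av ≤ B := by nlinarith
  have hB0 : 0 ≤ B := by linarith
  set D := B^2 - 4*Complex.normSq v with hD
  have hD0 : 0 ≤ D := by nlinarith
  set sD := Real.sqrt D with hsD
  have hsD2 : sD^2 = D := Real.sq_sqrt hD0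
  have hsD0 : 0 ≤ sD := Real.sqrt_nonneg D
  set u := (B - sD)/2 with hu
  have hquad : u^2 - u*B + Complex.normSq v = 0 := by
    have key : u^2 - u*B + Complex.normSq v
        = (sD^2 - (B^2 - 4*Complex.normSq v))/4 := by rw [hu]; ring
    rw [key, hsD2, hD]; ring
  have hu0 : 0 ≤ u := by
    have : sD ≤ B := by nlinarith
    rw [hu]; linarith
  have hu1 : u ≤ av := by
    have hkey : B - 2*av ≤ sD := by nlinarith
    rw [hu]; linarith
  have hu1' : u ≤ 1 := le_trans hu1 h1av
  -- the radius identity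
  have hradius : Complex.normSq (v - (u:ℂ)*s) = u*(1-u)*(1-ns) := by
    have e1 : Complex.normSq (v - (u:ℂ)*s)
        = Complex.normSq v - 2*(u*p) + u^2*ns := by
      rw [Complex.normSq_sub, Complex.normSq_mul, Complex.normSq_ofReal]
      have : (v * (starRingEnd ℂ) ((u:ℂ)*s)).re = u * p := by
        rw [map_mul, Complex.conj_ofReal]
        have : v * ((u:ℂ) * (starRingEnd ℂ) s) = (u:ℂ) * (v * (starRingEnd ℂ) s) := by ring
        rw [this, Complex.re_ofReal_mul]
      rw [this]; ring
    rw [e1]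
    rw [hB] at hquad
    linear_combination hquad
  -- construction data
  set σ := Real.sqrt (1 - ns) with hσdef
  have hσ2 : σ^2 = 1 - ns := Real.sq_sqrt (by linarith)
  have hσ0 : 0 ≤ σ := Real.sqrt_nonneg _
  set w0 := v - (u:ℂ)*s with hw0
  set rr := ‖w0‖ with hrr
  have hrr0 : 0 ≤ rr := norm_nonneg _
  have hrr2 : rr^2 = u*(1-u)*(1-ns) := by rw [hrr, Complex.sq_norm]; exact hradius
  set ph : ℂ := if w0 = 0 then 1 else w0 / rr with hph
  have hph1 : Complex.normSq ph = 1 := by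
    rw [hph]; split_ifs with hcase
    · simp
    · have hrrne : rr ≠ 0 := by rw [hrr]; exact norm_ne_zero_iff.mpr hcase
      rw [Complex.normSq_div, Complex.normSq_ofReal, ← Complex.sq_norm w0, ← hrr]
      field_simp
  have hphw : (rr:ℂ) * ph = w0 := by
    rw [hph]; split_ifs with hcase
    · rw [hcase] at hrr ⊢
      simp [hrr]
    · have hrrne : rr ≠ 0 := by rw [hrr]; exact norm_ne_zero_iff.mpr hcase
      have : (rr:ℂ) ≠ 0 := by exact_mod_cast hrrne
      field_simp
  set su := Real.sqrt u with hsu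
  set s1u := Real.sqrt (1-u) with hs1u
  have hsu2 : su^2 = u := Real.sq_sqrt hu0
  have hs1u2 : s1u^2 = 1-u := Real.sq_sqrt (by linarith)
  have hsu0 : 0 ≤ su := Real.sqrt_nonneg _
  have hs1u0 : 0 ≤ s1u := Real.sqrt_nonneg _
  have hrr_eq : rr = su * s1u * σ := by
    have e1 : Real.sqrt (u*(1-u)*(1-ns)) = rr := by rw [← hrr2, Real.sqrt_sq hrr0]
    rw [← e1, hsu, hs1u, hσdef, ← Real.sqrt_mul hu0, ← Real.sqrt_mul]
    exact mul_nonneg hu0 (by linarith)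
  -- the vectors
  set a := mk2 1 0 with ha
  set b := mk2 s (σ:ℂ) with hb
  set x1 := mk2 (su:ℂ) ((s1u:ℂ) * (starRingEnd ℂ) ph) with hx1
  have hna : ‖a‖ = 1 := by
    apply norm_mk2; simp
  have hnb : ‖b‖ = 1 := by
    apply norm_mk2; rw [Complex.normSq_ofReal]; rw [← hns]; linarith [hσ2]
  have hnx1 : ‖x1‖ = 1 := by
    apply norm_mk2
    rw [Complex.normSq_ofReal, Complex.normSq_mul, Complex.normSq_ofReal,
      Complex.normSq_conj, hph1]
    linarith [hsu2, hs1u2]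
  have hax : ⟪a,x1⟫ = (su:ℂ) := by rw [ha, hx1, inner_mk2]; simp
  have hx1b : ⟪x1,b⟫ = (su:ℂ)*s + (s1u:ℂ)*ph*(σ:ℂ) := by
    rw [hx1, hb, inner_mk2, Complex.conj_ofReal, map_mul, Complex.conj_ofReal,
      Complex.conj_conj]
  have hab : ⟪a,b⟫ = s := by rw [ha, hb, inner_mk2]; simp
  have c1 : (su:ℂ)*(su:ℂ) = (u:ℂ) := by
    rw [← Complex.ofReal_mul]
    congr 1
    linear_combination hsu2
  have c2 : (su:ℂ)*((s1u:ℂ)*(σ:ℂ)) = (rr:ℂ) := by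
    rw [← Complex.ofReal_mul, ← Complex.ofReal_mul, hrr_eq]
    push_cast
    ring
  have hprod : ⟪a,x1⟫ * ⟪x1,b⟫ = v := by
    rw [hax, hx1b]
    have expand : (su:ℂ) * ((su:ℂ)*s + (s1u:ℂ)*ph*(σ:ℂ))
        = ((su:ℂ)*(su:ℂ))*s + ((su:ℂ)*((s1u:ℂ)*(σ:ℂ)))*ph := by ring
    rw [expand, c1, c2, hphw, hw0]
    ring
  set x : ℕ → E 2 := fun k => if k = 0 then a else if k = 1 then x1 else b with hx
  have e0 : x 0 = a := by simp [hx]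
  have e1 : x 1 = x1 := by simp [hx]
  have e2 : x 2 = b := by simp [hx]
  refine ⟨x, ?_, ?_, ?_⟩
  · intro k
    simp only [hx]
    split_ifs <;> assumption
  · rw [e0, e2]; exact hab
  · rw [Finset.prod_range_succ, Finset.prod_range_one, e0, e1, e2, hprod]

lemma normSq_inner_le_one {d : ℕ} {x y : E d} (hx : ‖x‖ = 1) (hy : ‖y‖ = 1) :
    Complex.normSq ⟪x, y⟫ ≤ 1 := by
  have h := abs_inner_le hx hy
  rw [← Complex.sq_norm]
  nlinarith [norm_nonneg ⟪x,y⟫]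

/-- a trivial chain witnessing `0 ∈ ChainMem m 2 s` for `m ≥ 2`. -/
lemma zero_mem (m : ℕ) (hm : 2 ≤ m) (s : ℂ) (hs : Complex.normSq s ≤ 1) :
    ChainMem m 2 s 0 := by
  classical
  set σ := Real.sqrt (1 - Complex.normSq s) with hσ
  have hσ2 : σ^2 = 1 - Complex.normSq s := Real.sq_sqrt (by linarith)
  set b := mk2 s (σ:ℂ) with hb
  have hnb : ‖b‖ = 1 := by
    apply norm_mk2
    rw [Complex.normSq_ofReal]
    linarith [hσ2]
  set y : ℕ → E 2 := fun k => if k = 0 then mk2 1 0 else if k < m then mk2 0 1 else b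
    with hy
  have hy0 : y 0 = mk2 1 0 := by simp [hy]
  have hy1 : y 1 = mk2 0 1 := by
    simp only [hy]
    rw [if_neg (by norm_num), if_pos (by omega)]
  have hym : y m = b := by
    simp only [hy]
    rw [if_neg (by omega), if_neg (by omega)]
  refine ⟨y, ?_, ?_, ?_⟩
  · intro k
    simp only [hy]
    split_ifs
    · exact norm_mk2 1 0 (by simp)
    · exact norm_mk2 0 1 (by simp)
    · exact hnb
  · rw [hy0, hym, hb, inner_mk2]
    simp
  · symm
    apply Finset.prod_eq_zero (i := 0) (Finset.mem_range.mpr (by omega))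
    rw [hy0, hy1, inner_mk2]
    simp

/-- realizing a PSD rank-≤2 triple pattern by explicit qubit vectors. -/
lemma model_triple (lam : ℝ) (hl0 : 0 < lam) (hl1 : lam ≤ 1) (ch t s : ℂ)
    (hch : Complex.normSq ch = 1) (hs : Complex.normSq s ≤ 1)
    (heq : (1 - lam^2) * (1 - Complex.normSq s)
      = Complex.normSq (t - (lam:ℂ) * (starRingEnd ℂ) ch * s)) :
    ∃ a x b : E 2, ‖a‖ = 1 ∧ ‖x‖ = 1 ∧ ‖b‖ = 1 ∧
      ⟪a,x⟫ = (lam:ℂ) * ch ∧ ⟪x,b⟫ = t ∧ ⟪a,b⟫ = s := by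
  classical
  set σ := Real.sqrt (1 - Complex.normSq s) with hσ
  have hσ2 : σ^2 = 1 - Complex.normSq s := Real.sq_sqrt (by linarith)
  by_cases hl : lam = 1
  · have ht : t = (starRingEnd ℂ) ch * s := by
      have h0 : Complex.normSq (t - (lam:ℂ) * (starRingEnd ℂ) ch * s) = 0 := by
        rw [← heq, hl]; ring
      have h1 := Complex.normSq_eq_zero.mp h0
      have h2 : t - (lam:ℂ) * (starRingEnd ℂ) ch * s = 0 := h1
      rw [hl] at h2
      push_cast at h2
      linear_combination h2
    refine ⟨mk2 1 0, mk2 ch 0, mk2 s (σ:ℂ), ?_, ?_, ?_, ?_, ?_, ?_⟩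
    · exact norm_mk2 1 0 (by simp)
    · exact norm_mk2 ch 0 (by simp [hch])
    · exact norm_mk2 s (σ:ℂ) (by rw [Complex.normSq_ofReal]; linarith [hσ2])
    · rw [inner_mk2, hl]; simp
    · rw [inner_mk2, ht]; simp
    · rw [inner_mk2]; simp
  · have hlam1 : lam < 1 := lt_of_le_of_ne hl1 hl
    have hρ2pos : 0 < 1 - lam^2 := by nlinarith
    set ρ := Real.sqrt (1 - lam^2) with hρ
    have hρsq : ρ^2 = 1 - lam^2 := Real.sq_sqrt (by linarith)
    have hρpos : 0 < ρ := Real.sqrt_pos.mpr hρ2pos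
    have hρne : (ρ:ℂ) ≠ 0 := by
      simp only [ne_eq, Complex.ofReal_eq_zero]
      exact ne_of_gt hρpos
    set b2 := (t - (lam:ℂ) * (starRingEnd ℂ) ch * s) / (ρ:ℂ) with hb2
    refine ⟨mk2 1 0, mk2 ((lam:ℂ)*ch) (ρ:ℂ), mk2 s b2, ?_, ?_, ?_, ?_, ?_, ?_⟩
    · exact norm_mk2 1 0 (by simp)
    · apply norm_mk2
      rw [Complex.normSq_mul, Complex.normSq_ofReal, Complex.normSq_ofReal, hch]
      nlinarith [hρsq]
    · apply norm_mk2
      rw [hb2, Complex.normSq_div, Complex.normSq_ofReal, ← heq]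
      have hne : 1 - lam^2 ≠ 0 := ne_of_gt hρ2pos
      have hrr : ρ*ρ = 1 - lam^2 := by nlinarith [hρsq]
      rw [hrr]
      field_simp
      ring
    · rw [inner_mk2]; simp
    · rw [inner_mk2, hb2]
      rw [map_mul, Complex.conj_ofReal, Complex.conj_ofReal]
      field_simp
      ring
    · rw [inner_mk2]; simp
lemma star_shaped : ∀ m : ℕ, 2 ≤ m → ∀ t w : ℂ, ChainMem m 2 t w →
    ∀ ρ : ℝ, 0 ≤ ρ → ρ ≤ 1 → ChainMem m 2 t ((ρ:ℂ)*w) := by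
  intro m hm
  induction m, hm using Nat.le_induction with
  | base =>
    intro t w hw ρ h0 h1
    obtain ⟨x, hxu, hxe, hxp⟩ := hw
    have hprod : w = ⟪x 0, x 1⟫ * ⟪x 1, x 2⟫ := by
      rw [hxp, Finset.prod_range_succ, Finset.prod_range_one]
    have hki := key_ineq (x 0) (x 1) (x 2) (hxu 0) (hxu 1) (hxu 2)
    rw [← hprod, hxe] at hki
    apply ellipse_attain
    have habs1 : ‖(ρ:ℂ)*w‖ = ρ * ‖w‖ := by
      rw [norm_mul, Complex.norm_real, Real.norm_eq_abs, abs_of_nonneg h0]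
    have ht1 : ‖t‖ ≤ 1 := by
      have he : t = w + (t - w) := by ring
      calc ‖t‖ = ‖w + (t-w)‖ := by rw [← he]
        _ ≤ ‖w‖ + ‖t - w‖ := norm_add_le _ _
        _ ≤ 1 := hki
    have h2 : ‖(ρ:ℂ)*w - t‖ ≤ ρ * ‖t - w‖ + (1-ρ) * ‖t‖ := by
      have he : (ρ:ℂ)*w - t = (ρ:ℂ)*(w-t) + (((ρ-1:ℝ)):ℂ)*t := by push_cast; ring
      calc ‖(ρ:ℂ)*w - t‖
          = ‖(ρ:ℂ)*(w-t) + (((ρ-1:ℝ)):ℂ)*t‖ := by rw [← he]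
        _ ≤ ‖(ρ:ℂ)*(w-t)‖ + ‖(((ρ-1:ℝ)):ℂ)*t‖ :=
            norm_add_le _ _
        _ = ρ * ‖w-t‖ + (1-ρ) * ‖t‖ := by
            rw [norm_mul, norm_mul, Complex.norm_real, Complex.norm_real, Real.norm_eq_abs, Real.norm_eq_abs,
              abs_of_nonneg h0, abs_of_nonpos (by linarith : ρ - 1 ≤ 0)]
            ring
        _ = ρ * ‖t - w‖ + (1-ρ) * ‖t‖ := by
            rw [norm_sub_rev w t]
    rw [habs1]
    nlinarith [norm_nonneg w, norm_nonneg (t-w)]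
  | succ m hm ih =>
    intro t w hw ρ h0 h1
    obtain ⟨x, hxu, hxe, hxp⟩ := hw
    have hw'mem : ChainMem m 2 ⟪x 1, x (m+1)⟫ (∏ k ∈ range m, ⟪x (k+1), x (k+1+1)⟫) :=
      ⟨fun k => x (k+1), fun k => hxu _, rfl, rfl⟩
    have hstar := ih _ _ hw'mem ρ h0 h1
    have hglue := glue (hxu 0) (hxu 1) (hxu (m+1)) rfl rfl hxe hstar
    have he : (ρ:ℂ)*w = ⟪x 0, x 1⟫ * ((ρ:ℂ) * ∏ k ∈ range m, ⟪x (k+1), x (k+1+1)⟫) := by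
      rw [hxp, Finset.prod_range_succ']
      ring
    rw [he]
    exact hglue

lemma reduce : ∀ m : ℕ, 2 ≤ m → ∀ d : ℕ, ∀ s z : ℂ, ChainMem m d s z → ChainMem m 2 s z := by
  intro m hm
  induction m, hm using Nat.le_induction with
  | base =>
    intro d s z hz
    obtain ⟨x, hxu, hxe, hxp⟩ := hz
    have hprod : z = ⟪x 0, x 1⟫ * ⟪x 1, x 2⟫ := by
      rw [hxp, Finset.prod_range_succ, Finset.prod_range_one]
    have hki := key_ineq (x 0) (x 1) (x 2) (hxu 0) (hxu 1) (hxu 2)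
    rw [← hprod, hxe] at hki
    apply ellipse_attain
    rw [norm_sub_rev s z] at hki
    exact hki
  | succ m hm ih =>
    intro d s z hz
    obtain ⟨x, hxu, hxe, hxp⟩ := hz
    have hs1 : Complex.normSq s ≤ 1 := by
      rw [← hxe]; exact normSq_inner_le_one (hxu 0) (hxu (m+1))
    have hw'd : ChainMem m d ⟪x 1, x (m+1)⟫ (∏ k ∈ range m, ⟪x (k+1), x (k+1+1)⟫) :=
      ⟨fun k => x (k+1), fun k => hxu _, rfl, rfl⟩
    have hw'2 := ih d _ _ hw'd
    by_cases hc : ⟪x 0, x 1⟫ = (0:ℂ)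
    · have hz0 : z = 0 := by
        rw [hxp, Finset.prod_range_succ', hc, mul_zero]
      rw [hz0]
      exact zero_mem (m+1) (by omega) s hs1
    · set ac := ‖⟪x 0, x 1⟫‖ with hac
      have hac0 : 0 < ac := norm_pos_iff.mpr hc
      have hac1 : ac ≤ 1 := abs_inner_le (hxu 0) (hxu 1)
      have hacne : (ac:ℂ) ≠ 0 := by
        simp only [ne_eq, Complex.ofReal_eq_zero]; exact ne_of_gt hac0
      set ch := ⟪x 0, x 1⟫ / (ac:ℂ) with hch
      have hchn : Complex.normSq ch = 1 := by
        rw [hch, Complex.normSq_div, Complex.normSq_ofReal, ← Complex.sq_norm, ← hac]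
        field_simp
      -- IVT for the determinant function
      obtain ⟨lam, hmem, hf⟩ : ∃ lam ∈ Set.Icc ac 1,
          (fun lam : ℝ => (1 - lam^2) * (1 - Complex.normSq s)
            - Complex.normSq (⟪x 1, x (m+1)⟫ - (lam:ℂ)*((starRingEnd ℂ) ch) * s)) lam = 0 := by
        have hcont : ContinuousOn (fun lam : ℝ => (1 - lam^2) * (1 - Complex.normSq s)
            - Complex.normSq (⟪x 1, x (m+1)⟫ - (lam:ℂ)*((starRingEnd ℂ) ch) * s)) (Set.Icc ac 1) := by
          apply Continuous.continuousOn
          apply Continuous.sub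
          · fun_prop
          · exact Complex.continuous_normSq.comp
              (continuous_const.sub ((Complex.continuous_ofReal.mul continuous_const).mul
                continuous_const))
        have hga : 0 ≤ (fun lam : ℝ => (1 - lam^2) * (1 - Complex.normSq s)
            - Complex.normSq (⟪x 1, x (m+1)⟫ - (lam:ℂ)*((starRingEnd ℂ) ch) * s)) ac := by
          have hmid := middle_normSq (x 1) (x 0) (x (m+1)) (hxu 1) (hxu 0) (hxu (m+1))
          have h10 : ⟪x 1, x 0⟫ = (starRingEnd ℂ) ⟪x 0, x 1⟫ :=
            (inner_conj_symm (x 1) (x 0)).symm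
          rw [h10, Complex.normSq_conj, hxe] at hmid
          have hkey : (ac:ℂ) * ((starRingEnd ℂ) ch) = (starRingEnd ℂ) ⟪x 0, x 1⟫ := by
            rw [hch, map_div₀, Complex.conj_ofReal]
            field_simp
          simp only
          rw [hkey]
          have hsq : ac^2 = Complex.normSq ⟪x 0, x 1⟫ := by rw [hac, Complex.sq_norm]
          rw [hsq]
          linarith [hmid]
        have hg1 : (fun lam : ℝ => (1 - lam^2) * (1 - Complex.normSq s)
            - Complex.normSq (⟪x 1, x (m+1)⟫ - (lam:ℂ)*((starRingEnd ℂ) ch) * s)) 1 ≤ 0 := by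
          simp only
          norm_num
          exact Complex.normSq_nonneg _
        have hsub := intermediate_value_Icc' hac1 hcont
        have h0mem : (0:ℝ) ∈ Set.Icc ((fun lam : ℝ => (1 - lam^2) * (1 - Complex.normSq s)
            - Complex.normSq (⟪x 1, x (m+1)⟫ - (lam:ℂ)*((starRingEnd ℂ) ch) * s)) 1)
            ((fun lam : ℝ => (1 - lam^2) * (1 - Complex.normSq s)
            - Complex.normSq (⟪x 1, x (m+1)⟫ - (lam:ℂ)*((starRingEnd ℂ) ch) * s)) ac) := ⟨hg1, hga⟩
        obtain ⟨lam, hl, hfl⟩ := hsub h0mem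
        exact ⟨lam, hl, hfl⟩
      have lam0 : 0 < lam := lt_of_lt_of_le hac0 hmem.1
      have heqn : (1 - lam^2) * (1 - Complex.normSq s)
          = Complex.normSq (⟪x 1, x (m+1)⟫ - (lam:ℂ)*((starRingEnd ℂ) ch) * s) := by
        simp only at hf
        linarith [hf]
      obtain ⟨a, xx, b, na, nx, nb, haxx, hxxb, habb⟩ :=
        model_triple lam lam0 hmem.2 ch ⟪x 1, x (m+1)⟫ s hchn hs1 heqn
      have hstar := star_shaped m hm ⟪x 1, x (m+1)⟫ _ hw'2 (ac/lam)
        (le_of_lt (div_pos hac0 lam0)) ((div_le_one lam0).mpr hmem.1)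
      have hglue := glue na nx nb haxx hxxb habb hstar
      have hfin : z = ((lam:ℂ)*ch) * ((((ac/lam:ℝ)):ℂ) * ∏ k ∈ range m, ⟪x (k+1), x (k+1+1)⟫) := by
        rw [hxp, Finset.prod_range_succ', hch]
        have hlamne : (lam:ℂ) ≠ 0 := by
          simp only [ne_eq, Complex.ofReal_eq_zero]; exact ne_of_gt lam0
        push_cast
        field_simp
      rw [hfin]
      exact hglue
/-! ### padding `ℂ² → ℂ^d` -/

def pad (d : ℕ) (y : E 2) : E d :=
  (WithLp.equiv 2 (Fin d → ℂ)).symm (fun i => if h : (i:ℕ) < 2 then y ⟨i.val, h⟩ else 0)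

lemma pad_apply_lt {d : ℕ} (y : E 2) (i : Fin d) (h : (i:ℕ) < 2) :
    pad d y i = y ⟨i.val, h⟩ := dif_pos h

lemma pad_apply_ge {d : ℕ} (y : E 2) (i : Fin d) (h : ¬ (i:ℕ) < 2) :
    pad d y i = 0 := dif_neg h

lemma inner_pad {d : ℕ} (hd : 2 ≤ d) (u v : E 2) : ⟪pad d u, pad d v⟫ = ⟪u, v⟫ := by
  simp only [PiLp.inner_apply, RCLike.inner_apply]
  have hmap : ∑ j : Fin 2, (v j) * (starRingEnd ℂ) (u j)
      = ∑ i ∈ Finset.univ.map (Fin.castLEEmb hd),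
          ((pad d v) i) * (starRingEnd ℂ) ((pad d u) i) := by
    rw [Finset.sum_map]
    apply Finset.sum_congr rfl
    intro j _
    have hlt : (((Fin.castLEEmb hd) j : Fin d) : ℕ) < 2 := j.isLt
    rw [pad_apply_lt u _ hlt, pad_apply_lt v _ hlt]
    have hj : (⟨(((Fin.castLEEmb hd) j : Fin d) : ℕ), hlt⟩ : Fin 2) = j := by
      apply Fin.ext
      rfl
    rw [hj]
  rw [hmap]
  symm
  apply Finset.sum_subset (Finset.subset_univ _)
  intro i _ hnm
  have hge : ¬ (i:ℕ) < 2 := by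
    intro hlt
    apply hnm
    rw [Finset.mem_map]
    refine ⟨⟨(i:ℕ), hlt⟩, Finset.mem_univ _, ?_⟩
    apply Fin.ext
    rfl
  rw [pad_apply_ge u i hge, pad_apply_ge v i hge]
  simp

lemma chain_pad {m d : ℕ} (hd : 2 ≤ d) {s z : ℂ} (h : ChainMem m 2 s z) :
    ChainMem m d s z := by
  obtain ⟨y, hyu, hye, hyp⟩ := h
  refine ⟨fun k => pad d (y k), fun k => ?_, ?_, ?_⟩
  · exact inner_self_one' (by rw [inner_pad hd]; exact inner_self_one (hyu k))
  · rw [inner_pad hd]; exact hye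
  · rw [hyp]
    exact Finset.prod_congr rfl (fun k _ => (inner_pad hd _ _).symm)

/-! ### cycles as closed chains -/

lemma cycle_to_chain {n d : ℕ} (hn : 3 ≤ n) (ψ : Fin n → E d) (hu : ∀ k, ‖ψ k‖ = 1) :
    ChainMem n d 1 (∏ k : Fin n, ⟪ψ k, ψ (k + ⟨1, by omega⟩)⟫) := by
  have hnpos : 0 < n := by omega
  refine ⟨fun k => ψ ⟨k % n, Nat.mod_lt _ hnpos⟩, fun k => hu _, ?_, ?_⟩
  · have h0 : (⟨0 % n, Nat.mod_lt _ hnpos⟩ : Fin n) = ⟨n % n, Nat.mod_lt _ hnpos⟩ := by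
      apply Fin.ext
      simp [Nat.mod_self, Nat.zero_mod]
    simp only [h0]
    exact inner_self_one (hu _)
  · rw [← Fin.prod_univ_eq_prod_range
      (fun k => ⟪ψ ⟨k % n, Nat.mod_lt _ hnpos⟩, ψ ⟨(k+1) % n, Nat.mod_lt _ hnpos⟩⟫) n]
    apply Finset.prod_congr rfl
    intro i _
    congr 1
    · exact congrArg ψ (Fin.ext (by simp [Nat.mod_eq_of_lt i.isLt]))

lemma chain_to_cycle {n d : ℕ} (hn : 3 ≤ n) {z : ℂ} (h : ChainMem n d 1 z) :
    ∃ ψ : Fin n → E d, (∀ k, ‖ψ k‖ = 1) ∧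
      z = ∏ k : Fin n, ⟪ψ k, ψ (k + ⟨1, by omega⟩)⟫ := by
  obtain ⟨y, hyu, hye, hyp⟩ := h
  have hclose : y n = y 0 := by
    have hcs : ⟪y n, y 0⟫ = 1 := by
      have h1 : ⟪y n, y 0⟫ = (starRingEnd ℂ) ⟪y 0, y n⟫ := (inner_conj_symm (y n) (y 0)).symm
      rw [h1, hye]
      simp
    have hdiff : ⟪y n - y 0, y n - y 0⟫ = (0:ℂ) := by
      rw [inner_sub_left, inner_sub_right, inner_sub_right, inner_self_one (hyu n),
        inner_self_one (hyu 0), hye, hcs]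
      ring
    exact sub_eq_zero.mp (inner_self_eq_zero.mp hdiff)
  refine ⟨fun k => y k.val, fun k => hyu _, ?_⟩
  rw [hyp, ← Fin.prod_univ_eq_prod_range (fun k => ⟪y k, y (k+1)⟫) n]
  apply Finset.prod_congr rfl
  intro i _
  have hval : ((i + (⟨1, by omega⟩ : Fin n)) : Fin n).val = ((i:ℕ)+1) % n := by
    rw [Fin.add_def]
  have hbeta : (fun k : Fin n => (y (k:ℕ))) (i + (⟨1, by omega⟩ : Fin n))
      = y (((i:ℕ)+1) % n) := by
    simp only [hval]
  rw [hbeta]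
  congr 1
  by_cases hi : (i:ℕ) + 1 < n
  · rw [Nat.mod_eq_of_lt hi]
  · have h1 : (i:ℕ) + 1 = n := by have := i.isLt; omega
    rw [h1, Nat.mod_self]
    exact hclose

end BA

open BA in
/-- For `n ≥ 3` and `d ≥ 2`, the set `ℬ_n(d)` of `n`th-order Bargmann invariants of
`n`-tuples of unit vectors in `ℂ^d` coincides with `ℬ_n(2)`, the corresponding set for
qubit pure states. -/
theorem bargmann_set_dim_independent {n d : ℕ} (hn : 3 ≤ n) (hd : 2 ≤ d) :
    {z : ℂ | ∃ ψ : Fin n → EuclideanSpace ℂ (Fin d),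
        (∀ k, ‖ψ k‖ = 1) ∧
        z = ∏ k : Fin n, (inner ℂ (ψ k) (ψ (k + ⟨1, by omega⟩)) : ℂ)} =
      {z : ℂ | ∃ ψ : Fin n → EuclideanSpace ℂ (Fin 2),
        (∀ k, ‖ψ k‖ = 1) ∧
        z = ∏ k : Fin n, (inner ℂ (ψ k) (ψ (k + ⟨1, by omega⟩)) : ℂ)} := by
  ext z
  simp only [Set.mem_setOf_eq]
  constructor
  · rintro ⟨ψ, hu, hz⟩
    have h1 := cycle_to_chain hn ψ hu
    rw [← hz] at h1
    exact chain_to_cycle hn (reduce n (by omega) d 1 z h1)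
  · rintro ⟨ψ, hu, hz⟩
    have h1 := cycle_to_chain hn ψ hu
    rw [← hz] at h1
    exact chain_to_cycle hn (chain_pad hd h1)
end
end
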